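/- arXiv:1507.07866 — 3 statements merged into one kernel-verified Lean document; each statement's English description precedes it below -/
import Mathlib

section
/- Let 1 ≤ p < ∞, 0 < q ≤ 1, u a weight with 0 < ‖u‖_{L^q(0,t)} < ∞ for all t > 0, and v a weight. Then the associate norm of X = Cop_{p,q}(u,v) satisfies ‖f‖_{X'} ≈ sup_{t>0} ‖f‖_{L^{p'}(v^{−1},(0,t))} · ‖u‖_{L^q(0,t)}^{−1}, with equivalence constants independent of f. -/
open MeasureTheory ENNReal Set

noncomputable section

/-- `L^r` functional, `0 < r < ∞`. -/
def nrm (r : ℝ) (g : ℝ → ℝ≥0∞) (s : Set ℝ) : ℝ≥0∞ :=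
  (∫⁻ x in s, g x ^ r) ^ (1 / r)

/-- Weighted Copson functional. -/
def CopN (p q : ℝ) (u v : ℝ → ℝ≥0∞) (f : ℝ → ℝ≥0∞) : ℝ≥0∞ :=
  nrm q (fun t => u t * nrm p (fun x => f x * v x) (Ioi t)) (Ioi 0)

/-- `L^{p'}(v⁻¹)` norm on `(0,t)`, with `p' = p/(p-1)` and `p' = ∞` (ess sup) when `p = 1`. -/
def dualNrmIoo (p : ℝ) (v f : ℝ → ℝ≥0∞) (t : ℝ) : ℝ≥0∞ :=
  if p = 1 then essSup (fun x => f x / v x) (volume.restrict (Ioo 0 t))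
  else nrm (p / (p - 1)) (fun x => f x / v x) (Ioo 0 t)

namespace CopsonAux

lemma rpow_iSup {ι : Sort*} (x : ι → ℝ≥0∞) {r : ℝ} (hr : 0 < r) :
    (⨆ i, x i) ^ r = ⨆ i, x i ^ r := by
  cases isEmpty_or_nonempty ι with
  | inl h => simp [iSup_of_empty, ENNReal.zero_rpow_of_pos hr]
  | inr h =>
    apply le_antisymm
    · have h1 : ∀ i, x i ≤ (⨆ i, x i ^ r) ^ (1 / r) := fun i => by
        have h2 : x i = (x i ^ r) ^ (1 / r) := by
          rw [← ENNReal.rpow_mul, mul_one_div, div_self hr.ne', ENNReal.rpow_one]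
        rw [h2]
        exact ENNReal.rpow_le_rpow (le_iSup (fun j => x j ^ r) i) (by positivity)
      calc (⨆ i, x i) ^ r ≤ ((⨆ i, x i ^ r) ^ (1 / r)) ^ r :=
            ENNReal.rpow_le_rpow (iSup_le h1) hr.le
        _ = ⨆ i, x i ^ r := by
            rw [← ENNReal.rpow_mul, one_div_mul_cancel hr.ne', ENNReal.rpow_one]
    · exact iSup_le fun i => ENNReal.rpow_le_rpow (le_iSup x i) hr.le

lemma tsum_le_rpow_tsum {ι : Type*} (a : ι → ℝ≥0∞) {r : ℝ} (hr : 0 < r) (hr1 : r ≤ 1) :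
    ∑' i, a i ≤ (∑' i, a i ^ r) ^ (1 / r) := by
  have key : ∀ F : Finset ι, (∑ i ∈ F, a i) ≤ (∑' i, a i ^ r) ^ (1 / r) := by
    intro F
    have h1 : (∑ i ∈ F, a i) ^ r ≤ ∑ i ∈ F, a i ^ r := by
      classical
      induction F using Finset.cons_induction with
      | empty => simp [ENNReal.zero_rpow_of_pos hr]
      | cons i F hi ih =>
          rw [Finset.sum_cons, Finset.sum_cons]
          exact le_trans (ENNReal.rpow_add_le_add_rpow _ _ hr.le hr1) (add_le_add le_rfl ih)
    have h2 : (∑ i ∈ F, a i ^ r) ≤ ∑' i, a i ^ r := ENNReal.sum_le_tsum F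
    calc ∑ i ∈ F, a i = ((∑ i ∈ F, a i) ^ r) ^ (1 / r) := by
          rw [← ENNReal.rpow_mul, mul_one_div, div_self hr.ne', ENNReal.rpow_one]
      _ ≤ (∑' i, a i ^ r) ^ (1 / r) := ENNReal.rpow_le_rpow (h1.trans h2) (by positivity)
  rw [ENNReal.tsum_eq_iSup_sum]
  exact iSup_le key

lemma biSup_Iio (D : ℝ≥0∞) : ⨆ (l : ℝ≥0∞) (_ : l < D), l = D := by
  apply le_antisymm
  · exact iSup₂_le fun l hl => hl.le
  · apply le_of_forall_lt
    intro c hc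
    obtain ⟨l, hcl, hlD⟩ := exists_between hc
    exact lt_of_lt_of_le hcl (le_iSup₂ (f := fun (l : ℝ≥0∞) (_ : l < D) => l) l hlD)

variable (w : ℝ → ℝ≥0∞)

def W (t : ℝ) : ℝ≥0∞ := ∫⁻ x in Ioo 0 t, w x

lemma W_mono : Monotone (W w) := fun _ _ hst =>
  lintegral_mono_set (Ioo_subset_Ioo le_rfl hst)

lemma W_meas : Measurable (W w) := (W_mono w).measurable

lemma segMeas (c : ℝ≥0∞) : MeasurableSet {x | 0 < x ∧ W w x < c} := by
  have h : {x | 0 < x ∧ W w x < c} = Ioi 0 ∩ (W w) ⁻¹' (Iio c) := by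
    ext x; simp [Set.mem_setOf_eq, Set.mem_inter_iff, mem_Ioi, mem_preimage, mem_Iio]
  rw [h]
  exact measurableSet_Ioi.inter ((W_meas w) measurableSet_Iio)

lemma lintegral_initial (k : ℝ → ℝ≥0∞) (hk : Measurable k) {c B : ℝ≥0∞}
    (hyp : ∀ t : ℝ, 0 < t → W w t < c → ∫⁻ x in Ioo 0 t, k x ≤ B) :
    ∫⁻ x in {x | 0 < x ∧ W w x < c}, k x ≤ B := by
  set S := {x | 0 < x ∧ W w x < c} with hSdef
  set ρ : Measure ℝ := volume.withDensity k with hρ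
  have happ : ∀ s : Set ℝ, MeasurableSet s → ρ s = ∫⁻ x in s, k x := fun s hs =>
    withDensity_apply k hs
  have hSmeas : MeasurableSet S := segMeas w c
  rw [← happ _ hSmeas]
  by_cases hbd : BddAbove S
  · rcases eq_empty_or_nonempty S with hS | hS
    · rw [hS]; simp
    · set τ := sSup S with hτ
      obtain ⟨x₁, hx₁⟩ := hS
      have hτpos : 0 < τ := lt_of_lt_of_le hx₁.1 (le_csSup hbd hx₁)
      have hsing : ρ {τ} = 0 :=
        (withDensity_absolutelyContinuous volume k) (by simp)
      have hsub : S ⊆ Ioo 0 τ ∪ {τ} := by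
        intro x hx
        rcases lt_or_eq_of_le (le_csSup hbd hx) with h | h
        · exact Or.inl ⟨hx.1, h⟩
        · exact Or.inr (by simp [h, hτ])
      have step : ρ (Ioo 0 τ) ≤ B := by
        have hcover : Ioo 0 τ = ⋃ n : ℕ, Ioo 0 (τ - τ / (n + 2)) := by
          ext x
          simp only [mem_Ioo, mem_iUnion]
          constructor
          · rintro ⟨hx0, hxτ⟩
            have hτx : 0 < τ - x := by linarith
            obtain ⟨n, hn⟩ := exists_nat_gt (τ / (τ - x))
            refine ⟨n, hx0, ?_⟩
            have h1 : τ < ((n : ℝ) + 2) * (τ - x) := by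
              have h2 : τ / (τ - x) < (n : ℝ) + 2 := by linarith
              calc τ = (τ / (τ - x)) * (τ - x) := by field_simp
                _ < ((n : ℝ) + 2) * (τ - x) := by
                    exact mul_lt_mul_of_pos_right h2 hτx
            have h3 : τ / ((n : ℝ) + 2) < τ - x := by
              rw [div_lt_iff₀ (by positivity)]
              linarith [h1]
            linarith
          · rintro ⟨n, hx0, hxn⟩
            refine ⟨hx0, lt_of_lt_of_le hxn ?_⟩
            have : 0 ≤ τ / ((n : ℝ) + 2) := by positivity
            linarith
        have hmono : Monotone (fun n : ℕ => Ioo (0:ℝ) (τ - τ / (n + 2))) := by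
          intro m n hmn
          apply Ioo_subset_Ioo le_rfl
          have h1 : τ / ((n : ℝ) + 2) ≤ τ / ((m : ℝ) + 2) := by
            apply div_le_div_of_nonneg_left hτpos.le (by positivity)
            have : (m:ℝ) ≤ n := Nat.cast_le.mpr hmn
            linarith
          linarith
        rw [hcover, Directed.measure_iUnion hmono.directed_le]
        apply iSup_le; intro n
        rw [happ _ measurableSet_Ioo]
        have htpos : 0 < τ - τ / ((n : ℝ) + 2) := by
          have : τ / ((n : ℝ) + 2) < τ := by
            apply div_lt_self hτpos
            have : (0:ℝ) ≤ n := Nat.cast_nonneg n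
            linarith
          linarith
        have htlt : τ - τ / ((n : ℝ) + 2) < τ := by
          have : 0 < τ / ((n : ℝ) + 2) := by positivity
          linarith
        obtain ⟨s, hsS, hts⟩ := exists_lt_of_lt_csSup ⟨x₁, hx₁⟩ htlt
        exact hyp _ htpos (lt_of_le_of_lt (W_mono w hts.le) hsS.2)
      calc ρ S ≤ ρ (Ioo 0 τ ∪ {τ}) := measure_mono hsub
        _ ≤ ρ (Ioo 0 τ) + ρ {τ} := measure_union_le _ _
        _ = ρ (Ioo 0 τ) := by rw [hsing, add_zero]
        _ ≤ B := step
  · have hS : S = Ioi 0 := by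
      apply Subset.antisymm (fun x hx => hx.1)
      intro x hx
      obtain ⟨y, hyS, hxy⟩ := not_bddAbove_iff.1 hbd x
      exact ⟨hx, lt_of_le_of_lt (W_mono w hxy.le) hyS.2⟩
    have hU : Ioi (0:ℝ) = ⋃ n : ℕ, Ioo 0 (n : ℝ) := by
      ext x; simp only [mem_Ioi, mem_iUnion, mem_Ioo]
      constructor
      · intro hx; obtain ⟨n, hn⟩ := exists_nat_gt x; exact ⟨n, hx, hn⟩
      · rintro ⟨n, h1, _⟩; exact h1
    have hmono : Monotone (fun n : ℕ => Ioo (0:ℝ) (n : ℝ)) := fun m n hmn =>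
      Ioo_subset_Ioo le_rfl (Nat.cast_le.2 hmn)
    rw [hS, hU, Directed.measure_iUnion hmono.directed_le]
    apply iSup_le; intro n
    rw [happ _ measurableSet_Ioo]
    rcases le_or_gt (n : ℝ) 0 with hn | hn
    · rw [Ioo_eq_empty (by linarith)]; simp
    · have hnS : (0:ℝ) < n ∧ W w n < c := by rw [hSdef] at hS; exact hS.ge (mem_Ioi.2 hn)
      exact hyp _ hn hnS.2

lemma W_lower (hw : Measurable w) {c : ℝ≥0∞} {x₀ : ℝ} (hx₀ : 0 < x₀) (hc : c ≤ W w x₀)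
    (hfin : ∀ t : ℝ, 0 < t → W w t < ∞) :
    c ≤ ∫⁻ x in {x | 0 < x ∧ W w x < c}, w x := by
  set T := {x | 0 < x ∧ c ≤ W w x} with hT
  have hTne : T.Nonempty := ⟨x₀, hx₀, hc⟩
  have hTbd : BddBelow T := ⟨0, fun x hx => hx.1.le⟩
  set σ := sInf T with hσ
  have hσ0 : 0 ≤ σ := le_csInf hTne fun x hx => hx.1.le
  set ρ : Measure ℝ := volume.withDensity w with hρ
  have happ : ∀ s : Set ℝ, MeasurableSet s → ρ s = ∫⁻ x in s, w x := fun s hs =>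
    withDensity_apply w hs
  have hIoc : Ioc 0 σ = ⋂ n : ℕ, Ioo 0 (σ + 1 / (n + 1)) := by
    ext x; simp only [mem_Ioc, mem_iInter, mem_Ioo]
    constructor
    · rintro ⟨h0, h1⟩ n
      refine ⟨h0, lt_of_le_of_lt h1 ?_⟩
      have : (0:ℝ) < 1 / ((n:ℝ) + 1) := by positivity
      linarith
    · intro h
      refine ⟨(h 0).1, ?_⟩
      by_contra hx
      push_neg at hx
      obtain ⟨n, hn⟩ := exists_nat_one_div_lt (by linarith : (0:ℝ) < x - σ)
      have := (h n).2
      linarith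
  have hanti : Antitone (fun n : ℕ => Ioo (0:ℝ) (σ + 1 / (n + 1))) := by
    intro m n hmn
    apply Ioo_subset_Ioo le_rfl
    have h1 : 1 / ((n:ℝ) + 1) ≤ 1 / ((m:ℝ) + 1) := by
      apply div_le_div_of_nonneg_left one_pos.le (by positivity)
      have : (m:ℝ) ≤ n := Nat.cast_le.mpr hmn
      linarith
    linarith
  have h1 : ρ (Ioc 0 σ) = ⨅ n : ℕ, ρ (Ioo 0 (σ + 1 / ((n:ℝ) + 1))) := by
    rw [hIoc]
    refine Antitone.measure_iInter hanti (fun n => measurableSet_Ioo.nullMeasurableSet) ⟨0, ?_⟩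
    rw [happ _ measurableSet_Ioo]
    exact (hfin _ (by positivity)).ne
  have h2 : ∀ n : ℕ, c ≤ ρ (Ioo 0 (σ + 1 / (n + 1))) := by
    intro n
    have hlt : σ < σ + 1 / ((n:ℝ) + 1) := by
      have : (0:ℝ) < 1 / ((n:ℝ) + 1) := by positivity
      linarith
    obtain ⟨x, hxT, hxlt⟩ := exists_lt_of_csInf_lt hTne hlt
    rw [happ _ measurableSet_Ioo]
    exact le_trans hxT.2 (W_mono w hxlt.le)
  have h3 : c ≤ ρ (Ioc 0 σ) := h1 ▸ le_iInf h2
  have hsing : ρ {σ} = 0 := (withDensity_absolutelyContinuous volume w) (by simp)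
  have h4 : ρ (Ioc 0 σ) ≤ ρ (Ioo 0 σ) := by
    calc ρ (Ioc 0 σ) ≤ ρ (Ioo 0 σ ∪ {σ}) := measure_mono (by
          intro x hx
          rcases lt_or_eq_of_le hx.2 with h | h
          · exact Or.inl ⟨hx.1, h⟩
          · exact Or.inr (by simp [h]))
      _ ≤ ρ (Ioo 0 σ) + ρ {σ} := measure_union_le _ _
      _ = ρ (Ioo 0 σ) := by rw [hsing, add_zero]
  have h6 : Ioo 0 σ ⊆ {x | 0 < x ∧ W w x < c} := by
    intro x hx
    refine ⟨hx.1, ?_⟩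
    by_contra h
    push_neg at h
    exact absurd (csInf_le hTbd ⟨hx.1, h⟩) (not_le.2 hx.2)
  calc c ≤ ρ (Ioc 0 σ) := h3
    _ ≤ ρ (Ioo 0 σ) := h4
    _ ≤ ρ {x | 0 < x ∧ W w x < c} := measure_mono h6
    _ = _ := happ _ (segMeas w c)

lemma copN_le_one (p q : ℝ) (hp0 : 0 < p) (hq : 0 < q) (u v : ℝ → ℝ≥0∞)
    (hu : Measurable u) (t : ℝ)
    (hWpos : 0 < W (fun x => u x ^ q) t) (hWfin : W (fun x => u x ^ q) t < ∞)
    (φ : ℝ → ℝ≥0∞)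
    (h1 : (∫⁻ x in Ioi (0:ℝ), (φ x * v x) ^ p) ^ (1/p)
      ≤ ((W (fun x => u x ^ q) t) ^ (1/q))⁻¹)
    (hsupp : ∀ x, t ≤ x → φ x = 0) :
    CopN p q u v φ ≤ 1 := by
  set w : ℝ → ℝ≥0∞ := fun x => u x ^ q with hw
  have hwmeas : Measurable w := hu.pow measurable_const
  set Y : ℝ≥0∞ := (W w t) ^ (1/q) with hY
  set N : ℝ → ℝ≥0∞ := fun s => nrm p (fun x => φ x * v x) (Ioi s) with hN
  have hNle : ∀ s : ℝ, 0 < s → N s ≤ Y⁻¹ := by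
    intro s hs
    refine le_trans ?_ h1
    exact ENNReal.rpow_le_rpow (lintegral_mono_set (Ioi_subset_Ioi hs.le)) (by positivity)
  have hNzero : ∀ s : ℝ, t ≤ s → N s = 0 := by
    intro s hs
    have hint : ∫⁻ x in Ioi s, (φ x * v x) ^ p = ∫⁻ x in Ioi s, (0:ℝ≥0∞) := by
      apply setLIntegral_congr_fun measurableSet_Ioi
      intro x hx
      dsimp only
      rw [hsupp x (le_trans hs (le_of_lt hx)), zero_mul, ENNReal.zero_rpow_of_pos hp0]
    show (∫⁻ x in Ioi s, (φ x * v x) ^ p) ^ (1/p) = 0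
    rw [hint, lintegral_zero, ENNReal.zero_rpow_of_pos (by positivity)]
  have hbound : ∫⁻ s in Ioi (0:ℝ), (u s * N s) ^ q ≤ 1 := by
    have hsub : Ioi (0:ℝ) ⊆ Ioo 0 t ∪ Ici t := by
      intro x hx
      rcases lt_or_ge x t with h | h
      · exact Or.inl ⟨hx, h⟩
      · exact Or.inr h
    have h2 : ∫⁻ s in Ici t, (u s * N s) ^ q = 0 := by
      have : ∫⁻ s in Ici t, (u s * N s) ^ q = ∫⁻ s in Ici t, (0:ℝ≥0∞) := by
        apply setLIntegral_congr_fun measurableSet_Ici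
        intro s hs
        dsimp only
        rw [hNzero s hs, mul_zero, ENNReal.zero_rpow_of_pos hq]
      rw [this, lintegral_zero]
    have h3 : ∫⁻ s in Ioo 0 t, (u s * N s) ^ q ≤ 1 := by
      have hstep : ∫⁻ s in Ioo 0 t, (u s * N s) ^ q
          ≤ ∫⁻ s in Ioo 0 t, w s * (Y⁻¹) ^ q := by
        apply setLIntegral_mono' measurableSet_Ioo
        intro s hs
        rw [ENNReal.mul_rpow_of_nonneg _ _ hq.le]
        exact mul_le_mul_right (ENNReal.rpow_le_rpow (hNle s hs.1) hq.le) _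
      refine le_trans hstep ?_
      rw [lintegral_mul_const _ hwmeas]
      have hYq : (Y⁻¹) ^ q = (W w t)⁻¹ := by
        rw [ENNReal.inv_rpow, hY, ← ENNReal.rpow_mul, one_div_mul_cancel hq.ne',
          ENNReal.rpow_one]
      rw [hYq]
      have hWW : (∫⁻ a in Ioo 0 t, w a) = W w t := rfl
      rw [hWW, ENNReal.mul_inv_cancel hWpos.ne' hWfin.ne]
    calc ∫⁻ s in Ioi (0:ℝ), (u s * N s) ^ q
        ≤ ∫⁻ s in Ioo 0 t ∪ Ici t, (u s * N s) ^ q := lintegral_mono_set hsub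
      _ ≤ (∫⁻ s in Ioo 0 t, (u s * N s) ^ q) + ∫⁻ s in Ici t, (u s * N s) ^ q :=
          lintegral_union_le _ _ _
      _ ≤ 1 + 0 := add_le_add h3 (le_of_eq h2)
      _ = 1 := by rw [add_zero]
  show (∫⁻ s in Ioi (0:ℝ), (u s * N s) ^ q) ^ (1/q) ≤ 1
  calc (∫⁻ s in Ioi (0:ℝ), (u s * N s) ^ q) ^ (1/q) ≤ 1 ^ (1/q) :=
        ENNReal.rpow_le_rpow hbound (by positivity)
    _ = 1 := ENNReal.one_rpow _

lemma upper (p q : ℝ) (hp : 1 ≤ p) (hq : 0 < q) (hq1 : q ≤ 1)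
    (u v f : ℝ → ℝ≥0∞) (hu : Measurable u) (hv : Measurable v) (hf : Measurable f)
    (hvw : ∀ᵐ x ∂(volume.restrict (Ioi (0:ℝ))), 0 < v x ∧ v x < ∞)
    (hWpos : ∀ t : ℝ, 0 < t → 0 < W (fun x => u x ^ q) t)
    (hWfin : ∀ t : ℝ, 0 < t → W (fun x => u x ^ q) t < ∞)
    (A : ℝ≥0∞)
    (hA : ∀ t : ℝ, 0 < t → dualNrmIoo p v f t ≤ A * (W (fun x => u x ^ q) t) ^ (1/q))
    (g : ℝ → ℝ≥0∞) (hg : Measurable g) (hcop : CopN p q u v g ≤ 1) :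
    ∫⁻ x in Ioi (0:ℝ), f x * g x ≤ (4:ℝ≥0∞) ^ (1/q) * A := by
  have hp0 : 0 < p := lt_of_lt_of_le one_pos hp
  have hinvp : (0:ℝ) < 1/p := by positivity
  set w : ℝ → ℝ≥0∞ := fun x => u x ^ q with hw
  have hwmeas : Measurable w := hu.pow measurable_const
  set tw : ℤ → ℝ≥0∞ := fun k => (2:ℝ≥0∞) ^ ((k : ℤ) : ℝ) with htw
  have h2ne0 : (2:ℝ≥0∞) ≠ 0 := by norm_num
  have h2netop : (2:ℝ≥0∞) ≠ ∞ := by norm_num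
  have htwne0 : ∀ k : ℤ, tw k ≠ 0 := fun k => by
    simp only [htw, ne_eq, ENNReal.rpow_eq_zero_iff, not_or]
    push_neg
    exact ⟨fun h => absurd h h2ne0, fun h => absurd h h2netop⟩
  have htwnetop : ∀ k : ℤ, tw k ≠ ∞ := fun k => by
    simp only [htw, ne_eq, ENNReal.rpow_eq_top_iff, not_or]
    push_neg
    exact ⟨fun h => absurd h h2ne0, fun h => absurd h h2netop⟩
  have htwsucc : ∀ k : ℤ, tw (k+1) = 2 * tw k := fun k => by
    simp only [htw]
    push_cast
    rw [ENNReal.rpow_add _ _ h2ne0 h2netop, ENNReal.rpow_one, mul_comm]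
  have htwmono : Monotone tw := fun k l hkl =>
    ENNReal.rpow_le_rpow_of_exponent_le one_le_two (by exact_mod_cast hkl)
  set S : ℝ≥0∞ → Set ℝ := fun c => {x | 0 < x ∧ W w x < c} with hS
  have hSmeas : ∀ c, MeasurableSet (S c) := fun c => segMeas w c
  have hSsub : ∀ c, S c ⊆ Ioi 0 := fun c x hx => hx.1
  set E : ℤ → Set ℝ := fun k => {x | 0 < x ∧ tw k ≤ W w x ∧ W w x < tw (k+1)} with hE
  set F : ℤ → Set ℝ := fun k => {x | 0 < x ∧ tw k ≤ W w x} with hF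
  have hEmeas : ∀ k, MeasurableSet (E k) := by
    intro k
    have h : E k = (Ioi 0 ∩ (W w) ⁻¹' (Ici (tw k))) ∩ (W w) ⁻¹' (Iio (tw (k+1))) := by
      ext x
      simp only [hE, mem_setOf_eq, mem_inter_iff, mem_Ioi, mem_preimage, mem_Ici, mem_Iio]
      tauto
    rw [h]
    exact ((measurableSet_Ioi.inter ((W_meas w) measurableSet_Ici)).inter
      ((W_meas w) measurableSet_Iio))
  have hFmeas : ∀ k, MeasurableSet (F k) := by
    intro k
    have h : F k = Ioi 0 ∩ (W w) ⁻¹' (Ici (tw k)) := by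
      ext x
      simp only [hF, mem_setOf_eq, mem_inter_iff, mem_Ioi, mem_preimage, mem_Ici]
    rw [h]
    exact measurableSet_Ioi.inter ((W_meas w) measurableSet_Ici)
  set G : ℝ → ℝ≥0∞ := fun x => (∫⁻ y in Ioi x, (g y * v y) ^ p) ^ (1/p) with hG
  have hGanti : Antitone G := fun s t hst =>
    ENNReal.rpow_le_rpow (lintegral_mono_set (Ioi_subset_Ioi hst)) (by positivity)
  set Gk : ℤ → ℝ≥0∞ := fun k => (∫⁻ y in F k, (g y * v y) ^ p) ^ (1/p) with hGk
  set M : ℤ → ℝ≥0∞ := fun k => A * (tw (k+1)) ^ (1/q) with hM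
  -- cover and disjointness
  have hcover : Ioi (0:ℝ) = ⋃ k : ℤ, E k := by
    ext x
    simp only [mem_Ioi, mem_iUnion, hE, mem_setOf_eq]
    constructor
    · intro hx
      have h0 : W w x ≠ 0 := (hWpos x hx).ne'
      have h1 : W w x ≠ ∞ := (hWfin x hx).ne
      obtain ⟨k, hk⟩ := ENNReal.exists_mem_Ico_zpow h0 h1 one_lt_two h2netop
      refine ⟨k, hx, ?_, ?_⟩
      · show (2:ℝ≥0∞) ^ ((k : ℤ) : ℝ) ≤ W w x
        rw [ENNReal.rpow_intCast]; exact hk.1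
      · show W w x < (2:ℝ≥0∞) ^ (((k+1) : ℤ) : ℝ)
        rw [ENNReal.rpow_intCast]; exact hk.2
    · rintro ⟨k, h1, _⟩; exact h1
  have hdisj : Pairwise (Function.onFun Disjoint E) := by
    have key : ∀ k l : ℤ, k < l → Disjoint (E k) (E l) := by
      intro k l hkl
      rw [Set.disjoint_left]
      rintro x ⟨_, _, hx2⟩ ⟨_, hx3, _⟩
      exact absurd (lt_of_lt_of_le hx2 (htwmono (by omega : k+1 ≤ l))) (not_lt.2 hx3)
    intro k l hkl
    rcases lt_or_gt_of_ne hkl with h | h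
    · exact key k l h
    · exact (key l k h).symm
  have hsplit : ∫⁻ x in Ioi (0:ℝ), f x * g x = ∑' k : ℤ, ∫⁻ x in E k, f x * g x := by
    rw [hcover, lintegral_iUnion hEmeas hdisj]
  -- rewrite integrand with a.e. identity
  have hfg_ae : ∀ s : Set ℝ, s ⊆ Ioi 0 →
      ∫⁻ x in s, f x * g x = ∫⁻ x in s, (f x / v x) * (g x * v x) := by
    intro s hs
    apply lintegral_congr_ae
    filter_upwards [ae_restrict_of_ae_restrict_of_subset hs hvw] with x hx
    have : (f x / v x) * (g x * v x) = (f x / v x * v x) * g x := by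
      rw [mul_comm (g x) (v x), ← mul_assoc]
    rw [this, ENNReal.div_mul_cancel hx.1.ne' hx.2.ne]
  have hterm : ∀ k : ℤ, ∫⁻ x in E k, (f x / v x) * (g x * v x) ≤ M k * Gk k := by
    intro k
    have hES : E k ⊆ S (tw (k+1)) := fun x hx => ⟨hx.1, hx.2.2⟩
    have hEF : E k ⊆ F k := fun x hx => ⟨hx.1, hx.2.1⟩
    have hGEF : (∫⁻ x in E k, (g x * v x) ^ p) ^ (1/p) ≤ Gk k :=
      ENNReal.rpow_le_rpow (lintegral_mono_set hEF) (by positivity)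
    rcases eq_or_lt_of_le hp with hp1 | hp1
    · -- p = 1
      have hp1' : p = 1 := hp1.symm
      set bad := {x | M k < f x / v x} with hbad
      have hbadmeas : MeasurableSet bad := measurableSet_lt measurable_const (hf.div hv)
      have hbadeq : bad = {x | ¬ f x / v x ≤ M k} := by
        ext x; simp [hbad, not_le]
      have hz : ∫⁻ x in S (tw (k+1)), bad.indicator 1 x ≤ 0 := by
        apply lintegral_initial w (bad.indicator 1) (measurable_one.indicator hbadmeas)
        intro t ht hWt
        have hess : essSup (fun x => f x / v x) (volume.restrict (Ioo 0 t)) ≤ M k := by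
          have h1 := hA t ht
          rw [dualNrmIoo, if_pos hp1'] at h1
          refine le_trans h1 ?_
          exact mul_le_mul_right (ENNReal.rpow_le_rpow hWt.le (by positivity)) A
        have hae : ∀ᵐ x ∂(volume.restrict (Ioo 0 t)), f x / v x ≤ M k :=
          (ae_le_essSup _).mono fun x hx => le_trans hx hess
        have h0 : (volume.restrict (Ioo 0 t)) bad = 0 := by
          rw [hbadeq]; exact ae_iff.mp hae
        rw [lintegral_indicator_one hbadmeas, h0]
      have hSz : (volume.restrict (S (tw (k+1)))) bad = 0 := by
        rw [lintegral_indicator_one hbadmeas] at hz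
        exact nonpos_iff_eq_zero.mp hz
      have hEz : (volume.restrict (E k)) bad = 0 := by
        rw [Measure.restrict_apply hbadmeas] at hSz ⊢
        exact nonpos_iff_eq_zero.mp
          (le_trans (measure_mono (inter_subset_inter_right bad hES)) (le_of_eq hSz))
      have hMk : ∀ᵐ x ∂(volume.restrict (E k)), f x / v x ≤ M k := by
        rw [ae_iff]; rw [← hbadeq]; exact hEz
      calc ∫⁻ x in E k, (f x / v x) * (g x * v x)
          ≤ ∫⁻ x in E k, M k * (g x * v x) :=
            lintegral_mono_ae (hMk.mono fun x hx => mul_le_mul_left hx _)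
        _ = M k * ∫⁻ x in E k, (g x * v x) := lintegral_const_mul (M k) (hg.mul hv)
        _ ≤ M k * Gk k := by
            apply mul_le_mul_right
            have h1 : ∫⁻ x in E k, (g x * v x) = ∫⁻ x in E k, (g x * v x) ^ p := by
              apply lintegral_congr; intro x; rw [hp1', ENNReal.rpow_one]
            rw [h1]
            refine le_trans (lintegral_mono_set hEF) ?_
            have h2 : ∫⁻ x in F k, (g x * v x) ^ p
                = ((∫⁻ x in F k, (g x * v x) ^ p) ^ (1/p)) ^ p := by
              rw [← ENNReal.rpow_mul, one_div_mul_cancel hp0.ne', ENNReal.rpow_one]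
            rw [hGk]
            rw [hp1'] at h2 ⊢
            simpa using le_of_eq h2
    · -- 1 < p
      set p' := p / (p - 1) with hp'
      have hconj : p'.HolderConjugate p := (Real.HolderConjugate.conjExponent hp1).symm
      have hAp' : ∀ t : ℝ, 0 < t → W w t < tw (k+1) →
          ∫⁻ x in Ioo 0 t, (f x / v x) ^ p' ≤ (M k) ^ p' := by
        intro t ht hWt
        have h1 := hA t ht
        rw [dualNrmIoo, if_neg (ne_of_gt hp1)] at h1
        rw [nrm, ← hp'] at h1
        have h2 : A * W w t ^ (1/q) ≤ M k :=
          mul_le_mul_right (ENNReal.rpow_le_rpow hWt.le (by positivity)) A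
        have h3 := le_trans h1 h2
        calc ∫⁻ x in Ioo 0 t, (f x / v x) ^ p'
            = ((∫⁻ x in Ioo 0 t, (f x / v x) ^ p') ^ (1/p')) ^ p' := by
              rw [← ENNReal.rpow_mul, one_div_mul_cancel hconj.ne_zero, ENNReal.rpow_one]
          _ ≤ (M k) ^ p' := ENNReal.rpow_le_rpow h3 hconj.nonneg
      have hEbound : (∫⁻ x in E k, (f x / v x) ^ p') ^ (1/p') ≤ M k := by
        have h1 : ∫⁻ x in E k, (f x / v x) ^ p' ≤ (M k) ^ p' :=
          le_trans (lintegral_mono_set hES)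
            (lintegral_initial w _ ((hf.div hv).pow measurable_const) hAp')
        calc (∫⁻ x in E k, (f x / v x) ^ p') ^ (1/p') ≤ ((M k) ^ p') ^ (1/p') :=
              ENNReal.rpow_le_rpow h1 hconj.one_div_nonneg
          _ = M k := by
              rw [← ENNReal.rpow_mul, mul_one_div, div_self hconj.ne_zero, ENNReal.rpow_one]
      have hhold := ENNReal.lintegral_mul_le_Lp_mul_Lq (volume.restrict (E k)) hconj
        (hf.div hv).aemeasurable (hg.mul hv).aemeasurable
      exact le_trans hhold (mul_le_mul' hEbound hGEF)
  -- step 7: key dyadic estimate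
  have hkey : ∀ k : ℤ, tw (k+1) * (Gk k) ^ q ≤ 4 * ∫⁻ x in E (k-1), w x * G x ^ q := by
    intro k
    rcases eq_empty_or_nonempty (F k) with hFk | hFk
    · have h0 : Gk k = 0 := by
        show (∫⁻ y in F k, (g y * v y) ^ p) ^ (1/p) = 0
        rw [hFk]
        have hz0 : ∫⁻ y in (∅ : Set ℝ), (g y * v y) ^ p = 0 := by simp
        rw [hz0, ENNReal.zero_rpow_of_pos hinvp]
      rw [h0, ENNReal.zero_rpow_of_pos hq, mul_zero]
      exact zero_le
    · obtain ⟨x₀, hx₀⟩ := hFk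
      have hup : tw k ≤ ∫⁻ x in S (tw k), w x := W_lower w hwmeas hx₀.1 hx₀.2 hWfin
      have hdown : ∫⁻ x in S (tw (k-1)), w x ≤ tw (k-1) :=
        lintegral_initial w w hwmeas (fun t _ hWt => le_of_lt hWt)
      have hksub : k - 1 + 1 = k := by omega
      have hEdiff : E (k-1) = S (tw k) \ S (tw (k-1)) := by
        ext x
        simp only [hE, hS, mem_setOf_eq, mem_diff, hksub]
        constructor
        · rintro ⟨h0, h1, h2⟩
          exact ⟨⟨h0, h2⟩, fun hc => absurd hc.2 (not_lt.2 h1)⟩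
        · rintro ⟨⟨h0, h2⟩, hn⟩
          push_neg at hn
          exact ⟨h0, hn h0, h2⟩
      have hnu : tw (k-1) ≤ ∫⁻ x in E (k-1), w x := by
        set ρ : Measure ℝ := volume.withDensity w with hρ
        have happ : ∀ s : Set ℝ, MeasurableSet s → ρ s = ∫⁻ x in s, w x := fun s hs =>
          withDensity_apply w hs
        have hSS : S (tw (k-1)) ⊆ S (tw k) := fun x hx =>
          ⟨hx.1, lt_of_lt_of_le hx.2 (htwmono (by omega : k - 1 ≤ k))⟩
        have hfin : ρ (S (tw (k-1))) ≠ ∞ := by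
          rw [happ _ (hSmeas _)]
          exact (lt_of_le_of_lt hdown (lt_top_iff_ne_top.mpr (htwnetop _))).ne
        have hdiff : ρ (E (k-1)) = ρ (S (tw k)) - ρ (S (tw (k-1))) := by
          rw [hEdiff]
          exact measure_diff hSS (hSmeas _).nullMeasurableSet hfin
        have htwsub : tw k - tw (k-1) = tw (k-1) := by
          have : tw k = tw (k-1) + tw (k-1) := by
            rw [← two_mul, ← htwsucc (k-1), hksub]
          rw [this, ENNReal.add_sub_cancel_right (htwnetop _)]
        calc tw (k-1) = tw k - tw (k-1) := htwsub.symm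
          _ ≤ ρ (S (tw k)) - ρ (S (tw (k-1))) := by
              apply tsub_le_tsub _ _
              · rw [happ _ (hSmeas _)]; exact hup
              · rw [happ _ (hSmeas _)]; exact hdown
          _ = ρ (E (k-1)) := hdiff.symm
          _ = ∫⁻ x in E (k-1), w x := happ _ (hEmeas _)
      have hGx : ∀ x ∈ E (k-1), Gk k ≤ G x := by
        intro x hx
        apply ENNReal.rpow_le_rpow _ (by positivity)
        apply lintegral_mono_set
        intro y hy
        show x < y
        by_contra hxy
        push_neg at hxy
        have h5 : tw (k-1+1) ≤ W w y := by rw [hksub]; exact hy.2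
        exact absurd (lt_of_lt_of_le hx.2.2 h5) (not_lt.2 (W_mono w hxy))
      have hmid : tw (k-1) * (Gk k) ^ q ≤ ∫⁻ x in E (k-1), w x * G x ^ q := by
        calc tw (k-1) * (Gk k) ^ q ≤ (∫⁻ x in E (k-1), w x) * (Gk k) ^ q :=
              mul_le_mul_left hnu _
          _ = ∫⁻ x in E (k-1), w x * (Gk k) ^ q := by
              rw [lintegral_mul_const _ hwmeas]
          _ ≤ ∫⁻ x in E (k-1), w x * G x ^ q :=
              setLIntegral_mono' (hEmeas _) (fun x hx =>
                mul_le_mul_right (ENNReal.rpow_le_rpow (hGx x hx) hq.le) _)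
      have htwfour : tw (k+1) = 4 * tw (k-1) := by
        rw [htwsucc k, ← hksub, htwsucc (k-1)]
        rw [hksub]
        ring
      calc tw (k+1) * (Gk k) ^ q = 4 * (tw (k-1) * (Gk k) ^ q) := by
            rw [htwfour]; ring
        _ ≤ 4 * ∫⁻ x in E (k-1), w x * G x ^ q := mul_le_mul_right hmid _
  -- step 8: total mass bound
  have hsum2 : ∑' k : ℤ, ∫⁻ x in E (k-1), w x * G x ^ q ≤ 1 := by
    have hre : ∑' k : ℤ, ∫⁻ x in E (k-1), w x * G x ^ q
        = ∑' k : ℤ, ∫⁻ x in E k, w x * G x ^ q := by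
      exact ((Equiv.subRight (1:ℤ)).tsum_eq fun k => ∫⁻ x in E k, w x * G x ^ q)
    rw [hre, ← lintegral_iUnion hEmeas hdisj, ← hcover]
    have hint : ∫⁻ t in Ioi (0:ℝ), w t * G t ^ q = (CopN p q u v g) ^ q := by
      rw [CopN, nrm, ← ENNReal.rpow_mul, one_div_mul_cancel hq.ne', ENNReal.rpow_one]
      apply lintegral_congr
      intro t
      rw [ENNReal.mul_rpow_of_nonneg _ _ hq.le]
      rfl
    rw [hint]
    calc (CopN p q u v g) ^ q ≤ 1 ^ q := ENNReal.rpow_le_rpow hcop hq.le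
      _ = 1 := ENNReal.one_rpow q
  -- final assembly
  calc ∫⁻ x in Ioi (0:ℝ), f x * g x = ∑' k : ℤ, ∫⁻ x in E k, f x * g x := hsplit
    _ ≤ ∑' k : ℤ, M k * Gk k := by
        apply ENNReal.tsum_le_tsum
        intro k
        rw [hfg_ae (E k) (fun x hx => hx.1)]
        exact hterm k
    _ = A * ∑' k : ℤ, (tw (k+1)) ^ (1/q) * Gk k := by
        rw [← ENNReal.tsum_mul_left]
        apply tsum_congr
        intro k
        rw [hM, mul_assoc]
    _ ≤ A * (∑' k : ℤ, ((tw (k+1)) ^ (1/q) * Gk k) ^ q) ^ (1/q) :=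
        mul_le_mul_right (tsum_le_rpow_tsum _ hq hq1) A
    _ ≤ A * (∑' k : ℤ, 4 * ∫⁻ x in E (k-1), w x * G x ^ q) ^ (1/q) := by
        apply mul_le_mul_right
        apply ENNReal.rpow_le_rpow _ (by positivity)
        apply ENNReal.tsum_le_tsum
        intro k
        have h1 : ((tw (k+1)) ^ (1/q) * Gk k) ^ q = tw (k+1) * (Gk k) ^ q := by
          rw [ENNReal.mul_rpow_of_nonneg _ _ hq.le, ← ENNReal.rpow_mul,
            one_div_mul_cancel hq.ne', ENNReal.rpow_one]
        rw [h1]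
        exact hkey k
    _ = A * (4 * ∑' k : ℤ, ∫⁻ x in E (k-1), w x * G x ^ q) ^ (1/q) := by
        rw [ENNReal.tsum_mul_left]
    _ ≤ A * (4 * 1) ^ (1/q) := by
        apply mul_le_mul_right
        exact ENNReal.rpow_le_rpow (mul_le_mul_right hsum2 4) (by positivity)
    _ = (4:ℝ≥0∞) ^ (1/q) * A := by rw [mul_one, mul_comm]

lemma lower (p q : ℝ) (hp : 1 ≤ p) (hq : 0 < q)
    (u v f : ℝ → ℝ≥0∞) (hu : Measurable u) (hv : Measurable v) (hf : Measurable f)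
    (hvw : ∀ᵐ x ∂(volume.restrict (Ioi (0:ℝ))), 0 < v x ∧ v x < ∞)
    (t : ℝ) (ht : 0 < t)
    (hWpos : 0 < W (fun x => u x ^ q) t) (hWfin : W (fun x => u x ^ q) t < ∞) :
    dualNrmIoo p v f t * ((W (fun x => u x ^ q) t) ^ (1/q))⁻¹
      ≤ ⨆ g : {g : ℝ → ℝ≥0∞ // Measurable g ∧ CopN p q u v g ≤ 1},
          ∫⁻ x in Ioi (0:ℝ), f x * g.1 x := by
  have hp0 : 0 < p := lt_of_lt_of_le one_pos hp
  set w : ℝ → ℝ≥0∞ := fun x => u x ^ q with hw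
  set Y : ℝ≥0∞ := (W w t) ^ (1/q) with hY
  set asc : ℝ≥0∞ := ⨆ g : {g : ℝ → ℝ≥0∞ // Measurable g ∧ CopN p q u v g ≤ 1},
      ∫⁻ x in Ioi (0:ℝ), f x * g.1 x with hasc
  by_cases hp1 : p = 1
  · have hD : dualNrmIoo p v f t = essSup (fun x => f x / v x) (volume.restrict (Ioo 0 t)) := by
      rw [dualNrmIoo, if_pos hp1]
    set D := essSup (fun x => f x / v x) (volume.restrict (Ioo 0 t)) with hDdef
    rw [hD]
    have hclaim : ∀ l : ℝ≥0∞, l < D → l * Y⁻¹ ≤ asc := by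
      intro l hl
      set bad := Ioo 0 t ∩ {x | l < f x / v x} with hbad
      have hbadmeas : MeasurableSet bad :=
        measurableSet_Ioo.inter (measurableSet_lt measurable_const (hf.div hv))
      have hbadsub : bad ⊆ Ioi 0 := fun x hx => hx.1.1
      have hinter : bad ∩ Ioi 0 = bad := inter_eq_self_of_subset_left hbadsub
      set m := volume bad with hm
      have hm0 : m ≠ 0 := by
        intro h0
        have hae : ∀ᵐ x ∂(volume.restrict (Ioo 0 t)), f x / v x ≤ l := by
          rw [ae_iff]
          rw [show {a : ℝ | ¬ f a / v a ≤ l} = {a : ℝ | f a / v a ≤ l}ᶜ from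
            (compl_setOf _).symm]
          rw [Measure.restrict_apply' measurableSet_Ioo]
          have hseteq : {a : ℝ | f a / v a ≤ l}ᶜ ∩ Ioo 0 t = bad := by
            ext x
            simp only [hbad, mem_inter_iff, mem_setOf_eq, mem_compl_iff, not_le]
            exact and_comm
          rw [hseteq]
          exact h0
        exact absurd (essSup_le_of_ae_le l hae) (not_le.2 hl)
      have hmtop : m ≠ ∞ := by
        have h1 : m ≤ volume (Ioo 0 t) := measure_mono inter_subset_left
        rw [Real.volume_Ioo] at h1
        exact (lt_of_le_of_lt h1 ENNReal.ofReal_lt_top).ne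
      set φ := bad.indicator (fun x => (v x)⁻¹ * (m⁻¹ * Y⁻¹)) with hφ
      have hφmeas : Measurable φ := (hv.inv.mul measurable_const).indicator hbadmeas
      have hφv : ∀ᵐ x ∂(volume.restrict (Ioi (0:ℝ))),
          φ x * v x = bad.indicator (fun _ => m⁻¹ * Y⁻¹) x := by
        filter_upwards [hvw] with x hx
        show φ x * v x = bad.indicator (fun _ => m⁻¹ * Y⁻¹) x
        rcases em (x ∈ bad) with hxb | hxb
        · rw [hφ, indicator_of_mem hxb, indicator_of_mem hxb]
          calc (v x)⁻¹ * (m⁻¹ * Y⁻¹) * v x = ((v x)⁻¹ * v x) * (m⁻¹ * Y⁻¹) := by ring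
            _ = m⁻¹ * Y⁻¹ := by rw [ENNReal.inv_mul_cancel hx.1.ne' hx.2.ne, one_mul]
        · rw [hφ, indicator_of_notMem hxb, indicator_of_notMem hxb, zero_mul]
      have hcop : CopN p q u v φ ≤ 1 := by
        apply copN_le_one p q hp0 hq u v hu t hWpos hWfin φ
        · have hint : ∫⁻ x in Ioi (0:ℝ), (φ x * v x) ^ p
              = ∫⁻ x in Ioi (0:ℝ), bad.indicator (fun _ => m⁻¹ * Y⁻¹) x := by
            apply lintegral_congr_ae
            filter_upwards [hφv] with x hx
            rw [hp1, ENNReal.rpow_one, hx]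
          rw [hint, lintegral_indicator hbadmeas, Measure.restrict_restrict hbadmeas,
            hinter, setLIntegral_const]
          have heq : m⁻¹ * Y⁻¹ * m = (m⁻¹ * m) * Y⁻¹ := by ring
          rw [heq, ENNReal.inv_mul_cancel hm0 hmtop, one_mul]
          calc Y⁻¹ ^ (1/p) = Y⁻¹ ^ (1:ℝ) := by rw [hp1]; norm_num
            _ = Y⁻¹ := ENNReal.rpow_one _
            _ ≤ (W (fun x => u x ^ q) t ^ (1/q))⁻¹ := le_rfl
        · intro x hx
          exact indicator_of_notMem (fun hxb => absurd hxb.1.2 (not_lt.2 hx)) _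
      have hlow : l * Y⁻¹ ≤ ∫⁻ x in Ioi (0:ℝ), f x * φ x := by
        have hfφ : ∫⁻ x in Ioi (0:ℝ), f x * φ x
            = ∫⁻ x in Ioi (0:ℝ), bad.indicator (fun x => (f x / v x) * (m⁻¹ * Y⁻¹)) x := by
          apply lintegral_congr_ae
          apply ae_of_all
          intro x
          show f x * bad.indicator (fun x => (v x)⁻¹ * (m⁻¹ * Y⁻¹)) x
            = bad.indicator (fun x => (f x / v x) * (m⁻¹ * Y⁻¹)) x
          rcases em (x ∈ bad) with hxb | hxb
          · rw [indicator_of_mem hxb, indicator_of_mem hxb, div_eq_mul_inv]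
            ring
          · rw [indicator_of_notMem hxb, indicator_of_notMem hxb, mul_zero]
        rw [hfφ, lintegral_indicator hbadmeas, Measure.restrict_restrict hbadmeas, hinter]
        have hge : ∫⁻ x in bad, l * (m⁻¹ * Y⁻¹) ≤ ∫⁻ x in bad, (f x / v x) * (m⁻¹ * Y⁻¹) :=
          setLIntegral_mono' hbadmeas (fun x hx => mul_le_mul_left (le_of_lt hx.2) _)
        refine le_trans ?_ hge
        rw [setLIntegral_const]
        have heq : l * (m⁻¹ * Y⁻¹) * m = (m⁻¹ * m) * (l * Y⁻¹) := by ring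
        rw [heq, ENNReal.inv_mul_cancel hm0 hmtop, one_mul]
      exact le_trans hlow (le_iSup
        (fun (g : {g : ℝ → ℝ≥0∞ // Measurable g ∧ CopN p q u v g ≤ 1}) =>
          ∫⁻ x in Ioi (0:ℝ), f x * g.1 x) ⟨φ, hφmeas, hcop⟩)
    have hrw : D * Y⁻¹ = ⨆ (l : ℝ≥0∞), ⨆ (_ : l < D), l * Y⁻¹ := by
      conv_lhs => rw [← biSup_Iio D]
      rw [ENNReal.iSup_mul]
      congr 1
      ext l
      rw [ENNReal.iSup_mul]
    rw [hrw]
    exact iSup₂_le hclaim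
  · have hp1' : 1 < p := lt_of_le_of_ne hp (Ne.symm hp1)
    have hconj : p.HolderConjugate (p / (p - 1)) := Real.HolderConjugate.conjExponent hp1'
    set p' : ℝ := p / (p - 1) with hp'def
    have hp'1 : 1 < p' := hconj.symm.lt
    have hp'pos : 0 < p' := (hconj.symm : p'.HolderConjugate p).pos
    have hinvp' : (0:ℝ) < 1 / p' := by positivity
    have hpp' : (p' - 1) * p = p' := by
      have hme := hconj.mul_eq_add
      linear_combination hme
    have hexp : p' * (1 / p) = p' - 1 := by
      field_simp
      linear_combination -hconj.mul_eq_add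
    have hD : dualNrmIoo p v f t = (∫⁻ x in Ioo 0 t, (f x / v x) ^ p') ^ (1/p') := by
      rw [dualNrmIoo, if_neg hp1, nrm]
    rw [hD]
    set X : ℕ → ℝ≥0∞ := fun n => ∫⁻ x in Ioo 0 t, (min (f x / v x) (n:ℝ≥0∞)) ^ p' with hX
    have hhmeas : ∀ n : ℕ, Measurable fun x => min (f x / v x) (n:ℝ≥0∞) :=
      fun n => (hf.div hv).min measurable_const
    have hXsup : ∫⁻ x in Ioo 0 t, (f x / v x) ^ p' = ⨆ n : ℕ, X n := by
      have hptwise : ∀ x : ℝ, (f x / v x) ^ p'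
          = ⨆ n : ℕ, (min (f x / v x) (n:ℝ≥0∞)) ^ p' := by
        intro x
        rw [← rpow_iSup _ hp'pos]
        congr 1
        apply le_antisymm
        · rcases eq_or_ne (f x / v x) ∞ with hfx | hfx
          · rw [hfx]
            have hmin : ∀ n : ℕ, min (⊤:ℝ≥0∞) (n:ℝ≥0∞) = (n:ℝ≥0∞) :=
              fun n => min_eq_right le_top
            calc (⊤:ℝ≥0∞) = ⨆ n : ℕ, (n:ℝ≥0∞) := ENNReal.iSup_natCast.symm
              _ ≤ ⨆ n : ℕ, min (⊤:ℝ≥0∞) (n:ℝ≥0∞) := iSup_mono fun n => (hmin n).ge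
          · obtain ⟨n, hn⟩ := ENNReal.exists_nat_gt hfx
            exact le_iSup_of_le n (by rw [min_eq_left hn.le])
        · exact iSup_le fun n => min_le_left _ _
      calc ∫⁻ x in Ioo 0 t, (f x / v x) ^ p'
          = ∫⁻ x in Ioo 0 t, ⨆ n : ℕ, (min (f x / v x) (n:ℝ≥0∞)) ^ p' :=
            lintegral_congr fun x => hptwise x
        _ = ⨆ n : ℕ, X n := by
            apply lintegral_iSup (fun n => (hhmeas n).pow measurable_const)
            intro a b hab x
            exact ENNReal.rpow_le_rpow
              (min_le_min le_rfl (by exact_mod_cast Nat.cast_le.mpr hab)) hp'pos.le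
    have hclaim : ∀ n : ℕ, (X n) ^ (1/p') * Y⁻¹ ≤ asc := by
      intro n
      rcases eq_or_ne (X n) 0 with hXn0 | hXn0
      · rw [hXn0, ENNReal.zero_rpow_of_pos hinvp', zero_mul]
        exact zero_le
      · set h : ℝ → ℝ≥0∞ := fun x => min (f x / v x) (n:ℝ≥0∞) with hh
        have hXntop : X n ≠ ∞ := by
          have hb : X n ≤ (n:ℝ≥0∞) ^ p' * volume (Ioo 0 t) := by
            rw [← setLIntegral_const]
            exact setLIntegral_mono' measurableSet_Ioo
              (fun x _ => ENNReal.rpow_le_rpow (min_le_right _ _) hp'pos.le)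
          refine (lt_of_le_of_lt hb ?_).ne
          apply ENNReal.mul_lt_top
          · exact ENNReal.rpow_lt_top_of_nonneg hp'pos.le (ENNReal.natCast_ne_top n)
          · rw [Real.volume_Ioo]; exact ENNReal.ofReal_lt_top
        set Dn : ℝ≥0∞ := (X n) ^ (1/p') with hDn
        have hDn0 : Dn ≠ 0 := by
          rw [hDn]
          intro hcon
          rcases ENNReal.rpow_eq_zero_iff.mp hcon with ⟨h1, _⟩ | ⟨h1, h2⟩
          · exact hXn0 h1
          · linarith
        have hDntop : Dn ≠ ∞ := by
          rw [hDn]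
          exact (ENNReal.rpow_lt_top_of_nonneg hinvp'.le hXntop).ne
        have hXD : Dn ^ p' = X n := by
          rw [hDn, ← ENNReal.rpow_mul, one_div_mul_cancel hp'pos.ne', ENNReal.rpow_one]
        set Z : ℝ≥0∞ := Dn ^ (p' - 1) with hZ
        have hZ0 : Z ≠ 0 := by
          rw [hZ]
          intro hcon
          rcases ENNReal.rpow_eq_zero_iff.mp hcon with ⟨h1, _⟩ | ⟨h1, _⟩
          · exact hDn0 h1
          · exact hDntop h1
        have hZtop : Z ≠ ∞ := by
          rw [hZ]
          exact (ENNReal.rpow_lt_top_of_nonneg (by linarith) hDntop).ne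
        set c : ℝ≥0∞ := Z⁻¹ * Y⁻¹ with hc
        set φ : ℝ → ℝ≥0∞ :=
          (Ioo 0 t).indicator (fun x => h x ^ (p'-1) * (v x)⁻¹ * c) with hφ
        have hφmeas : Measurable φ :=
          ((((hhmeas n).pow measurable_const).mul hv.inv).mul_const c).indicator
            measurableSet_Ioo
        have hIooInter : Ioo 0 t ∩ Ioi 0 = Ioo 0 t :=
          inter_eq_self_of_subset_left (fun x hx => hx.1)
        have hindint : ∀ K : ℝ≥0∞,
            ∫⁻ x in Ioi (0:ℝ), (Ioo 0 t).indicator (fun x => h x ^ p') x * K = X n * K := by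
          intro K
          rw [lintegral_mul_const _ (((hhmeas n).pow measurable_const).indicator
            measurableSet_Ioo)]
          congr 1
          rw [lintegral_indicator measurableSet_Ioo, Measure.restrict_restrict
            measurableSet_Ioo, hIooInter]
        have hcop : CopN p q u v φ ≤ 1 := by
          apply copN_le_one p q hp0 hq u v hu t hWpos hWfin φ
          · have hint : ∫⁻ x in Ioi (0:ℝ), (φ x * v x) ^ p
                = ∫⁻ x in Ioi (0:ℝ), (Ioo 0 t).indicator (fun x => h x ^ p') x * c ^ p := by
              apply lintegral_congr_ae
              filter_upwards [hvw] with x hx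
              rcases em (x ∈ Ioo 0 t) with hxI | hxI
              · rw [hφ, indicator_of_mem hxI, indicator_of_mem hxI]
                have hstep1 : h x ^ (p'-1) * (v x)⁻¹ * c * v x = h x ^ (p'-1) * c := by
                  calc h x ^ (p'-1) * (v x)⁻¹ * c * v x
                      = ((v x)⁻¹ * v x) * (h x ^ (p'-1) * c) := by ring
                    _ = h x ^ (p'-1) * c := by
                        rw [ENNReal.inv_mul_cancel hx.1.ne' hx.2.ne, one_mul]
                rw [hstep1, ENNReal.mul_rpow_of_nonneg _ _ hp0.le, ← ENNReal.rpow_mul, hpp']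
              · rw [hφ, indicator_of_notMem hxI, indicator_of_notMem hxI, zero_mul,
                  zero_mul, ENNReal.zero_rpow_of_pos hp0]
            rw [hint, hindint (c ^ p)]
            have hcp : (c ^ p) ^ (1/p) = c := by
              rw [← ENNReal.rpow_mul, mul_one_div, div_self hp0.ne', ENNReal.rpow_one]
            have hXp : (X n) ^ (1/p) = Z := by
              rw [← hXD, ← ENNReal.rpow_mul, hexp, ← hZ]
            have hcompute : (X n * c ^ p) ^ (1/p) = Y⁻¹ := by
              rw [ENNReal.mul_rpow_of_nonneg _ _ (by positivity : (0:ℝ) ≤ 1/p), hcp, hXp, hc]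
              calc Z * (Z⁻¹ * Y⁻¹) = (Z * Z⁻¹) * Y⁻¹ := by ring
                _ = Y⁻¹ := by rw [ENNReal.mul_inv_cancel hZ0 hZtop, one_mul]
            rw [hcompute]
          · intro x hx
            have hxI : x ∉ Ioo 0 t := fun hxm => absurd hxm.2 (not_lt.2 hx)
            rw [hφ, indicator_of_notMem hxI]
        have hsplitD : Dn * Z = Dn ^ p' := by
          rw [hZ]
          nth_rewrite 1 [← ENNReal.rpow_one Dn]
          rw [← ENNReal.rpow_add_of_nonneg _ _ zero_le_one (by linarith : (0:ℝ) ≤ p' - 1)]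
          rw [show (1:ℝ) + (p' - 1) = p' from by ring]
        have hlow : Dn * Y⁻¹ ≤ ∫⁻ x in Ioi (0:ℝ), f x * φ x := by
          have hge : ∫⁻ x in Ioi (0:ℝ), (Ioo 0 t).indicator (fun x => h x ^ p') x * c
              ≤ ∫⁻ x in Ioi (0:ℝ), f x * φ x := by
            apply setLIntegral_mono' measurableSet_Ioi
            intro x _
            rcases em (x ∈ Ioo 0 t) with hxI | hxI
            · rw [hφ, indicator_of_mem hxI, indicator_of_mem hxI]
              calc h x ^ p' * c = h x ^ (1 + (p' - 1)) * c := by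
                    rw [show (1:ℝ) + (p' - 1) = p' from by ring]
                _ = (h x * h x ^ (p' - 1)) * c := by
                    rw [ENNReal.rpow_add_of_nonneg _ _ zero_le_one
                      (by linarith : (0:ℝ) ≤ p' - 1), ENNReal.rpow_one]
                _ ≤ ((f x / v x) * h x ^ (p' - 1)) * c :=
                    mul_le_mul_left (mul_le_mul_left (min_le_left _ _) _) _
                _ = f x * (h x ^ (p' - 1) * (v x)⁻¹ * c) := by
                    rw [div_eq_mul_inv]; ring
            · rw [hφ, indicator_of_notMem hxI, indicator_of_notMem hxI, zero_mul, mul_zero]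
          refine le_trans ?_ hge
          rw [hindint c]
          have hXc : X n * c = Dn * Y⁻¹ := by
            rw [← hXD, ← hsplitD, hc]
            calc Dn * Z * (Z⁻¹ * Y⁻¹) = (Z * Z⁻¹) * (Dn * Y⁻¹) := by ring
              _ = Dn * Y⁻¹ := by rw [ENNReal.mul_inv_cancel hZ0 hZtop, one_mul]
          rw [hXc]
        refine le_trans hlow (le_iSup
          (fun (g : {g : ℝ → ℝ≥0∞ // Measurable g ∧ CopN p q u v g ≤ 1}) =>
            ∫⁻ x in Ioi (0:ℝ), f x * g.1 x) ⟨φ, hφmeas, hcop⟩)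
    rw [hXsup, rpow_iSup _ hinvp', ENNReal.iSup_mul]
    exact iSup_le hclaim

end CopsonAux

/-- associate norm of `Cop_{p,q}(u,v)` for `1 ≤ p < ∞`, `0 < q ≤ 1`. -/
theorem copson_associate_norm
    (p q : ℝ) (hp : 1 ≤ p) (hq : 0 < q) (hq1 : q ≤ 1)
    (u v : ℝ → ℝ≥0∞) (hu : Measurable u) (hv : Measurable v)
    (hU : ∀ t ∈ Ioi (0:ℝ), 0 < nrm q u (Ioo 0 t) ∧ nrm q u (Ioo 0 t) < ∞)
    (hvw : ∀ᵐ x ∂(volume.restrict (Ioi (0:ℝ))), 0 < v x ∧ v x < ∞) :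
    ∃ c₁ c₂ : ℝ≥0∞, 0 < c₁ ∧ c₂ < ∞ ∧
      ∀ f : ℝ → ℝ≥0∞, Measurable f →
        (let assoc : ℝ≥0∞ := ⨆ g : {g : ℝ → ℝ≥0∞ // Measurable g ∧ CopN p q u v g ≤ 1},
            ∫⁻ x in Ioi (0:ℝ), f x * g.1 x
         let A : ℝ≥0∞ := ⨆ t ∈ Ioi (0:ℝ), dualNrmIoo p v f t * (nrm q u (Ioo 0 t))⁻¹
         c₁ * A ≤ assoc ∧ assoc ≤ c₂ * A) := by
  classical
  have hq' : (0:ℝ) < 1/q := by positivity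
  refine ⟨1, (4:ℝ≥0∞) ^ (1/q), one_pos,
    ENNReal.rpow_lt_top_of_nonneg hq'.le (by norm_num), ?_⟩
  intro f hf
  intro assoc A
  set w : ℝ → ℝ≥0∞ := fun x => u x ^ q with hw
  have hWpos : ∀ t : ℝ, 0 < t → 0 < CopsonAux.W w t := by
    intro t ht
    have h := (hU t (mem_Ioi.2 ht)).1
    by_contra hc
    push_neg at hc
    rw [le_zero_iff] at hc
    rw [show nrm q u (Ioo 0 t) = (CopsonAux.W w t) ^ (1/q) from rfl, hc,
      ENNReal.zero_rpow_of_pos hq'] at h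
    exact lt_irrefl 0 h
  have hWfin : ∀ t : ℝ, 0 < t → CopsonAux.W w t < ∞ := by
    intro t ht
    have h := (hU t (mem_Ioi.2 ht)).2
    by_contra hc
    push_neg at hc
    rw [top_le_iff] at hc
    rw [show nrm q u (Ioo 0 t) = (CopsonAux.W w t) ^ (1/q) from rfl, hc,
      ENNReal.top_rpow_of_pos hq'] at h
    exact lt_irrefl ⊤ h
  constructor
  · rw [one_mul]
    refine iSup₂_le ?_
    intro t ht
    exact CopsonAux.lower p q hp hq u v f hu hv hf hvw t ht (hWpos t ht) (hWfin t ht)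
  · have hA : ∀ t : ℝ, 0 < t → dualNrmIoo p v f t ≤ A * (CopsonAux.W w t) ^ (1/q) := by
      intro t ht
      set Y : ℝ≥0∞ := (CopsonAux.W w t) ^ (1/q) with hY
      have hY0 : Y ≠ 0 := by
        rw [hY]
        intro hcon
        rcases ENNReal.rpow_eq_zero_iff.mp hcon with ⟨h1, _⟩ | ⟨_, h2⟩
        · exact (hWpos t ht).ne' h1
        · linarith
      have hYtop : Y ≠ ∞ := by
        rw [hY]
        intro hcon
        rcases ENNReal.rpow_eq_top_iff.mp hcon with ⟨_, h2⟩ | ⟨h1, _⟩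
        · linarith
        · exact (hWfin t ht).ne h1
      have hle : dualNrmIoo p v f t * Y⁻¹ ≤ A :=
        le_iSup₂ (f := fun (t : ℝ) (_ : t ∈ Ioi (0:ℝ)) =>
          dualNrmIoo p v f t * (nrm q u (Ioo 0 t))⁻¹) t (mem_Ioi.2 ht)
      calc dualNrmIoo p v f t = dualNrmIoo p v f t * (Y⁻¹ * Y) := by
            rw [ENNReal.inv_mul_cancel hY0 hYtop, mul_one]
        _ = (dualNrmIoo p v f t * Y⁻¹) * Y := by rw [mul_assoc]
        _ ≤ A * Y := mul_le_mul_left hle Y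
    refine iSup_le ?_
    rintro ⟨g, hg, hcop⟩
    exact CopsonAux.upper p q hp hq hq1 u v f hu hv hf hvw hWpos hWfin A hA g hg hcop
end
end

section
/- Let 0 < q ≤ p ≤ 1 and let u, w be nonnegative measurable functions on (0,∞) with ∫_t^∞ u^q < ∞ for all t > 0. Then the inequality (∫_0^∞ g^p w^p)^{1/p} ≤ c (∫_0^∞ (∫_0^t g)^q u(t)^q dt)^{1/q} holds for all nonnegative measurable g if and only if C = sup_{t>0} (∫_t^∞ w^{p/(1−p)})^{(1−p)/p} (∫_t^∞ u^q)^{−1/q} < ∞ (with the first factor replaced by ess sup_{(t,∞)} w when p = 1), and the best constant c satisfies c ≈ C. -/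
open MeasureTheory ENNReal Set

noncomputable section
namespace RevHardy

lemma tsum_rpow_le (f : ℕ → ℝ≥0∞) {r : ℝ} (hr : 1 ≤ r) :
    ∑' i, f i ^ r ≤ (∑' i, f i) ^ r := by
  have hfin : ∀ s : Finset ℕ, ∑ i ∈ s, f i ^ r ≤ (∑ i ∈ s, f i) ^ r := by
    intro s
    induction s using Finset.induction with
    | empty => simp
    | insert _ _ hx ih =>
      rename_i a s'
      rw [Finset.sum_insert hx, Finset.sum_insert hx]
      calc f a ^ r + ∑ i ∈ s', f i ^ r ≤ f a ^ r + (∑ i ∈ s', f i) ^ r := by gcongr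
        _ ≤ (f a + ∑ i ∈ s', f i) ^ r := ENNReal.add_rpow_le_rpow_add _ _ hr
  rw [ENNReal.tsum_eq_iSup_sum]
  refine iSup_le fun s => (hfin s).trans ?_
  exact ENNReal.rpow_le_rpow (ENNReal.sum_le_tsum s) (le_trans zero_le_one hr)

lemma half_sub {c : ℝ≥0∞} (hc : c ≠ ⊤) (k : ℕ) :
    c / 2 ^ k - c / 2 ^ (k+1) = c / 2 ^ (k+1) := by
  have h2 : c / 2 ^ k = c / 2 ^ (k+1) + c / 2 ^ (k+1) := by
    rw [← two_mul, pow_succ]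
    rw [show c / (2 ^ k * 2) = c / 2 ^ k / 2 by
      rw [div_eq_mul_inv, div_eq_mul_inv, div_eq_mul_inv, mul_assoc, ENNReal.mul_inv] <;> simp]
    rw [ENNReal.mul_div_cancel' (by norm_num) (by norm_num)]
  rw [h2, ENNReal.add_sub_cancel_right]
  exact (ENNReal.div_lt_top hc (by simp)).ne

lemma antitone_Ioi_seq (x : ℝ) : Antitone (fun n : ℕ => Ioi (x + n + 1)) := by
  intro a b hab
  refine Ioi_subset_Ioi ?_
  have : (a:ℝ) ≤ b := by exact_mod_cast hab
  linarith

/-- one halving step -/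
lemma exists_half (μ : Measure ℝ) (hat : ∀ x : ℝ, μ {x} = 0) (x : ℝ)
    (hfin : μ (Ioi x) ≠ ⊤) (hpos : μ (Ioi x) ≠ 0) :
    x < sInf {t | x < t ∧ μ (Ioi t) ≤ μ (Ioi x) / 2} ∧
      μ (Ioi (sInf {t | x < t ∧ μ (Ioi t) ≤ μ (Ioi x) / 2})) = μ (Ioi x) / 2 := by
  set T := {t | x < t ∧ μ (Ioi t) ≤ μ (Ioi x) / 2} with hT
  have hTsub : T ⊆ Ioi x := fun t ht => ht.1
  have hTne : T.Nonempty := by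
    have hint := (antitone_Ioi_seq x).measure_iInter (μ := μ)
      (fun n => measurableSet_Ioi.nullMeasurableSet)
      ⟨0, ne_top_of_le_ne_top hfin (measure_mono (Ioi_subset_Ioi (by norm_num)))⟩
    have hempty : (⋂ n : ℕ, Ioi (x + n + 1)) = ∅ := by
      ext y; simp only [mem_iInter, mem_Ioi, mem_empty_iff_false, iff_false, not_forall, not_lt]
      obtain ⟨n, hn⟩ := exists_nat_gt (y - x - 1)
      exact ⟨n, by linarith⟩
    rw [hempty, measure_empty] at hint
    have hhalf : (0:ℝ≥0∞) < μ (Ioi x) / 2 := ENNReal.div_pos hpos (by norm_num)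
    rw [hint] at hhalf
    obtain ⟨n, hn⟩ := iInf_lt_iff.mp hhalf
    refine ⟨x + n + 1, ?_, hn.le⟩
    have : (0:ℝ) ≤ n := n.cast_nonneg
    show x < x + n + 1
    linarith
  have hbdd : BddBelow T := ⟨x, fun t ht => (ht.1).le⟩
  set m := sInf T with hm
  have hxm : x ≤ m := le_csInf hTne fun t ht => ht.1.le
  -- upper bound : μ (Ioi m) ≤ μ (Ioi x) / 2  via sequence in T decreasing to m
  have hub : μ (Ioi m) ≤ μ (Ioi x) / 2 := by
    have hseq : ∀ n : ℕ, ∃ t ∈ T, t < m + 1/(n+1) := by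
      intro n
      apply exists_lt_of_csInf_lt hTne
      have : (0:ℝ) < 1/((n:ℝ)+1) := by positivity
      linarith
    choose t htT htlt using hseq
    have hcover : Ioi m ⊆ ⋃ n, Ioi (t n) := by
      intro y hy
      simp only [mem_Ioi] at hy
      obtain ⟨n, hn⟩ := exists_nat_gt (1/(y - m))
      have hy1 : m + 1/(n+1) ≤ y := by
        rw [div_lt_iff₀ (by linarith)] at hn
        have h1 : 1/((n:ℝ)+1) ≤ y - m := by
          rw [div_le_iff₀ (by positivity)]
          nlinarith [n.cast_nonneg (α := ℝ)]
        linarith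
      exact mem_iUnion.mpr ⟨n, by simp only [mem_Ioi]; linarith [htlt n]⟩
    calc μ (Ioi m) ≤ μ (⋃ n, Ioi (t n)) := measure_mono hcover
      _ = ⨆ n, μ (Ioi (t n)) := by
          apply Directed.measure_iUnion
          intro a b
          rcases le_total (t a) (t b) with h | h
          exacts [⟨a, subset_rfl, Ioi_subset_Ioi h⟩, ⟨b, Ioi_subset_Ioi h, subset_rfl⟩]
      _ ≤ μ (Ioi x) / 2 := iSup_le fun n => (htT n).2
  -- x < m
  have hxmlt : x < m := by
    rcases eq_or_lt_of_le hxm with heq | h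
    · exfalso
      rw [← heq] at hub
      have := ENNReal.half_lt_self hpos hfin
      exact absurd hub (not_le.mpr this)
    · exact h
  -- lower bound: μ (Ioi m) ≥ μ (Ioi x) / 2
  have hlb : μ (Ioi x) / 2 ≤ μ (Ioi m) := by
    set s : ℕ → ℝ := fun n => m - (m - x)/(n+2) with hs
    have hsx : ∀ n, x < s n := by
      intro n
      simp only [hs]
      have hmx : (0:ℝ) < m - x := by linarith
      have hn2 : (1:ℝ) < (n:ℝ) + 2 := by nlinarith [n.cast_nonneg (α := ℝ)]
      have h1 : (m - x)/((n:ℝ)+2) < m - x := div_lt_self hmx hn2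
      linarith
    have hsm : ∀ n, s n < m := by
      intro n
      simp only [hs]
      have : (0:ℝ) < (m - x)/((n:ℝ)+2) :=
        div_pos (by linarith) (by positivity)
      linarith
    have hnotT : ∀ n, μ (Ioi x) / 2 < μ (Ioi (s n)) := by
      intro n
      by_contra hcon
      push_neg at hcon
      have : s n ∈ T := ⟨hsx n, hcon⟩
      exact absurd (csInf_le hbdd this) (not_le.mpr (hsm n))
    have hicc : (⋂ n, Ioi (s n)) = Ici m := by
      ext y
      simp only [mem_iInter, mem_Ioi, mem_Ici]
      constructor
      · intro h
        by_contra hy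
        push_neg at hy
        obtain ⟨n, hn⟩ := exists_nat_gt ((m - x)/(m - y))
        have h2 : (m - x)/((n:ℝ)+2) < m - y := by
          rw [div_lt_iff₀ (by linarith)]
          rw [div_lt_iff₀ (by linarith)] at hn
          nlinarith [n.cast_nonneg (α := ℝ)]
        have := h n
        simp only [hs] at this
        linarith
      · intro h n; linarith [hsm n]
    have hmono : Antitone (fun n : ℕ => Ioi (s n)) := by
      intro a b hab
      apply Ioi_subset_Ioi
      simp only [hs]
      have hab' : (a:ℝ) ≤ b := by exact_mod_cast hab
      have h1 : (m - x)/((b:ℝ)+2) ≤ (m - x)/((a:ℝ)+2) := by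
        apply div_le_div_of_nonneg_left (by linarith [hxmlt]) (by positivity) (by linarith)
      linarith
    have hint := hmono.measure_iInter (μ := μ) (fun n => measurableSet_Ioi.nullMeasurableSet)
      ⟨0, ne_top_of_le_ne_top hfin (measure_mono (Ioi_subset_Ioi (hsx 0).le))⟩
    rw [hicc] at hint
    have hIci : μ (Ici m) = μ (Ioi m) := by
      have : Ici m = Ioi m ∪ {m} := by
        ext y; simp only [mem_Ici, mem_union, mem_Ioi, mem_singleton_iff]
        constructor
        · intro h; rcases eq_or_lt_of_le h with h' | h'; exact Or.inr h'.symm; exact Or.inl h'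
        · rintro (h | h); linarith; exact h.ge
      rw [this]
      refine le_antisymm ?_ (measure_mono Set.subset_union_left)
      calc μ (Ioi m ∪ {m}) ≤ μ (Ioi m) + μ {m} := measure_union_le _ _
        _ = μ (Ioi m) := by rw [hat m, add_zero]
    rw [hIci] at hint
    rw [hint]
    exact le_iInf fun n => (hnotT n).le
  exact ⟨hxmlt, le_antisymm hub hlb⟩

def hseq (μ : Measure ℝ) (a : ℝ) : ℕ → ℝ
  | 0 => a
  | k+1 => sInf {t | hseq μ a k < t ∧ μ (Ioi t) ≤ μ (Ioi (hseq μ a k)) / 2}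

lemma hseq_prop (μ : Measure ℝ) (hat : ∀ x : ℝ, μ {x} = 0) (a : ℝ)
    (hfin : μ (Ioi a) ≠ ⊤) (hpos : μ (Ioi a) ≠ 0) :
    ∀ k, (hseq μ a k < hseq μ a (k+1)) ∧ μ (Ioi (hseq μ a k)) = μ (Ioi a) / 2 ^ k := by
  have key : ∀ k, μ (Ioi (hseq μ a k)) = μ (Ioi a) / 2 ^ k →
      hseq μ a k < hseq μ a (k+1) ∧ μ (Ioi (hseq μ a (k+1))) = μ (Ioi a) / 2 ^ (k+1) := by
    intro k hk
    have hfin' : μ (Ioi (hseq μ a k)) ≠ ⊤ := by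
      rw [hk]; exact (ENNReal.div_lt_top hfin (by positivity)).ne
    have hpos' : μ (Ioi (hseq μ a k)) ≠ 0 := by
      rw [hk]
      simp only [ne_eq, ENNReal.div_eq_zero_iff, not_or]
      exact ⟨hpos, by simp⟩
    obtain ⟨h1, h2⟩ := exists_half μ hat (hseq μ a k) hfin' hpos'
    refine ⟨h1, ?_⟩
    show μ (Ioi (sInf _)) = _
    rw [h2, hk]
    rw [pow_succ, div_eq_mul_inv, div_eq_mul_inv, div_eq_mul_inv,
      ENNReal.mul_inv (Or.inl (by positivity)) (Or.inl (by norm_num)), mul_assoc]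
  intro k
  induction k with
  | zero => exact ⟨(key 0 (by simp [hseq])).1, by simp [hseq]⟩
  | succ k ih => exact ⟨(key (k+1) (key k ih.2).2).1, (key k ih.2).2⟩



variable {p q : ℝ}

def Wf (p : ℝ) (w : ℝ → ℝ≥0∞) (t : ℝ) : ℝ≥0∞ :=
  if p = 1 then essSup w (volume.restrict (Ioi t))
  else (∫⁻ x in Ioi t, w x ^ (p / (1 - p))) ^ ((1 - p) / p)

def Cq (p q : ℝ) (u w : ℝ → ℝ≥0∞) : ℝ≥0∞ :=
  ⨆ t ∈ Ioi (0:ℝ), Wf p w t * ((∫⁻ x in Ioi t, u x ^ q) ^ (1/q))⁻¹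

lemma rpow_eq_zero_iff_pos {x : ℝ≥0∞} {r : ℝ} (hr : 0 < r) : x ^ r = 0 ↔ x = 0 := by
  rw [ENNReal.rpow_eq_zero_iff]
  constructor
  · intro h
    rcases h with ⟨h,_⟩|⟨_,h⟩
    · exact h
    · linarith
  · intro h; exact Or.inl ⟨h, hr⟩

lemma w_ae_zero (hp : 0 < p) (hp1 : p ≤ 1) {w : ℝ → ℝ≥0∞} (hw : Measurable w) {t : ℝ}
    (hWf : Wf p w t = 0) : w =ᵐ[volume.restrict (Ioi t)] 0 := by
  by_cases hp1' : p = 1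
  · rw [Wf, if_pos hp1'] at hWf
    have := ae_le_essSup (μ := volume.restrict (Ioi t)) w
    rw [hWf] at this
    filter_upwards [this] with x hx
    exact le_antisymm hx (zero_le)
  · rw [Wf, if_neg hp1'] at hWf
    have hpp : 0 < p / (1 - p) := by
      apply div_pos hp
      rcases lt_or_eq_of_le hp1 with h | h
      · linarith
      · exact absurd h hp1'
    have h0 : (∫⁻ x in Ioi t, w x ^ (p / (1 - p))) = 0 := by
      have hr : 0 < (1 - p)/p := div_pos (by rcases lt_or_eq_of_le hp1 with h | h; linarith; exact absurd h hp1') hp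
      exact (rpow_eq_zero_iff_pos hr).mp hWf
    have := (lintegral_eq_zero_iff (hw.pow_const _)).mp h0
    filter_upwards [this] with x hx
    simpa using (rpow_eq_zero_iff_pos hpp).mp hx

/-- if `Wf ≠ 0` then `∫ w^p` on `Ioi t` is positive -/
lemma int_wp_pos (hp : 0 < p) (hp1 : p ≤ 1) {w : ℝ → ℝ≥0∞} (hw : Measurable w) {t : ℝ}
    (hWf : Wf p w t ≠ 0) : (∫⁻ x in Ioi t, w x ^ p) ≠ 0 := by
  intro hcon
  apply hWf
  have hae := (lintegral_eq_zero_iff (hw.pow_const _)).mp hcon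
  have hae' : w =ᵐ[volume.restrict (Ioi t)] 0 := by
    filter_upwards [hae] with x hx
    simpa using (rpow_eq_zero_iff_pos hp).mp hx
  by_cases hp1' : p = 1
  · rw [Wf, if_pos hp1']
    have : essSup w (volume.restrict (Ioi t)) ≤ 0 := essSup_le_of_ae_le 0 hae'.le
    simpa using this
  · rw [Wf, if_neg hp1']
    have hplt : p < 1 := lt_of_le_of_ne hp1 hp1'
    have : (∫⁻ x in Ioi t, w x ^ (p / (1 - p))) = 0 := by
      rw [lintegral_eq_zero_iff (hw.pow_const _)]
      filter_upwards [hae'] with x hx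
      simp only [Pi.zero_apply] at hx ⊢
      rw [hx]
      exact ENNReal.zero_rpow_of_pos (div_pos hp (by linarith))
    rw [this]
    exact ENNReal.zero_rpow_of_pos (div_pos (by linarith) hp)

/-- the zero-U degenerate bound -/
lemma gw_zero (hq : 0 < q) (hp : 0 < p) (hp1 : p ≤ 1) {u w : ℝ → ℝ≥0∞} (hw : Measurable w)
    (hC : Cq p q u w ≠ ⊤) {t : ℝ} (ht : 0 < t)
    (hU : (∫⁻ x in Ioi t, u x ^ q) = 0) (g : ℝ → ℝ≥0∞) :
    (∫⁻ x in Ioi t, g x ^ p * w x ^ p) = 0 := by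
  have hWf : Wf p w t = 0 := by
    by_contra hne
    apply hC
    have hle : Wf p w t * ((∫⁻ x in Ioi t, u x ^ q) ^ (1/q))⁻¹ ≤ Cq p q u w := by
      have := le_iSup₂ (f := fun (t : ℝ) (_ : t ∈ Ioi (0:ℝ)) =>
        Wf p w t * ((∫⁻ x in Ioi t, u x ^ q) ^ (1/q))⁻¹) t (mem_Ioi.mpr ht)
      exact this
    rw [hU] at hle
    rw [ENNReal.zero_rpow_of_pos (by positivity), ENNReal.inv_zero, ENNReal.mul_top hne] at hle
    exact top_le_iff.mp hle
  have hae := w_ae_zero hp hp1 hw hWf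
  have : (fun x => g x ^ p * w x ^ p) =ᵐ[volume.restrict (Ioi t)] 0 := by
    filter_upwards [hae] with x hx
    simp only [Pi.zero_apply] at hx ⊢
    rw [hx, ENNReal.zero_rpow_of_pos hp, mul_zero]
  rw [lintegral_congr_ae this]
  simp

/-- main sup bound: `Wf t ≤ Cq * U^{1/q}` when `U` is positive finite -/
lemma Wf_le (hq : 0 < q) {u w : ℝ → ℝ≥0∞} {t : ℝ} (ht : 0 < t)
    (hU0 : (∫⁻ x in Ioi t, u x ^ q) ≠ 0) (hUt : (∫⁻ x in Ioi t, u x ^ q) ≠ ⊤) :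
    Wf p w t ≤ Cq p q u w * (∫⁻ x in Ioi t, u x ^ q) ^ (1/q) := by
  have hle : Wf p w t * ((∫⁻ x in Ioi t, u x ^ q) ^ (1/q))⁻¹ ≤ Cq p q u w :=
    le_iSup₂ (f := fun (t : ℝ) (_ : t ∈ Ioi (0:ℝ)) =>
      Wf p w t * ((∫⁻ x in Ioi t, u x ^ q) ^ (1/q))⁻¹) t (mem_Ioi.mpr ht)
  set Y := (∫⁻ x in Ioi t, u x ^ q) ^ (1/q) with hY
  have hY0 : Y ≠ 0 := by
    rw [hY, ne_eq, rpow_eq_zero_iff_pos (by positivity)]; exact hU0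
  have hYt : Y ≠ ⊤ := ENNReal.rpow_ne_top_of_nonneg (by positivity) hUt
  calc Wf p w t = Wf p w t * Y⁻¹ * Y := by
        rw [mul_assoc, ENNReal.inv_mul_cancel hY0 hYt, mul_one]
    _ ≤ Cq p q u w * Y := mul_le_mul_left hle Y

/-- monotone in t, hence measurable -/
lemma F_measurable (g : ℝ → ℝ≥0∞) : Measurable fun t => ∫⁻ x in Ioo (0:ℝ) t, g x := by
  apply Monotone.measurable
  intro s t hst
  exact lintegral_mono_set (Ioo_subset_Ioo le_rfl hst)

/-- RHS lower bound helper used via monotonicity; upper bound helper for NEC -/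
lemma rhs_le (hq : 0 < q) {u : ℝ → ℝ≥0∞} (hu : Measurable u) {t : ℝ} (ht : 0 < t)
    {g : ℝ → ℝ≥0∞} (hzero : ∀ s, 0 < s → s ≤ t → (∫⁻ x in Ioo (0:ℝ) s, g x) = 0)
    (G : ℝ≥0∞) (hbound : ∀ s : ℝ, (∫⁻ x in Ioo (0:ℝ) s, g x) ≤ G) :
    (∫⁻ s in Ioi (0:ℝ), (∫⁻ x in Ioo (0:ℝ) s, g x) ^ q * u s ^ q)
      ≤ G ^ q * ∫⁻ x in Ioi t, u x ^ q := by
  have hsplit : Ioi (0:ℝ) = Ioc 0 t ∪ Ioi t := (Ioc_union_Ioi_eq_Ioi ht.le).symm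
  rw [hsplit]
  rw [lintegral_union measurableSet_Ioi Ioc_disjoint_Ioi_same]
  have h1 : (∫⁻ s in Ioc (0:ℝ) t, (∫⁻ x in Ioo (0:ℝ) s, g x) ^ q * u s ^ q) = 0 := by
    rw [← lintegral_zero (μ := volume.restrict (Ioc (0:ℝ) t))]
    apply setLIntegral_congr_fun measurableSet_Ioc
    intro s hs
    beta_reduce
    rw [hzero s hs.1 hs.2, ENNReal.zero_rpow_of_pos hq, zero_mul]
  rw [h1, zero_add]
  calc (∫⁻ s in Ioi t, (∫⁻ x in Ioo (0:ℝ) s, g x) ^ q * u s ^ q)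
      ≤ ∫⁻ s in Ioi t, G ^ q * u s ^ q := by
        apply setLIntegral_mono (by exact (measurable_const (a := G ^ q)).mul (hu.pow_const q))
        intro s _
        exact mul_le_mul_left (ENNReal.rpow_le_rpow (hbound s) hq.le) _
    _ = G ^ q * ∫⁻ x in Ioi t, u x ^ q := lintegral_const_mul _ (hu.pow_const q)


lemma block_holder (hp : 0 < p) (hp1 : p ≤ 1) {g w : ℝ → ℝ≥0∞}
    (hg : Measurable g) (hw : Measurable w) {t : ℝ} {s : Set ℝ}
    (hs : MeasurableSet s) (hsub : s ⊆ Ioi t) :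
    ∫⁻ x in s, g x ^ p * w x ^ p ≤ (∫⁻ x in s, g x) ^ p * Wf p w t ^ p := by
  by_cases hp1' : p = 1
  · subst hp1'
    simp only [ENNReal.rpow_one, Wf, if_pos rfl]
    set E := essSup w (volume.restrict (Ioi t)) with hE
    have hae : ∀ᵐ x ∂(volume.restrict s), w x ≤ E :=
      ae_restrict_of_ae_restrict_of_subset hsub (ae_le_essSup w)
    calc ∫⁻ x in s, g x * w x ≤ ∫⁻ x in s, g x * E := by
          apply lintegral_mono_ae
          filter_upwards [hae] with x hx
          exact mul_le_mul_right hx _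
      _ = (∫⁻ x in s, g x) * E := lintegral_mul_const E hg
  · have hplt : p < 1 := lt_of_le_of_ne hp1 hp1'
    have h1p : 0 < 1 - p := by linarith
    have hconj : (1/p).HolderConjugate (1/(1-p)) := by
      constructor
      · rw [one_div, inv_inv, one_div, inv_inv, inv_one]; ring
      · positivity
      · exact one_div_pos.mpr h1p
    have hfg : (fun x => g x ^ p * w x ^ p)
        = (fun x => g x ^ p) * (fun x => w x ^ p) := rfl
    rw [hfg]
    calc ∫⁻ x in s, ((fun x => g x ^ p) * fun x => w x ^ p) x
        ≤ (∫⁻ x in s, (g x ^ p) ^ (1/p)) ^ (1/(1/p)) *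
            (∫⁻ x in s, (w x ^ p) ^ (1/(1-p))) ^ (1/(1/(1-p))) :=
          ENNReal.lintegral_mul_le_Lp_mul_Lq _ hconj
            (hg.pow_const p).aemeasurable (hw.pow_const p).aemeasurable
      _ = (∫⁻ x in s, g x) ^ p * (∫⁻ x in s, w x ^ (p/(1-p))) ^ (1-p) := by
          rw [one_div_one_div, one_div_one_div]
          congr 1
          · congr 1
            apply lintegral_congr
            intro x
            rw [← ENNReal.rpow_mul, mul_one_div_cancel hp.ne', ENNReal.rpow_one]
          · congr 1
            apply lintegral_congr
            intro x
            rw [← ENNReal.rpow_mul]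
            congr 1
            field_simp
      _ ≤ (∫⁻ x in s, g x) ^ p * (∫⁻ x in Ioi t, w x ^ (p/(1-p))) ^ (1-p) := by
          gcongr
      _ = (∫⁻ x in s, g x) ^ p * Wf p w t ^ p := by
          rw [Wf, if_neg hp1', ← ENNReal.rpow_mul]
          congr 2
          field_simp

lemma suff (hq : 0 < q) (hqp : q ≤ p) (hp1 : p ≤ 1) (u w : ℝ → ℝ≥0∞)
    (hu : Measurable u) (hw : Measurable w)
    (hufin : ∀ t ∈ Ioi (0:ℝ), (∫⁻ x in Ioi t, u x ^ q) < ⊤)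
    (hC : Cq p q u w ≠ ⊤) (g : ℝ → ℝ≥0∞) (hg : Measurable g) :
    (∫⁻ x in Ioi (0:ℝ), g x ^ p * w x ^ p) ^ (1/p) ≤
      (4:ℝ≥0∞) ^ (1/q) * Cq p q u w *
        (∫⁻ t in Ioi (0:ℝ), (∫⁻ x in Ioo (0:ℝ) t, g x) ^ q * u t ^ q) ^ (1/q) := by
  have hp : 0 < p := lt_of_lt_of_le hq hqp
  have hpq1 : 1 ≤ p / q := (one_le_div hq).mpr hqp
  set R := ∫⁻ t in Ioi (0:ℝ), (∫⁻ x in Ioo (0:ℝ) t, g x) ^ q * u t ^ q with hR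
  set μu := volume.withDensity (fun x => u x ^ q) with hμu
  set μgw := volume.withDensity (fun x => g x ^ p * w x ^ p) with hμgw
  have hmuq : Measurable fun x : ℝ => u x ^ q := hu.pow_const q
  have hmgw : Measurable fun x : ℝ => g x ^ p * w x ^ p := (hg.pow_const p).mul (hw.pow_const p)
  have hUeq : ∀ t : ℝ, μu (Ioi t) = ∫⁻ x in Ioi t, u x ^ q := fun t =>
    withDensity_apply _ measurableSet_Ioi
  have hGWeq : ∀ s : Set ℝ, MeasurableSet s → μgw s = ∫⁻ x in s, g x ^ p * w x ^ p := fun s hs =>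
    withDensity_apply _ hs
  have key : ∀ a : ℝ, 0 < a →
      μgw (Ioi a) ≤ (4:ℝ≥0∞) ^ (p/q) * (Cq p q u w) ^ p * R ^ (p/q) := by
    intro a ha
    have hUafin : μu (Ioi a) ≠ ⊤ := by rw [hUeq]; exact (hufin a ha).ne
    by_cases hUa0 : μu (Ioi a) = 0
    · rw [hGWeq _ measurableSet_Ioi,
        gw_zero hq hp hp1 hw hC ha (by rw [← hUeq]; exact hUa0) g]
      exact zero_le
    · have hat : ∀ x : ℝ, μu {x} = 0 := fun x =>
        withDensity_absolutelyContinuous volume _ (measure_singleton x)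
      set s : ℕ → ℝ := hseq μu a with hs
      have hprop := hseq_prop μu hat a hUafin hUa0
      have hs0 : s 0 = a := rfl
      have hslt : ∀ k, s k < s (k+1) := fun k => (hprop k).1
      have hsU : ∀ k, μu (Ioi (s k)) = μu (Ioi a) / 2 ^ k := fun k => (hprop k).2
      have hsa : ∀ k, a ≤ s k := by
        intro k; induction k with
        | zero => exact le_of_eq hs0.symm
        | succ k ih => exact ih.trans (hslt k).le
      have hs_pos : ∀ k, 0 < s k := fun k => lt_of_lt_of_le ha (hsa k)
      set A : ℕ → ℝ≥0∞ := fun k => ∫⁻ x in Ioc (s k) (s (k+1)), g x with hA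
      set S := ∑' k, (2:ℝ≥0∞)⁻¹ ^ k * A k ^ q with hS
      -- step 1 : decomposition of the LHS
      have step1 : μgw (Ioi a) ≤ ∑' k, μgw (Ioc (s k) (s (k+1))) := by
        set T := Ioi a \ ⋃ k, Ioc (s k) (s (k+1)) with hTdef
        have hTs : ∀ x ∈ T, ∀ k, s k < x := by
          intro x hx k
          induction k with
          | zero => rw [hs0]; exact hx.1
          | succ k ih =>
            have hnot : x ∉ Ioc (s k) (s (k+1)) := fun h => hx.2 (mem_iUnion.mpr ⟨k, h⟩)
            simp only [mem_Ioc, not_and, not_le] at hnot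
            exact hnot ih
        have hT0 : μgw T = 0 := by
          rcases T.eq_empty_or_nonempty with h | ⟨x₀, hx₀⟩
          · rw [h]; exact measure_empty
          · have hbdd : BddAbove (range s) := ⟨x₀, by rintro _ ⟨k, rfl⟩; exact (hTs x₀ hx₀ k).le⟩
            set L := sSup (range s) with hL
            have hLk : ∀ k, s k ≤ L := fun k => le_csSup hbdd ⟨k, rfl⟩
            have hLpos : 0 < L := lt_of_lt_of_le (hs_pos 0) (hLk 0)
            have hUL : μu (Ioi L) = 0 := by
              by_contra h0
              have hdivne : μu (Ioi L) / μu (Ioi a) ≠ 0 :=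
                (ENNReal.div_pos h0 hUafin).ne'
              obtain ⟨n, hn⟩ := ENNReal.exists_inv_two_pow_lt hdivne
              have h1 : μu (Ioi L) ≤ μu (Ioi a) * 2⁻¹ ^ n := by
                rw [← ENNReal.inv_pow, ← div_eq_mul_inv, ← hsU n]
                exact measure_mono (Ioi_subset_Ioi (hLk n))
              have h2 : μu (Ioi a) * 2⁻¹ ^ n < μu (Ioi a) * (μu (Ioi L) / μu (Ioi a)) := by
                rw [ENNReal.mul_lt_mul_iff_right hUa0 hUafin]
                exact hn
              rw [ENNReal.mul_div_cancel hUa0 hUafin] at h2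
              exact absurd (lt_of_le_of_lt h1 h2) (lt_irrefl _)
            have hwz : (∫⁻ x in Ioi L, g x ^ p * w x ^ p) = 0 :=
              gw_zero hq hp hp1 hw hC hLpos (by rw [← hUeq]; exact hUL) g
            have hTsub : T ⊆ Ici L := by
              intro x hx
              exact csSup_le (range_nonempty s) (by rintro _ ⟨k, rfl⟩; exact (hTs x hx k).le)
            refine le_antisymm ?_ (zero_le)
            calc μgw T ≤ μgw ({L} ∪ Ioi L) := by
                  apply measure_mono
                  intro x hx
                  rcases eq_or_lt_of_le (mem_Ici.mp (hTsub hx)) with h | h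
                  · exact Or.inl h.symm
                  · exact Or.inr h
              _ ≤ μgw {L} + μgw (Ioi L) := measure_union_le _ _
              _ = 0 := by
                  rw [hGWeq _ measurableSet_Ioi, hwz,
                    withDensity_absolutelyContinuous volume _ (measure_singleton L), add_zero]
        calc μgw (Ioi a) ≤ μgw ((⋃ k, Ioc (s k) (s (k+1))) ∪ T) := by
              apply measure_mono
              intro x hx
              by_cases h : x ∈ ⋃ k, Ioc (s k) (s (k+1))
              · exact Or.inl h
              · exact Or.inr ⟨hx, h⟩
          _ ≤ μgw (⋃ k, Ioc (s k) (s (k+1))) + μgw T := measure_union_le _ _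
          _ = μgw (⋃ k, Ioc (s k) (s (k+1))) := by rw [hT0, add_zero]
          _ ≤ ∑' k, μgw (Ioc (s k) (s (k+1))) := measure_iUnion_le _
      -- step 2 : Hölder block bound
      have step2 : ∀ k, μgw (Ioc (s k) (s (k+1))) ≤
          (Cq p q u w) ^ p * ((2:ℝ≥0∞)⁻¹ ^ k * A k ^ q) ^ (p/q) * (μu (Ioi a)) ^ (p/q) := by
        intro k
        have hU0k : μu (Ioi (s k)) ≠ 0 := by
          rw [hsU]
          simp only [ne_eq, ENNReal.div_eq_zero_iff, not_or]
          exact ⟨hUa0, by simp⟩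
        have hUtk : μu (Ioi (s k)) ≠ ⊤ := by
          rw [hsU]; exact (ENNReal.div_lt_top hUafin (by positivity)).ne
        have hblock : μgw (Ioc (s k) (s (k+1))) ≤ A k ^ p * Wf p w (s k) ^ p := by
          rw [hGWeq _ measurableSet_Ioc]
          exact block_holder hp hp1 hg hw measurableSet_Ioc Ioc_subset_Ioi_self
        have hwle : Wf p w (s k) ≤ Cq p q u w * (μu (Ioi (s k))) ^ (1/q) := by
          rw [hUeq]
          apply Wf_le hq (hs_pos k)
          · rw [← hUeq]; exact hU0k
          · rw [← hUeq]; exact hUtk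
        calc μgw (Ioc (s k) (s (k+1))) ≤ A k ^ p * Wf p w (s k) ^ p := hblock
          _ ≤ A k ^ p * (Cq p q u w * (μu (Ioi (s k))) ^ (1/q)) ^ p := by
              gcongr
          _ = (Cq p q u w) ^ p * ((2:ℝ≥0∞)⁻¹ ^ k * A k ^ q) ^ (p/q) * (μu (Ioi a)) ^ (p/q) := by
              have h1 : (Cq p q u w * μu (Ioi (s k)) ^ (1/q)) ^ p
                  = Cq p q u w ^ p * (μu (Ioi a) ^ (p/q)) * ((2:ℝ≥0∞)⁻¹ ^ k) ^ (p/q) := by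
                rw [ENNReal.mul_rpow_of_nonneg _ _ hp.le, ← ENNReal.rpow_mul, hsU k,
                  ENNReal.div_rpow_of_nonneg _ _ (by positivity : (0:ℝ) ≤ 1/q*p),
                  div_eq_mul_inv, ← ENNReal.inv_rpow, ← ENNReal.inv_pow,
                  (show 1/q*p = p/q by ring), mul_assoc]
              have h2 : ((2:ℝ≥0∞)⁻¹ ^ k * A k ^ q) ^ (p/q)
                  = ((2:ℝ≥0∞)⁻¹ ^ k) ^ (p/q) * A k ^ p := by
                rw [ENNReal.mul_rpow_of_nonneg _ _ (by positivity : (0:ℝ) ≤ p/q),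
                  ← ENNReal.rpow_mul, (show q * (p/q) = p by field_simp)]
              rw [h1, h2]; ring
      -- step 3 : lower bound for R
      have hFmeas : Measurable fun t : ℝ => ∫⁻ x in Ioo (0:ℝ) t, g x := F_measurable g
      have hmeasInt : Measurable fun t : ℝ => (∫⁻ x in Ioo (0:ℝ) t, g x) ^ q * u t ^ q :=
        (hFmeas.pow_const q).mul (hu.pow_const q)
      have step3 : (μu (Ioi a) / 4) * S ≤ R := by
        have hsm : StrictMono s := strictMono_nat_of_lt_succ hslt
        have hdisj : Pairwise (Function.onFun Disjoint fun j : ℕ => Ioc (s (j+1)) (s (j+2))) := by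
          have hkey : ∀ i j : ℕ, i < j →
              Disjoint (Ioc (s (i+1)) (s (i+2))) (Ioc (s (j+1)) (s (j+2))) := by
            intro i j hij
            apply Ioc_disjoint_Ioc.mpr
            have h1 : s (i+2) ≤ s (j+1) := hsm.le_iff_le.mpr (by omega)
            calc min (s (i+2)) (s (j+2)) ≤ s (i+2) := min_le_left _ _
              _ ≤ s (j+1) := h1
              _ ≤ max (s (i+1)) (s (j+1)) := le_max_right _ _
          intro i j hij
          rcases hij.lt_or_gt with h | h
          · exact hkey i j h
          · exact (hkey j i h).symm
        have hblock3 : ∀ j : ℕ, A j ^ q * (μu (Ioi a) / 2 ^ (j+2)) ≤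
            ∫⁻ t in Ioc (s (j+1)) (s (j+2)), (∫⁻ x in Ioo (0:ℝ) t, g x) ^ q * u t ^ q := by
          intro j
          have hfin2 : μu (Ioi (s (j+2))) ≠ ⊤ := by
            rw [hsU]; exact (ENNReal.div_lt_top hUafin (by positivity)).ne
          have hmass : μu (Ioc (s (j+1)) (s (j+2))) = μu (Ioi a) / 2 ^ (j+2) := by
            rw [← Ioi_diff_Ioi, measure_diff (Ioi_subset_Ioi (hslt (j+1)).le)
              measurableSet_Ioi.nullMeasurableSet hfin2, hsU, hsU]
            exact half_sub hUafin (j+1)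
          have hμIoc : μu (Ioc (s (j+1)) (s (j+2))) =
              ∫⁻ t in Ioc (s (j+1)) (s (j+2)), u t ^ q := withDensity_apply _ measurableSet_Ioc
          calc A j ^ q * (μu (Ioi a) / 2 ^ (j+2))
              = ∫⁻ t in Ioc (s (j+1)) (s (j+2)), A j ^ q * u t ^ q := by
                rw [lintegral_const_mul _ (hu.pow_const q), ← hμIoc, hmass]
            _ ≤ ∫⁻ t in Ioc (s (j+1)) (s (j+2)), (∫⁻ x in Ioo (0:ℝ) t, g x) ^ q * u t ^ q := by
                apply setLIntegral_mono hmeasInt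
                intro t ht
                have hsub2 : Ioc (s j) (s (j+1)) ⊆ Ioo (0:ℝ) t := by
                  intro y hy
                  exact ⟨lt_trans (hs_pos j) hy.1, lt_of_le_of_lt hy.2 ht.1⟩
                exact mul_le_mul_left (ENNReal.rpow_le_rpow (lintegral_mono_set hsub2) hq.le) _
        have hterm : ∀ j : ℕ, (μu (Ioi a) / 4) * ((2:ℝ≥0∞)⁻¹ ^ j * A j ^ q)
            = A j ^ q * (μu (Ioi a) / 2 ^ (j+2)) := by
          intro j
          have h4 : μu (Ioi a) / 2 ^ (j+2) = (μu (Ioi a) / 4) * (2:ℝ≥0∞)⁻¹ ^ j := by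
            rw [div_eq_mul_inv, div_eq_mul_inv,
              (show (2:ℝ≥0∞) ^ (j+2) = 4 * 2 ^ j by rw [pow_add]; ring),
              ENNReal.mul_inv (Or.inl (by norm_num)) (Or.inl (by norm_num)),
              ENNReal.inv_pow, mul_assoc]
          rw [h4]; ring
        calc (μu (Ioi a) / 4) * S = ∑' j, (μu (Ioi a) / 4) * ((2:ℝ≥0∞)⁻¹ ^ j * A j ^ q) :=
              ENNReal.tsum_mul_left.symm
          _ = ∑' j, A j ^ q * (μu (Ioi a) / 2 ^ (j+2)) := tsum_congr hterm
          _ ≤ ∑' j, ∫⁻ t in Ioc (s (j+1)) (s (j+2)), (∫⁻ x in Ioo (0:ℝ) t, g x) ^ q * u t ^ q :=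
              ENNReal.tsum_le_tsum hblock3
          _ = ∫⁻ t in ⋃ j : ℕ, Ioc (s (j+1)) (s (j+2)), (∫⁻ x in Ioo (0:ℝ) t, g x) ^ q * u t ^ q :=
              (lintegral_iUnion (fun j => measurableSet_Ioc) hdisj _).symm
          _ ≤ R := by
              apply lintegral_mono_set
              intro x hx
              obtain ⟨j, hj⟩ := mem_iUnion.mp hx
              exact lt_trans (hs_pos (j+1)) hj.1
      -- combine
      set Ca := Cq p q u w with hCa
      set d := (μu (Ioi a) / 4) ^ (p/q) with hd
      have hd0 : d ≠ 0 := by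
        rw [hd, ne_eq, rpow_eq_zero_iff_pos (by positivity)]
        exact (ENNReal.div_pos hUa0 (by norm_num)).ne'
      have hdt : d ≠ ⊤ := by
        rw [hd]
        exact ENNReal.rpow_ne_top_of_nonneg (by positivity)
          (ENNReal.div_lt_top hUafin (by norm_num)).ne
      have hμad : (μu (Ioi a)) ^ (p/q) = d * (4:ℝ≥0∞) ^ (p/q) := by
        rw [hd, ← ENNReal.mul_rpow_of_nonneg _ _ (by positivity : (0:ℝ) ≤ p/q),
          ENNReal.div_mul_cancel (by norm_num) (by norm_num)]
      have hmain : μgw (Ioi a) * d ≤ ((4:ℝ≥0∞) ^ (p/q) * Ca ^ p * R ^ (p/q)) * d := by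
        calc μgw (Ioi a) * d ≤ (∑' k, μgw (Ioc (s k) (s (k+1)))) * d := mul_le_mul_left step1 _
          _ ≤ (∑' k, Ca ^ p * ((2:ℝ≥0∞)⁻¹ ^ k * A k ^ q) ^ (p/q) * (μu (Ioi a)) ^ (p/q)) * d :=
              mul_le_mul_left (ENNReal.tsum_le_tsum step2) _
          _ = (Ca ^ p * (μu (Ioi a)) ^ (p/q) * ∑' k, ((2:ℝ≥0∞)⁻¹ ^ k * A k ^ q) ^ (p/q)) * d := by
              congr 1
              rw [← ENNReal.tsum_mul_left]
              apply tsum_congr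
              intro k; ring
          _ ≤ (Ca ^ p * (μu (Ioi a)) ^ (p/q) * S ^ (p/q)) * d := by
              gcongr
              exact tsum_rpow_le _ hpq1
          _ = Ca ^ p * (μu (Ioi a)) ^ (p/q) * (d * S ^ (p/q)) := by ring
          _ = Ca ^ p * (μu (Ioi a)) ^ (p/q) * ((μu (Ioi a) / 4 * S) ^ (p/q)) := by
              rw [ENNReal.mul_rpow_of_nonneg _ _ (by positivity : (0:ℝ) ≤ p/q)]
          _ ≤ Ca ^ p * (μu (Ioi a)) ^ (p/q) * R ^ (p/q) := by
              gcongr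
          _ = ((4:ℝ≥0∞) ^ (p/q) * Ca ^ p * R ^ (p/q)) * d := by
              rw [hμad]; ring
      exact (ENNReal.mul_le_mul_iff_left hd0 hdt).mp hmain
  -- conclude from `key` by monotone convergence along `a = 1/(n+1)`
  have hcover : Ioi (0:ℝ) = ⋃ n : ℕ, Ioi (1/(n+1) : ℝ) := by
    ext x
    simp only [mem_Ioi, mem_iUnion]
    constructor
    · intro hx
      obtain ⟨n, hn⟩ := exists_nat_one_div_lt hx
      exact ⟨n, hn⟩
    · rintro ⟨n, hn⟩
      have : (0:ℝ) < 1/((n:ℝ)+1) := by positivity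
      linarith
  have hmon : Monotone fun n : ℕ => Ioi (1/(n+1) : ℝ) := by
    intro m n hmn
    apply Ioi_subset_Ioi
    apply one_div_le_one_div_of_le
    · positivity
    · have : (m:ℝ) ≤ n := by exact_mod_cast hmn
      linarith
  have hle0 : μgw (Ioi (0:ℝ)) ≤ (4:ℝ≥0∞) ^ (p/q) * (Cq p q u w) ^ p * R ^ (p/q) := by
    rw [hcover, hmon.measure_iUnion]
    exact iSup_le fun n => key _ (by positivity)
  calc (∫⁻ x in Ioi (0:ℝ), g x ^ p * w x ^ p) ^ (1/p) = (μgw (Ioi (0:ℝ))) ^ (1/p) := by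
        rw [hGWeq _ measurableSet_Ioi]
    _ ≤ ((4:ℝ≥0∞) ^ (p/q) * (Cq p q u w) ^ p * R ^ (p/q)) ^ (1/p) :=
        ENNReal.rpow_le_rpow hle0 (by positivity)
    _ = (4:ℝ≥0∞) ^ (1/q) * Cq p q u w * R ^ (1/q) := by
        rw [ENNReal.mul_rpow_of_nonneg _ _ (by positivity : (0:ℝ) ≤ 1/p),
          ENNReal.mul_rpow_of_nonneg _ _ (by positivity : (0:ℝ) ≤ 1/p),
          ← ENNReal.rpow_mul, ← ENNReal.rpow_mul, ← ENNReal.rpow_mul,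
          (show p/q * (1/p) = 1/q by field_simp),
          (show p * (1/p) = 1 by field_simp), ENNReal.rpow_one]

lemma indicator_parts {t : ℝ} {S : Set ℝ} (hS : MeasurableSet S) (hsub : S ⊆ Ioi t)
    (f : ℝ → ℝ≥0∞) :
    (∀ s, s ≤ t → (∫⁻ x in Ioo (0:ℝ) s, S.indicator f x) = 0) ∧
    (∀ s : ℝ, (∫⁻ x in Ioo (0:ℝ) s, S.indicator f x) ≤ ∫⁻ x in S, f x) := by
  constructor
  · intro s hs
    rw [lintegral_indicator hS, Measure.restrict_restrict hS]
    have hempty : S ∩ Ioo 0 s = ∅ := by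
      ext x
      simp only [mem_inter_iff, mem_Ioo, mem_empty_iff_false, iff_false, not_and]
      intro hxS h0x
      intro hxs
      exact absurd (lt_of_lt_of_le (lt_trans (hsub hxS) hxs) hs) (lt_irrefl t)
    rw [hempty]
    simp
  · intro s
    rw [lintegral_indicator hS, Measure.restrict_restrict hS]
    exact lintegral_mono_set inter_subset_left

lemma lhs_indicator (hp : 0 < p) {t : ℝ} (ht : 0 < t) {S : Set ℝ} (hS : MeasurableSet S)
    (hsub : S ⊆ Ioi t) (f w : ℝ → ℝ≥0∞) :
    (∫⁻ x in Ioi (0:ℝ), (S.indicator f x) ^ p * w x ^ p) = ∫⁻ x in S, f x ^ p * w x ^ p := by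
  have hpt : ∀ x, (S.indicator f x) ^ p * w x ^ p
      = S.indicator (fun y => f y ^ p * w y ^ p) x := by
    intro x
    by_cases hx : x ∈ S
    · rw [indicator_of_mem hx, indicator_of_mem hx]
    · rw [indicator_of_notMem hx, indicator_of_notMem hx,
        ENNReal.zero_rpow_of_pos hp, zero_mul]
  simp_rw [hpt]
  have hSsub0 : S ⊆ Ioi (0:ℝ) := fun x hx => lt_trans ht (hsub hx)
  rw [lintegral_indicator hS, Measure.restrict_restrict hS,
    inter_eq_self_of_subset_left hSsub0]

lemma exists_finite_piece {t : ℝ} {S : Set ℝ} (hsub : S ⊆ Ioi t) (hv : volume S ≠ 0) :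
    ∃ n : ℕ, volume (S ∩ Ioc t (t + n + 1)) ≠ 0 ∧ volume (S ∩ Ioc t (t + n + 1)) ≠ ⊤ := by
  have hfin : ∀ n : ℕ, volume (S ∩ Ioc t (t + n + 1)) ≠ ⊤ := by
    intro n
    refine (lt_of_le_of_lt (measure_mono inter_subset_right) ?_).ne
    rw [Real.volume_Ioc]
    exact ENNReal.ofReal_lt_top
  have hmono : Monotone fun n : ℕ => S ∩ Ioc t (t + n + 1) := by
    intro m n hmn
    apply inter_subset_inter_right
    apply Ioc_subset_Ioc le_rfl
    have : (m:ℝ) ≤ n := by exact_mod_cast hmn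
    linarith
  have hcup : S = ⋃ n : ℕ, S ∩ Ioc t (t + n + 1) := by
    ext x
    simp only [mem_iUnion, mem_inter_iff]
    constructor
    · intro hx
      obtain ⟨n, hn⟩ := exists_nat_gt (x - t - 1)
      exact ⟨n, hx, ⟨hsub hx, by linarith⟩⟩
    · rintro ⟨n, hn, _⟩
      exact hn
  by_contra hcon
  push_neg at hcon
  apply hv
  rw [hcup, hmono.measure_iUnion]
  simp only [ENNReal.iSup_eq_zero]
  intro n
  by_contra h0
  exact hfin n (hcon n h0)

lemma rhs_pow_le (hq : 0 < q) {u : ℝ → ℝ≥0∞} (hu : Measurable u) {t : ℝ} (ht : 0 < t)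
    {g : ℝ → ℝ≥0∞} (hzero : ∀ s, 0 < s → s ≤ t → (∫⁻ x in Ioo (0:ℝ) s, g x) = 0)
    (G : ℝ≥0∞) (hbound : ∀ s : ℝ, (∫⁻ x in Ioo (0:ℝ) s, g x) ≤ G) :
    (∫⁻ s in Ioi (0:ℝ), (∫⁻ x in Ioo (0:ℝ) s, g x) ^ q * u s ^ q) ^ (1/q)
      ≤ G * (∫⁻ x in Ioi t, u x ^ q) ^ (1/q) := by
  refine (ENNReal.rpow_le_rpow (rhs_le hq hu ht hzero G hbound) (by positivity)).trans_eq ?_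
  rw [ENNReal.mul_rpow_of_nonneg _ _ (by positivity), ← ENNReal.rpow_mul,
    mul_one_div_cancel hq.ne', ENNReal.rpow_one]

lemma nec (hq : 0 < q) (hqp : q ≤ p) (hp1 : p ≤ 1) (u w : ℝ → ℝ≥0∞)
    (hu : Measurable u) (hw : Measurable w)
    (hufin : ∀ t ∈ Ioi (0:ℝ), (∫⁻ x in Ioi t, u x ^ q) < ⊤) :
    Cq p q u w ≤ ⨆ g : {g : ℝ → ℝ≥0∞ // Measurable g},
      (∫⁻ x in Ioi (0:ℝ), g.1 x ^ p * w x ^ p) ^ (1/p) /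
        (∫⁻ s in Ioi (0:ℝ), (∫⁻ x in Ioo (0:ℝ) s, g.1 x) ^ q * u s ^ q) ^ (1/q) := by
  have hp : 0 < p := lt_of_lt_of_le hq hqp
  set J := ⨆ g : {g : ℝ → ℝ≥0∞ // Measurable g},
      (∫⁻ x in Ioi (0:ℝ), g.1 x ^ p * w x ^ p) ^ (1/p) /
        (∫⁻ s in Ioi (0:ℝ), (∫⁻ x in Ioo (0:ℝ) s, g.1 x) ^ q * u s ^ q) ^ (1/q) with hJ
  rw [Cq]
  apply iSup₂_le
  intro t ht
  rw [mem_Ioi] at ht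
  have hUtfin : (∫⁻ x in Ioi t, u x ^ q) ≠ ⊤ := (hufin t ht).ne
  set Y := (∫⁻ x in Ioi t, u x ^ q) ^ (1/q) with hY
  have hYt : Y ≠ ⊤ := ENNReal.rpow_ne_top_of_nonneg (by positivity) hUtfin
  by_cases hU0 : (∫⁻ x in Ioi t, u x ^ q) = 0
  · -- degenerate : u vanishes beyond t
    by_cases hW0 : Wf p w t = 0
    · rw [hW0, zero_mul]; exact zero_le
    · set g : ℝ → ℝ≥0∞ := (Ioi t).indicator (fun _ => (⊤:ℝ≥0∞)) with hg
      have hgm : Measurable g := measurable_const.indicator measurableSet_Ioi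
      have hparts := indicator_parts (t := t) measurableSet_Ioi subset_rfl (fun _ => (⊤:ℝ≥0∞))
      have hRHS : (∫⁻ s in Ioi (0:ℝ), (∫⁻ x in Ioo (0:ℝ) s, g x) ^ q * u s ^ q) = 0 := by
        refine le_antisymm ?_ (zero_le)
        have := rhs_le hq hu ht (fun s _ hs => hparts.1 s hs) ⊤ (fun s => le_top)
        rwa [hU0, mul_zero] at this
      have hLHS : (∫⁻ x in Ioi (0:ℝ), g x ^ p * w x ^ p) = ⊤ := by
        rw [hg, lhs_indicator hp ht measurableSet_Ioi subset_rfl _ w]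
        have h1 : ∀ x : ℝ, (⊤:ℝ≥0∞) ^ p * w x ^ p = ⊤ * w x ^ p := by
          intro x; rw [ENNReal.top_rpow_of_pos hp]
        calc (∫⁻ x in Ioi t, (⊤:ℝ≥0∞) ^ p * w x ^ p) = ⊤ * ∫⁻ x in Ioi t, w x ^ p := by
              simp_rw [h1]; exact lintegral_const_mul _ (hw.pow_const p)
          _ = ⊤ := ENNReal.top_mul (int_wp_pos hp hp1 hw hW0)
      have htop : (⊤:ℝ≥0∞) ≤ J := by
        refine le_iSup_of_le ⟨g, hgm⟩ ?_
        rw [hLHS, hRHS, ENNReal.top_rpow_of_pos (by positivity),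
          ENNReal.zero_rpow_of_pos (by positivity), ENNReal.div_zero (by simp)]
      exact le_top.trans htop
  · have hY0 : Y ≠ 0 := by
      rw [hY, ne_eq, rpow_eq_zero_iff_pos (by positivity)]; exact hU0
    have hYi0 : Y⁻¹ ≠ 0 := ENNReal.inv_ne_zero.mpr hYt
    have hYit : Y⁻¹ ≠ ⊤ := ENNReal.inv_ne_top.mpr hY0
    by_cases hp1' : p = 1
    · -- p = 1 : essential supremum
      subst hp1'
      rw [Wf, if_pos rfl]
      rw [← ENNReal.le_div_iff_mul_le (Or.inl hYi0) (Or.inl hYit)]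
      apply le_of_forall_lt_imp_le_of_dense
      intro lam hlam
      rw [ENNReal.le_div_iff_mul_le (Or.inl hYi0) (Or.inl hYit)]
      -- find a finite positive piece where `lam < w`
      have hpos : volume (Ioi t ∩ {x | lam < w x}) ≠ 0 := by
        intro h0
        have hae : ∀ᵐ x ∂(volume.restrict (Ioi t)), w x ≤ lam := by
          rw [ae_iff]
          rw [Measure.restrict_apply' measurableSet_Ioi]
          simp only [not_le]
          rwa [inter_comm] at h0
        exact absurd (essSup_le_of_ae_le lam hae) (not_le.mpr hlam)
      obtain ⟨n, hn0, hnt⟩ := exists_finite_piece inter_subset_left hpos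
      set S := (Ioi t ∩ {x | lam < w x}) ∩ Ioc t (t + n + 1) with hSdef
      have hSm : MeasurableSet S :=
        ((measurableSet_Ioi.inter (measurableSet_lt measurable_const hw)).inter measurableSet_Ioc)
      have hSsub : S ⊆ Ioi t := fun x hx => hx.1.1
      set g : ℝ → ℝ≥0∞ := S.indicator (fun _ => (1:ℝ≥0∞)) with hg
      have hgm : Measurable g := measurable_const.indicator hSm
      have hparts := indicator_parts (t := t) hSm hSsub (fun _ => (1:ℝ≥0∞))
      have hG : (∫⁻ x in S, (1:ℝ≥0∞)) = volume S := setLIntegral_one S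
      have hLHS : lam * volume S ≤ (∫⁻ x in Ioi (0:ℝ), g x ^ (1:ℝ) * w x ^ (1:ℝ)) ^ (1/(1:ℝ)) := by
        rw [hg, lhs_indicator one_pos ht hSm hSsub _ w]
        have hmono2 : lam * volume S ≤ ∫⁻ x in S, (1:ℝ≥0∞) ^ (1:ℝ) * w x ^ (1:ℝ) := by
          rw [← setLIntegral_const S lam]
          apply setLIntegral_mono (Measurable.mul measurable_const (hw.pow_const 1))
          intro x hx
          simp only [Pi.mul_apply, ENNReal.one_rpow, one_mul, ENNReal.rpow_one]
          exact (hx.1.2).le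
        calc lam * volume S ≤ ∫⁻ x in S, (1:ℝ≥0∞) ^ (1:ℝ) * w x ^ (1:ℝ) := hmono2
          _ = (∫⁻ x in S, (1:ℝ≥0∞) ^ (1:ℝ) * w x ^ (1:ℝ)) ^ (1/(1:ℝ)) := by
              rw [one_div_one]
              exact (ENNReal.rpow_one _).symm
      have hRHS : (∫⁻ s in Ioi (0:ℝ), (∫⁻ x in Ioo (0:ℝ) s, g x) ^ q * u s ^ q) ^ (1/q)
          ≤ volume S * Y := by
        rw [hY]
        apply rhs_pow_le hq hu ht (fun s _ hs => hparts.1 s hs) (volume S)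
        intro s
        exact (hparts.2 s).trans_eq hG
      have hstep : (lam * volume S) / (volume S * Y) ≤ J := by
        refine le_iSup_of_le ⟨g, hgm⟩ ?_
        exact ENNReal.div_le_div hLHS hRHS
      have heq : (lam * volume S) / (volume S * Y) = lam * Y⁻¹ := by
        rw [div_eq_mul_inv, ENNReal.mul_inv (Or.inl hn0) (Or.inr hY0), mul_assoc,
          ← mul_assoc (volume S), ENNReal.mul_inv_cancel hn0 hnt, one_mul]
      rw [← heq]
      exact hstep
    · -- p < 1
      have hplt : p < 1 := lt_of_le_of_ne hp1 hp1'
      have h1p : 0 < 1 - p := by linarith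
      have hpp' : 0 < p / (1-p) := div_pos hp h1p
      have hr : 0 < (1-p)/p := div_pos h1p hp
      rw [Wf, if_neg hp1']
      set P := Ioi t ∩ {x | w x = ⊤} with hPdef
      have hPm : MeasurableSet P := measurableSet_Ioi.inter (hw (measurableSet_singleton ⊤))
      by_cases hPv : volume P = 0
      · -- truncation along `E n`
        set E : ℕ → Set ℝ := fun n => Ioc t (t + n + 1) ∩ {x | w x ≤ (n:ℝ≥0∞)} with hEdef
        have hEm : ∀ n, MeasurableSet (E n) := fun n =>
          measurableSet_Ioc.inter (measurableSet_le hw measurable_const)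
        have hEsub : ∀ n, E n ⊆ Ioi t := fun n x hx => hx.1.1
        have hEmono : Monotone E := by
          intro m n hmn x hx
          have h1 : (m:ℝ) ≤ n := by exact_mod_cast hmn
          have h2 : ((m:ℕ):ℝ≥0∞) ≤ n := by exact_mod_cast hmn
          exact ⟨⟨hx.1.1, hx.1.2.trans (by linarith)⟩, hx.2.trans h2⟩
        set Φ : ℕ → ℝ≥0∞ := fun n => ∫⁻ x in E n, w x ^ (p/(1-p)) with hΦdef
        have hΦfin : ∀ n, Φ n ≠ ⊤ := by
          intro n
          have hb : Φ n ≤ ((n:ℝ≥0∞) ^ (p/(1-p))) * volume (E n) := by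
            rw [hΦdef]
            calc (∫⁻ x in E n, w x ^ (p/(1-p)))
                ≤ ∫⁻ _x in E n, ((n:ℝ≥0∞) ^ (p/(1-p))) := by
                  apply setLIntegral_mono measurable_const
                  intro x hx
                  exact ENNReal.rpow_le_rpow hx.2 hpp'.le
              _ = ((n:ℝ≥0∞) ^ (p/(1-p))) * volume (E n) := setLIntegral_const _ _
          refine (lt_of_le_of_lt hb ?_).ne
          apply ENNReal.mul_lt_top
          · exact (ENNReal.rpow_lt_top_of_nonneg hpp'.le (ENNReal.natCast_ne_top n))
          · refine lt_of_le_of_lt (measure_mono (inter_subset_left.trans Ioc_subset_Icc_self)) ?_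
            rw [Real.volume_Icc]
            exact ENNReal.ofReal_lt_top
        have hkey : ∀ n, Φ n ^ ((1-p)/p) * Y⁻¹ ≤ J := by
          intro n
          by_cases hΦ0 : Φ n = 0
          · rw [hΦ0, ENNReal.zero_rpow_of_pos hr, zero_mul]; exact zero_le
          · set g : ℝ → ℝ≥0∞ := (E n).indicator (fun x => w x ^ (p/(1-p))) with hg
            have hgm : Measurable g := (hw.pow_const _).indicator (hEm n)
            have hparts := indicator_parts (t := t) (hEm n) (hEsub n) (fun x => w x ^ (p/(1-p)))
            have hexp : ∀ x : ℝ, (w x ^ (p/(1-p))) ^ p * w x ^ p = w x ^ (p/(1-p)) := by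
              intro x
              rw [← ENNReal.rpow_mul, ← ENNReal.rpow_add_of_nonneg _ _
                (by positivity : (0:ℝ) ≤ p/(1-p) * p) hp.le]
              congr 1
              field_simp
              ring
            have hLHS : (∫⁻ x in Ioi (0:ℝ), g x ^ p * w x ^ p) = Φ n := by
              rw [hg, lhs_indicator hp ht (hEm n) (hEsub n) _ w, hΦdef]
              apply lintegral_congr
              intro x
              exact hexp x
            have hRHS : (∫⁻ s in Ioi (0:ℝ), (∫⁻ x in Ioo (0:ℝ) s, g x) ^ q * u s ^ q) ^ (1/q)
                ≤ Φ n * Y := by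
              rw [hY]
              apply rhs_pow_le hq hu ht (fun s _ hs => hparts.1 s hs) (Φ n)
              intro s
              exact hparts.2 s
            have hstep : Φ n ^ (1/p) / (Φ n * Y) ≤ J := by
              refine le_iSup_of_le ⟨g, hgm⟩ ?_
              apply ENNReal.div_le_div _ hRHS
              rw [hLHS]
            have heq : Φ n ^ (1/p) / (Φ n * Y) = Φ n ^ ((1-p)/p) * Y⁻¹ := by
              rw [div_eq_mul_inv, ENNReal.mul_inv (Or.inl hΦ0) (Or.inr hY0), ← mul_assoc]
              congr 1
              rw [show (1-p)/p = 1/p + (-1) by field_simp; ring,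
                ENNReal.rpow_add _ _ hΦ0 (hΦfin n), ENNReal.rpow_neg_one]
            rw [← heq]
            exact hstep
        -- pass to the limit
        set νw := volume.withDensity (fun x => w x ^ (p/(1-p))) with hνw
        have hΦeq : ∀ n, Φ n = νw (E n) := fun n => (withDensity_apply _ (hEm n)).symm
        have hIoit : (∫⁻ x in Ioi t, w x ^ (p/(1-p))) = νw (⋃ n, E n) := by
          rw [show (∫⁻ x in Ioi t, w x ^ (p/(1-p))) = νw (Ioi t) from
            (withDensity_apply _ measurableSet_Ioi).symm]
          apply le_antisymm ?_ (measure_mono (iUnion_subset hEsub))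
          have hsub : Ioi t ⊆ (⋃ n, E n) ∪ P := by
            intro x hx
            by_cases hwx : w x = ⊤
            · exact Or.inr ⟨hx, hwx⟩
            · left
              obtain ⟨m1, hm1⟩ := ENNReal.exists_nat_gt hwx
              obtain ⟨m2, hm2⟩ := exists_nat_gt (x - t - 1)
              refine mem_iUnion.mpr ⟨max m1 m2, ⟨hx, ?_⟩, ?_⟩
              · have : (m2:ℝ) ≤ (max m1 m2 : ℕ) := by exact_mod_cast le_max_right m1 m2
                linarith
              · refine hm1.le.trans ?_
                exact_mod_cast le_max_left m1 m2
          calc νw (Ioi t) ≤ νw ((⋃ n, E n) ∪ P) := measure_mono hsub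
            _ ≤ νw (⋃ n, E n) + νw P := measure_union_le _ _
            _ = νw (⋃ n, E n) := by
                rw [withDensity_absolutelyContinuous volume _ hPv, add_zero]
        have hΦlim : Filter.Tendsto Φ Filter.atTop
            (nhds ((∫⁻ x in Ioi t, w x ^ (p/(1-p))))) := by
          have hmonoΦ : Monotone Φ := fun m n hmn => lintegral_mono_set (hEmono hmn)
          have heq2 : (∫⁻ x in Ioi t, w x ^ (p/(1-p))) = ⨆ n, Φ n := by
            rw [hIoit, hEmono.measure_iUnion]
            exact iSup_congr fun n => (hΦeq n).symm
          rw [heq2]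
          exact tendsto_atTop_iSup hmonoΦ
        have hlimit : Filter.Tendsto (fun n => Φ n ^ ((1-p)/p) * Y⁻¹) Filter.atTop
            (nhds ((∫⁻ x in Ioi t, w x ^ (p/(1-p))) ^ ((1-p)/p) * Y⁻¹)) := by
          apply ENNReal.Tendsto.mul_const
          · exact (ENNReal.continuous_rpow_const.tendsto _).comp hΦlim
          · exact Or.inr hYit
        exact le_of_tendsto hlimit (Filter.Eventually.of_forall hkey)
      · -- `w = ⊤` on a positive-measure set : `J = ⊤`
        obtain ⟨n, hn0, hnt⟩ := exists_finite_piece (show P ⊆ Ioi t from fun x hx => hx.1) hPv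
        set S := P ∩ Ioc t (t + n + 1) with hSdef
        have hSm : MeasurableSet S := hPm.inter measurableSet_Ioc
        have hSsub : S ⊆ Ioi t := fun x hx => hx.1.1
        set g : ℝ → ℝ≥0∞ := S.indicator (fun _ => (1:ℝ≥0∞)) with hg
        have hgm : Measurable g := measurable_const.indicator hSm
        have hparts := indicator_parts (t := t) hSm hSsub (fun _ => (1:ℝ≥0∞))
        have hLHS : (∫⁻ x in Ioi (0:ℝ), g x ^ p * w x ^ p) = ⊤ := by
          rw [hg, lhs_indicator hp ht hSm hSsub _ w]
          have hpt : ∀ x ∈ S, (1:ℝ≥0∞) ^ p * w x ^ p = ⊤ := by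
            intro x hx
            rw [ENNReal.one_rpow, one_mul, hx.1.2, ENNReal.top_rpow_of_pos hp]
          rw [setLIntegral_congr_fun hSm hpt,
            setLIntegral_const S ⊤]
          exact ENNReal.top_mul hn0
        have hRHS : (∫⁻ s in Ioi (0:ℝ), (∫⁻ x in Ioo (0:ℝ) s, g x) ^ q * u s ^ q) ^ (1/q)
            ≤ volume S * Y := by
          rw [hY]
          apply rhs_pow_le hq hu ht (fun s _ hs => hparts.1 s hs) (volume S)
          intro s
          exact (hparts.2 s).trans_eq (setLIntegral_one S)
        have hfin : volume S * Y ≠ ⊤ := ENNReal.mul_ne_top hnt hYt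
        have htop : (⊤:ℝ≥0∞) ≤ J := by
          refine le_iSup_of_le ⟨g, hgm⟩ ?_
          rw [hLHS, ENNReal.top_rpow_of_pos (by positivity)]
          calc (⊤:ℝ≥0∞) = ⊤ / (volume S * Y) := (ENNReal.top_div_of_ne_top hfin).symm
            _ ≤ ⊤ / (∫⁻ s in Ioi (0:ℝ), (∫⁻ x in Ioo (0:ℝ) s, g x) ^ q * u s ^ q) ^ (1/q) :=
                ENNReal.div_le_div le_rfl hRHS
        exact le_top.trans htop

end RevHardy

/-- reverse Hardy inequality, `0 < q ≤ p ≤ 1`. -/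
theorem reverse_hardy_inequality (p q : ℝ) (hq : 0 < q) (hqp : q ≤ p) (hp1 : p ≤ 1) :
    ∃ c₁ c₂ : ℝ≥0∞, 0 < c₁ ∧ c₂ < ∞ ∧
      ∀ u w : ℝ → ℝ≥0∞, Measurable u → Measurable w →
        (∀ t ∈ Ioi (0:ℝ), (∫⁻ x in Ioi t, u x ^ q) < ∞) →
        (let LHS : (ℝ → ℝ≥0∞) → ℝ≥0∞ := fun g => (∫⁻ x in Ioi (0:ℝ), g x ^ p * w x ^ p) ^ (1 / p)
         let RHS : (ℝ → ℝ≥0∞) → ℝ≥0∞ := fun g =>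
            (∫⁻ t in Ioi (0:ℝ), (∫⁻ x in Ioo (0:ℝ) t, g x) ^ q * u t ^ q) ^ (1 / q)
         let C : ℝ≥0∞ := ⨆ t ∈ Ioi (0:ℝ),
            (if p = 1 then essSup w (volume.restrict (Ioi t))
             else (∫⁻ x in Ioi t, w x ^ (p / (1 - p))) ^ ((1 - p) / p))
              * ((∫⁻ x in Ioi t, u x ^ q) ^ (1 / q))⁻¹
         let best : ℝ≥0∞ := ⨆ g : {g : ℝ → ℝ≥0∞ // Measurable g}, LHS g.1 / RHS g.1
         ((∃ c : ℝ≥0∞, c < ∞ ∧ ∀ g : ℝ → ℝ≥0∞, Measurable g → LHS g ≤ c * RHS g) ↔ C < ∞)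
           ∧ c₁ * C ≤ best ∧ best ≤ c₂ * C) := by
  have hp : 0 < p := lt_of_lt_of_le hq hqp
  have hc2ne0 : (4:ℝ≥0∞) ^ (1/q) ≠ 0 := by
    rw [ne_eq, RevHardy.rpow_eq_zero_iff_pos (by positivity)]
    norm_num
  have hc2fin : (4:ℝ≥0∞) ^ (1/q) < ∞ :=
    ENNReal.rpow_lt_top_of_nonneg (by positivity) (by norm_num)
  refine ⟨1, (4:ℝ≥0∞) ^ (1/q), zero_lt_one, hc2fin, ?_⟩
  intro u w hu hw hufin
  intro LHS RHS C best
  have hCeq : C = RevHardy.Cq p q u w := rfl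
  have hnec : RevHardy.Cq p q u w ≤ best :=
    RevHardy.nec hq hqp hp1 u w hu hw hufin
  refine ⟨⟨?_, ?_⟩, ?_, ?_⟩
  · rintro ⟨c, hc, hball⟩
    have hbest_le : best ≤ c := by
      refine iSup_le ?_
      rintro ⟨g, hg⟩
      exact ENNReal.div_le_of_le_mul (hball g hg)
    rw [hCeq]
    exact lt_of_le_of_lt (hnec.trans hbest_le) hc
  · intro hC
    rw [hCeq] at hC
    refine ⟨(4:ℝ≥0∞) ^ (1/q) * RevHardy.Cq p q u w, ?_, ?_⟩
    · exact ENNReal.mul_lt_top hc2fin hC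
    · intro g hg
      exact RevHardy.suff hq hqp hp1 u w hu hw hufin hC.ne g hg
  · rw [one_mul, hCeq]
    exact hnec
  · by_cases hC : RevHardy.Cq p q u w = ⊤
    · have h2 : (4:ℝ≥0∞) ^ (1/q) * RevHardy.Cq p q u w = ⊤ := by
        rw [hC]
        exact ENNReal.mul_top hc2ne0
      rw [hCeq]
      exact le_trans le_top (le_of_eq h2.symm)
    · rw [hCeq]
      refine iSup_le ?_
      rintro ⟨g, hg⟩
      exact ENNReal.div_le_of_le_mul (RevHardy.suff hq hqp hp1 u w hu hw hufin hC g hg)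
end
end

section
/- Let 0 < q ≤ p ≤ 1 and let u, w be nonnegative measurable functions on (0,∞) with ∫_0^t u^q < ∞ for all t > 0. Then (∫_0^∞ g^p w^p)^{1/p} ≤ c (∫_0^∞ (∫_t^∞ g)^q u(t)^q dt)^{1/q} holds for all nonnegative measurable g if and only if C* = sup_{t>0} (∫_0^t w^{p/(1−p)})^{(1−p)/p} (∫_0^t u^q)^{−1/q} < ∞ (first factor = ess sup_{(0,t)} w when p = 1), and the best constant satisfies c ≈ C*. -/
open MeasureTheory ENNReal NNReal Set

noncomputable section


lemma rpow_iSup (a : ℕ → ℝ≥0∞) (r : ℝ) (hr : 0 < r) : (⨆ n, a n) ^ r = ⨆ n, a n ^ r := by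
  apply le_antisymm
  · have h1 : (⨆ n, a n) ≤ (⨆ n, a n ^ r) ^ (1/r) := by
      apply iSup_le; intro n
      have h2 : a n = (a n ^ r) ^ (1/r) := by
        rw [← ENNReal.rpow_mul, mul_one_div, div_self hr.ne', ENNReal.rpow_one]
      rw [h2]
      exact ENNReal.rpow_le_rpow (le_iSup (fun n => a n ^ r) n) (by positivity)
    calc (⨆ n, a n) ^ r ≤ ((⨆ n, a n ^ r) ^ (1/r)) ^ r := ENNReal.rpow_le_rpow h1 hr.le
    _ = ⨆ n, a n ^ r := by rw [← ENNReal.rpow_mul, one_div_mul_cancel hr.ne', ENNReal.rpow_one]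
  · apply iSup_le; intro n; exact ENNReal.rpow_le_rpow (le_iSup a n) hr.le

lemma aux_rpow_split (x : ℝ≥0∞) (r : ℝ) (hr : 1 ≤ r) : x ^ r = x ^ (r-1) * x := by
  nth_rewrite 3 [← ENNReal.rpow_one x]
  rw [← ENNReal.rpow_add_of_nonneg _ _ (by linarith) zero_le_one, sub_add_cancel]

lemma tsum_rpow_le (Λ : ℤ → ℝ≥0∞) (r : ℝ) (hr : 1 ≤ r) : ∑' k, Λ k ^ r ≤ (∑' k, Λ k) ^ r := by
  set S := ∑' k, Λ k with hS
  rcases eq_or_ne S ∞ with h | h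
  · rw [h, ENNReal.top_rpow_of_pos (by linarith)]; exact le_top
  have key : ∀ k, Λ k ^ r ≤ S ^ (r - 1) * Λ k := by
    intro k
    have hle : Λ k ≤ S := ENNReal.le_tsum k
    rw [aux_rpow_split _ _ hr]
    exact mul_le_mul_left (ENNReal.rpow_le_rpow hle (by linarith)) _
  calc ∑' k, Λ k ^ r ≤ ∑' k, S ^ (r-1) * Λ k := ENNReal.tsum_le_tsum key
  _ = S ^ (r-1) * S := by rw [ENNReal.tsum_mul_left]
  _ = S ^ r := (aux_rpow_split _ _ hr).symm

lemma downset_bound (ρ : Measure ℝ) (hρ : ∀ x : ℝ, ρ {x} = 0) (T : Set ℝ) (hT : T ⊆ Ioi 0)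
    (hdc : ∀ x ∈ T, ∀ y : ℝ, 0 < y → y ≤ x → y ∈ T) (M : ℝ≥0∞)
    (hb : ∀ x ∈ T, ρ (Ioo 0 x) ≤ M) : ρ T ≤ M := by
  rcases T.eq_empty_or_nonempty with rfl | hne
  · simp
  by_cases hbdd : BddAbove T
  · set m := sSup T with hm
    have hm0 : 0 < m := lt_of_lt_of_le (hT hne.some_mem) (le_csSup hbdd hne.some_mem)
    have hsub : T ⊆ Ioo 0 m ∪ {m} := by
      intro x hx
      rcases lt_or_eq_of_le (le_csSup hbdd hx) with h | h
      · exact Or.inl ⟨hT hx, h⟩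
      · exact Or.inr h
    have hseq : Ioo 0 m = ⋃ n : ℕ, Ioo 0 (m - m / (n + 2)) := by
      ext x
      simp only [mem_Ioo, mem_iUnion]
      constructor
      · rintro ⟨hx0, hxm⟩
        have h1 : Filter.Tendsto (fun n : ℕ => m - m / (n + 2)) Filter.atTop (nhds (m - 0)) := by
          apply Filter.Tendsto.sub tendsto_const_nhds
          apply Filter.Tendsto.div_atTop tendsto_const_nhds
          apply Filter.tendsto_atTop_add_const_right
          exact tendsto_natCast_atTop_atTop
        rw [sub_zero] at h1
        obtain ⟨n, hn⟩ := (h1.eventually (eventually_gt_nhds hxm)).exists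
        exact ⟨n, hx0, hn⟩
      · rintro ⟨n, hx0, hxn⟩
        refine ⟨hx0, lt_of_lt_of_le hxn ?_⟩
        have : 0 < m / (n + 2) := by positivity
        linarith
    have hmono : Monotone (fun n : ℕ => Ioo (0:ℝ) (m - m / (n + 2))) := by
      intro a b hab
      apply Ioo_subset_Ioo le_rfl
      have : m / ((b:ℝ) + 2) ≤ m / ((a:ℝ) + 2) := by
        apply div_le_div_of_nonneg_left hm0.le (by positivity) (by exact_mod_cast by push_cast; linarith [(Nat.cast_le (α := ℝ)).mpr hab])
      linarith
    calc ρ T ≤ ρ (Ioo 0 m ∪ {m}) := measure_mono hsub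
    _ ≤ ρ (Ioo 0 m) + ρ {m} := measure_union_le _ _
    _ = ρ (Ioo 0 m) := by rw [hρ, add_zero]
    _ = ⨆ n : ℕ, ρ (Ioo 0 (m - m / (n + 2))) := by
        rw [hseq]; exact Directed.measure_iUnion (hmono.directed_le)
    _ ≤ M := by
        apply iSup_le; intro n
        rcases le_or_gt (m - m / ((n:ℝ)+2)) 0 with h | h
        · rw [Ioo_eq_empty (not_lt.mpr h)]; simp
        · have hlt : m - m / ((n:ℝ)+2) < m := by
            have : 0 < m / ((n:ℝ) + 2) := by positivity
            linarith
          obtain ⟨y, hy, hxy⟩ := exists_lt_of_lt_csSup hne hlt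
          exact hb _ (hdc y hy _ h hxy.le)
  · have hTeq : T = Ioi 0 := by
      apply Subset.antisymm hT
      intro y hy
      obtain ⟨x, hx, hyx⟩ := not_bddAbove_iff.mp hbdd y
      exact hdc x hx y hy hyx.le
    subst hTeq
    have hun : Ioi (0:ℝ) = ⋃ n : ℕ, Ioo (0:ℝ) ((n:ℝ)+1) := by
      ext x; simp only [mem_Ioi, mem_iUnion, mem_Ioo]
      constructor
      · intro h
        exact ⟨⌈x⌉₊, h, lt_of_le_of_lt (Nat.le_ceil x) (by push_cast; linarith)⟩
      · rintro ⟨n, h, _⟩; exact h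
    rw [hun, Directed.measure_iUnion]
    · apply iSup_le; intro n
      apply hb
      obtain ⟨x, hx, hyx⟩ := not_bddAbove_iff.mp hbdd ((n:ℝ)+1)
      exact hdc x hx _ (by positivity) hyx.le
    · apply Monotone.directed_le
      intro a b hab
      apply Ioo_subset_Ioo le_rfl (by exact_mod_cast by push_cast; linarith [(Nat.cast_le (α := ℝ)).mpr hab])

lemma inf_small (ν : Measure ℝ) (hfin : ∀ t : ℝ, 0 < t → ν (Ioo 0 t) < ∞)
    (c : ℝ≥0∞) (hc : 0 < c) : ∃ x : ℝ, 0 < x ∧ ν (Ioo 0 x) < c := by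
  by_contra hcon
  push_neg at hcon
  have hseq : (⋂ n : ℕ, Ioo (0:ℝ) (1 / (n+1))) = ∅ := by
    ext x
    simp only [mem_iInter, mem_Ioo, mem_empty_iff_false, iff_false]
    intro h
    obtain ⟨n, hn⟩ := exists_nat_gt (1/x)
    have hx0 : 0 < x := (h 0).1
    have : 1 / ((n:ℝ)+1) < x := by
      rw [div_lt_iff₀ (by positivity)]
      rw [div_lt_iff₀ hx0] at hn
      nlinarith
    exact absurd (h n).2 (not_lt.mpr this.le)
  have hdir : Directed (fun x1 x2 => x1 ⊇ x2) (fun n : ℕ => Ioo (0:ℝ) (1 / (n+1))) := by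
    apply Antitone.directed_ge
    intro a b hab
    apply Ioo_subset_Ioo le_rfl
    apply div_le_div_of_nonneg_left zero_le_one (by positivity) (by exact_mod_cast by push_cast; linarith [(Nat.cast_le (α := ℝ)).mpr hab])
  have h0 : ν (⋂ n : ℕ, Ioo (0:ℝ) (1 / (n+1))) = ⨅ n : ℕ, ν (Ioo (0:ℝ) (1 / (n+1))) := by
    apply Directed.measure_iInter (fun n => (measurableSet_Ioo).nullMeasurableSet) hdir
    exact ⟨0, (hfin _ (by norm_num)).ne⟩
  rw [hseq, measure_empty] at h0
  have : c ≤ 0 := h0 ▸ le_iInf (fun n => hcon _ (by positivity))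
  exact absurd (le_antisymm this zero_le) hc.ne'

/-- the "uniform distribution" fact: the measure of the sublevel set equals the level. -/
lemma level_measure (ν : Measure ℝ) (hν : ∀ x : ℝ, ν {x} = 0)
    (hfin : ∀ t : ℝ, 0 < t → ν (Ioo 0 t) < ∞)
    (c : ℝ≥0∞) (hc : 0 < c) (x₀ : ℝ) (hx₀ : 0 < x₀) (hwit : c ≤ ν (Ioo 0 x₀)) :
    ν {x : ℝ | 0 < x ∧ ν (Ioo 0 x) < c} = c := by
  set T := {x : ℝ | 0 < x ∧ ν (Ioo 0 x) < c} with hT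
  have hTsub : T ⊆ Ioi 0 := fun x hx => hx.1
  have hmonoU : ∀ a b : ℝ, a ≤ b → ν (Ioo 0 a) ≤ ν (Ioo 0 b) :=
    fun a b hab => measure_mono (Ioo_subset_Ioo le_rfl hab)
  have hdc : ∀ x ∈ T, ∀ y : ℝ, 0 < y → y ≤ x → y ∈ T :=
    fun x hx y hy hyx => ⟨hy, lt_of_le_of_lt (hmonoU _ _ hyx) hx.2⟩
  have hne : T.Nonempty := by
    obtain ⟨x, hx, hxc⟩ := inf_small ν hfin c hc
    exact ⟨x, hx, hxc⟩
  have hbdd : BddAbove T := by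
    refine ⟨x₀, fun x hx => ?_⟩
    by_contra hcon
    push_neg at hcon
    exact absurd (lt_of_le_of_lt (le_trans hwit (hmonoU _ _ hcon.le)) hx.2) (lt_irrefl c)
  set m := sSup T with hm
  have hm0 : 0 < m := lt_of_lt_of_le hne.some_mem.1 (le_csSup hbdd hne.some_mem)
  -- T sandwiched between Ioo 0 m and Ioc 0 m
  have hsub1 : Ioo 0 m ⊆ T := by
    intro x hx
    obtain ⟨y, hy, hxy⟩ := exists_lt_of_lt_csSup hne hx.2
    exact hdc y hy x hx.1 hxy.le
  have hsub2 : T ⊆ Ioc 0 m := fun x hx => ⟨hx.1, le_csSup hbdd hx⟩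
  -- value of ν on Ioo 0 m : equals c
  have hUm_le : ν (Ioo 0 m) ≤ c := by
    have hseq : Ioo 0 m = ⋃ n : ℕ, Ioo 0 (m - m / (n + 2)) := by
      ext x
      simp only [mem_Ioo, mem_iUnion]
      constructor
      · rintro ⟨hx0, hxm⟩
        have h1 : Filter.Tendsto (fun n : ℕ => m - m / (n + 2)) Filter.atTop (nhds (m - 0)) := by
          apply Filter.Tendsto.sub tendsto_const_nhds
          apply Filter.Tendsto.div_atTop tendsto_const_nhds
          apply Filter.tendsto_atTop_add_const_right
          exact tendsto_natCast_atTop_atTop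
        rw [sub_zero] at h1
        obtain ⟨n, hn⟩ := (h1.eventually (eventually_gt_nhds hxm)).exists
        exact ⟨n, hx0, hn⟩
      · rintro ⟨n, hx0, hxn⟩
        refine ⟨hx0, lt_of_lt_of_le hxn ?_⟩
        have : 0 < m / (n + 2) := by positivity
        linarith
    have hmono : Monotone (fun n : ℕ => Ioo (0:ℝ) (m - m / (n + 2))) := by
      intro a b hab
      apply Ioo_subset_Ioo le_rfl
      have : m / ((b:ℝ) + 2) ≤ m / ((a:ℝ) + 2) := by
        apply div_le_div_of_nonneg_left hm0.le (by positivity) (by exact_mod_cast by push_cast; linarith [(Nat.cast_le (α := ℝ)).mpr hab])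
      linarith
    rw [hseq, Directed.measure_iUnion hmono.directed_le]
    apply iSup_le; intro n
    rcases le_or_gt (m - m / ((n:ℝ)+2)) 0 with h | h
    · rw [Ioo_eq_empty (not_lt.mpr h)]; simp
    · have hlt : m - m / ((n:ℝ)+2) < m := by
        have : 0 < m / ((n:ℝ) + 2) := by positivity
        linarith
      obtain ⟨y, hy, hxy⟩ := exists_lt_of_lt_csSup hne hlt
      exact (lt_of_le_of_lt (hmonoU _ _ hxy.le) hy.2).le
  have hUm_ge : c ≤ ν (Ioc 0 m) := by
    have hseq : Ioc 0 m = ⋂ n : ℕ, Ioo 0 (m + 1 / (n + 1)) := by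
      ext x
      simp only [mem_Ioc, mem_iInter, mem_Ioo]
      constructor
      · rintro ⟨hx0, hxm⟩ n
        have : 0 < 1 / ((n:ℝ)+1) := by positivity
        exact ⟨hx0, by linarith⟩
      · intro h
        refine ⟨(h 0).1, ?_⟩
        by_contra hcon
        push_neg at hcon
        obtain ⟨n, hn⟩ := exists_nat_gt (1/(x - m))
        have hxm : 0 < x - m := by linarith
        have : 1 / ((n:ℝ)+1) < x - m := by
          rw [div_lt_iff₀ (by positivity)]
          rw [div_lt_iff₀ hxm] at hn
          nlinarith
        linarith [(h n).2]
    have hanti : Antitone (fun n : ℕ => Ioo (0:ℝ) (m + 1 / (n + 1))) := by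
      intro a b hab
      apply Ioo_subset_Ioo le_rfl
      have : 1 / ((b:ℝ) + 1) ≤ 1 / ((a:ℝ) + 1) := by
        apply div_le_div_of_nonneg_left zero_le_one (by positivity) (by exact_mod_cast by push_cast; linarith [(Nat.cast_le (α := ℝ)).mpr hab])
      linarith
    rw [hseq, Directed.measure_iInter (fun n => measurableSet_Ioo.nullMeasurableSet) hanti.directed_ge
        ⟨0, (hfin _ (by positivity)).ne⟩]
    apply le_iInf; intro n
    have hgt : m < m + 1 / ((n:ℝ)+1) := by
      have : 0 < 1 / ((n:ℝ)+1) := by positivity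
      linarith
    -- the point m + half-step is above m hence not in T, so ν (Ioo 0 ·) ≥ c
    have hy_gt : m < m + 1 / ((n:ℝ)+1) / 2 := by
      have : 0 < 1 / ((n:ℝ)+1) / 2 := by positivity
      linarith
    have hy_notT : m + 1 / ((n:ℝ)+1) / 2 ∉ T := fun hcon => absurd (le_csSup hbdd hcon) (not_le.mpr hy_gt)
    have hy_pos : 0 < m + 1 / ((n:ℝ)+1) / 2 := lt_trans hm0 hy_gt
    have hyc : c ≤ ν (Ioo 0 (m + 1 / ((n:ℝ)+1) / 2)) := by
      rcases lt_or_ge (ν (Ioo 0 (m + 1 / ((n:ℝ)+1) / 2))) c with h | h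
      · exact absurd ⟨hy_pos, h⟩ hy_notT
      · exact h
    refine le_trans hyc (hmonoU _ _ ?_)
    have : 0 < 1 / ((n:ℝ)+1) := by positivity
    linarith
  have hIoc : ν (Ioc 0 m) = ν (Ioo 0 m) := by
    have : ν (Ioc 0 m) ≤ ν (Ioo 0 m ∪ {m}) := measure_mono (by
      intro x hx
      rcases lt_or_eq_of_le hx.2 with h | h
      · exact Or.inl ⟨hx.1, h⟩
      · exact Or.inr h)
    refine le_antisymm (le_trans this ?_) (measure_mono Ioo_subset_Ioc_self)
    calc ν (Ioo 0 m ∪ {m}) ≤ ν (Ioo 0 m) + ν {m} := measure_union_le _ _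
    _ = ν (Ioo 0 m) := by rw [hν, add_zero]
  have hc_eq : ν (Ioo 0 m) = c := le_antisymm hUm_le (hIoc ▸ hUm_ge)
  refine le_antisymm ?_ ?_
  · calc ν T ≤ ν (Ioc 0 m) := measure_mono hsub2
    _ = c := by rw [hIoc, hc_eq]
  · calc c = ν (Ioo 0 m) := hc_eq.symm
    _ ≤ ν T := measure_mono hsub1

lemma two_rpow_ne_top (r : ℝ) : (2:ℝ≥0∞) ^ r ≠ ∞ := by
  have h2 : (2:ℝ≥0∞) = ((2:ℝ≥0):ℝ≥0∞) := by norm_cast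
  rw [h2, ← ENNReal.coe_rpow_of_ne_zero (by norm_num)]
  exact ENNReal.coe_ne_top
lemma two_rpow_pos (r : ℝ) : (0:ℝ≥0∞) < (2:ℝ≥0∞) ^ r :=
  ENNReal.rpow_pos (by norm_num) (by norm_num)
lemma two_rpow_sub_half (a : ℝ) : (2:ℝ≥0∞) ^ a - 2 ^ (a-1) = 2 ^ (a-1) := by
  apply ENNReal.sub_eq_of_eq_add (two_rpow_ne_top _)
  have : (2:ℝ≥0∞) ^ a = 2 ^ (a-1) * 2 ^ (1:ℝ) := by
    rw [← ENNReal.rpow_add _ _ (by norm_num) (by norm_num)]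
    norm_num
  rw [this, ENNReal.rpow_one, mul_two]

lemma block_bound (p q : ℝ) (hq : 0 < q) (hqp : q ≤ p) (hp1 : p ≤ 1)
    (w g : ℝ → ℝ≥0∞) (hw : Measurable w) (hg : Measurable g)
    (E T : Set ℝ) (hE : MeasurableSet E) (hET : E ⊆ T) (hT : T ⊆ Ioi 0)
    (hdc : ∀ x ∈ T, ∀ y : ℝ, 0 < y → y ≤ x → y ∈ T)
    (M : ℝ≥0∞)
    (hM : ∀ x ∈ T, (if p = 1 then essSup w (volume.restrict (Ioo (0:ℝ) x))
       else (∫⁻ y in Ioo (0:ℝ) x, w y ^ (p / (1 - p))) ^ ((1 - p) / p)) ≤ M) :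
    ∫⁻ x in E, g x ^ p * w x ^ p ≤ M ^ p * (∫⁻ x in E, g x) ^ p := by
  have hp : 0 < p := hq.trans_le hqp
  by_cases hps : p = 1
  · subst hps
    simp only [ENNReal.rpow_one]
    simp only [if_pos rfl] at hM
    have hMset : MeasurableSet {x : ℝ | M < w x} := hw measurableSet_Ioi
    have hwM : volume ({x | M < w x} ∩ T) = 0 := by
      have hb : ∀ x ∈ T, (volume.restrict {x | M < w x}) (Ioo (0:ℝ) x) ≤ 0 := by
        intro x hx
        rw [Measure.restrict_apply' hMset]
        have hae : ∀ᵐ y ∂(volume.restrict (Ioo (0:ℝ) x)), w y ≤ M :=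
          Filter.Eventually.mono (ENNReal.ae_le_essSup w) (fun y hy => le_trans hy (hM x hx))
        rw [ae_iff] at hae
        simp only [not_le] at hae
        rw [Measure.restrict_apply' measurableSet_Ioo] at hae
        rw [le_zero_iff, inter_comm]
        exact hae
      have hds := downset_bound (volume.restrict {x | M < w x})
        (fun x => by
          rw [Measure.restrict_apply' hMset, ← le_zero_iff]
          exact le_trans (measure_mono inter_subset_left) (le_of_eq Real.volume_singleton))
        T hT hdc 0 hb
      rw [Measure.restrict_apply' hMset, le_zero_iff, inter_comm] at hds
      exact hds
    have haeE : ∀ᵐ y ∂(volume.restrict E), w y ≤ M := by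
      rw [ae_restrict_iff' hE]
      rw [ae_iff]
      apply measure_mono_null _ hwM
      intro y hy
      simp only [mem_setOf_eq, not_forall] at hy
      obtain ⟨hyE, hyw⟩ := hy
      exact ⟨not_le.mp hyw, hET hyE⟩
    calc ∫⁻ x in E, g x * w x ≤ ∫⁻ x in E, g x * M := by
          apply lintegral_mono_ae
          exact Filter.Eventually.mono haeE (fun y hy => mul_le_mul_right hy _)
    _ = M * ∫⁻ x in E, g x := by
          rw [lintegral_mul_const M hg]; ring
  · have hplt : p < 1 := lt_of_le_of_ne hp1 hps
    have h1p : 0 < 1 - p := by linarith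
    simp only [if_neg hps] at hM
    -- bound on the integral of w ^ (p/(1-p)) over T
    have hVp : ∀ x ∈ T, ∫⁻ y in Ioo (0:ℝ) x, w y ^ (p / (1 - p)) ≤ M ^ (p/(1-p)) := by
      intro x hx
      have h := hM x hx
      have := ENNReal.rpow_le_rpow h (le_of_lt (by positivity : (0:ℝ) < p/(1-p)))
      rwa [← ENNReal.rpow_mul, div_mul_div_comm, mul_comm (1-p) p, div_self (by positivity), ENNReal.rpow_one] at this
    have hρw : ∫⁻ y in E, w y ^ (p / (1 - p)) ≤ M ^ (p/(1-p)) := by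
      have hmeasw : Measurable (fun y => w y ^ (p / (1 - p))) := hw.pow_const _
      have happ : ∀ s : Set ℝ, MeasurableSet s →
          (volume.withDensity (fun y => w y ^ (p / (1 - p)))) s = ∫⁻ y in s, w y ^ (p / (1 - p)) :=
        fun s hs => withDensity_apply _ hs
      have hds := downset_bound (volume.withDensity (fun y => w y ^ (p / (1 - p))))
        (fun x => by rw [happ _ (measurableSet_singleton x)]; exact setLIntegral_measure_zero _ _ Real.volume_singleton)
        T hT hdc (M ^ (p/(1-p)))
        (fun x hx => by rw [happ _ measurableSet_Ioo]; exact hVp x hx)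
      calc ∫⁻ y in E, w y ^ (p / (1 - p)) = (volume.withDensity (fun y => w y ^ (p / (1 - p)))) E := (happ E hE).symm
      _ ≤ (volume.withDensity (fun y => w y ^ (p / (1 - p)))) T := measure_mono hET
      _ ≤ M ^ (p/(1-p)) := hds
    -- Hölder
    have hconj : Real.HolderConjugate (1/p) (1/(1-p)) := by
      rw [Real.holderConjugate_iff]
      constructor
      · rw [lt_div_iff₀ hp]; linarith
      · rw [one_div, one_div, inv_inv, inv_inv]; ring
    have hold := ENNReal.lintegral_mul_le_Lp_mul_Lq (volume.restrict E) hconj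
      (hg.pow_const p).aemeasurable (hw.pow_const p).aemeasurable
    simp only [Pi.mul_apply] at hold
    have e1 : ∀ x : ℝ, (g x ^ p) ^ (1/p) = g x := by
      intro x; rw [← ENNReal.rpow_mul, mul_one_div, div_self hp.ne', ENNReal.rpow_one]
    have e2 : ∀ x : ℝ, (w x ^ p) ^ (1/(1-p)) = w x ^ (p/(1-p)) := by
      intro x; rw [← ENNReal.rpow_mul, mul_one_div]
    simp only [e1, e2, one_div_one_div] at hold
    calc ∫⁻ x in E, g x ^ p * w x ^ p
        ≤ (∫⁻ x in E, g x) ^ p * (∫⁻ x in E, w x ^ (p/(1-p))) ^ (1-p) := hold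
    _ ≤ (∫⁻ x in E, g x) ^ p * (M ^ (p/(1-p))) ^ (1-p) := by
          exact mul_le_mul_right (ENNReal.rpow_le_rpow hρw h1p.le) _
    _ = M ^ p * (∫⁻ x in E, g x) ^ p := by
          rw [← ENNReal.rpow_mul, div_mul_cancel₀ _ h1p.ne', mul_comm]

lemma copson_upper (p q : ℝ) (hq : 0 < q) (hqp : q ≤ p) (hp1 : p ≤ 1)
    (u w : ℝ → ℝ≥0∞) (hu : Measurable u) (hw : Measurable w)
    (hfin : ∀ t ∈ Ioi (0:ℝ), (∫⁻ x in Ioo (0:ℝ) t, u x ^ q) < ∞)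
    (C : ℝ≥0∞)
    (hCb : ∀ t : ℝ, 0 < t →
      (if p = 1 then essSup w (volume.restrict (Ioo (0:ℝ) t))
       else (∫⁻ x in Ioo (0:ℝ) t, w x ^ (p / (1 - p))) ^ ((1 - p) / p))
        ≤ C * (∫⁻ x in Ioo (0:ℝ) t, u x ^ q) ^ (1/q))
    (g : ℝ → ℝ≥0∞) (hg : Measurable g) :
    (∫⁻ x in Ioi (0:ℝ), g x ^ p * w x ^ p)
      ≤ (4:ℝ≥0∞) ^ (p/q) * C ^ p * (∫⁻ t in Ioi (0:ℝ), (∫⁻ x in Ioi t, g x) ^ q * u t ^ q) ^ (p/q) := by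
  classical
  have hp : 0 < p := hq.trans_le hqp
  set ν := volume.withDensity (fun x => u x ^ q) with hν
  have hmeasuq : Measurable (fun x => u x ^ q) := hu.pow_const _
  have hνapp : ∀ s : Set ℝ, MeasurableSet s → ν s = ∫⁻ x in s, u x ^ q :=
    fun s hs => withDensity_apply _ hs
  have hνsing : ∀ x : ℝ, ν {x} = 0 := fun x => by
    rw [hνapp _ (measurableSet_singleton x)]
    exact setLIntegral_measure_zero _ _ Real.volume_singleton
  set U : ℝ → ℝ≥0∞ := fun t => ν (Ioo 0 t) with hUdef
  have hUmono : Monotone U := fun a b hab => measure_mono (Ioo_subset_Ioo le_rfl hab)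
  have hUmeas : Measurable U := hUmono.measurable
  have hUfin : ∀ t : ℝ, 0 < t → U t < ∞ := fun t ht => by
    show ν (Ioo 0 t) < ∞
    rw [hνapp _ measurableSet_Ioo]; exact hfin t ht
  -- the dyadic blocks
  set E : ℤ → Set ℝ := fun k => {x | 0 < x ∧ (2:ℝ≥0∞) ^ ((k:ℝ)) ≤ U x ∧ U x < 2 ^ ((k:ℝ)+1)} with hEdef
  set ES : ℤ → Set ℝ := fun k => {x | 0 < x ∧ (2:ℝ≥0∞) ^ ((k:ℝ)) ≤ U x} with hESdef
  set A : ℤ → Set ℝ := fun k => {x | 0 < x ∧ (2:ℝ≥0∞) ^ ((k:ℝ)-1) ≤ U x ∧ U x < 2 ^ ((k:ℝ))} with hAdef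
  set E0 : Set ℝ := {x | 0 < x ∧ U x = 0} with hE0def
  have hEm : ∀ k, MeasurableSet (E k) := by
    intro k
    have : E k = Ioi 0 ∩ U ⁻¹' (Ico ((2:ℝ≥0∞) ^ ((k:ℝ))) (2 ^ ((k:ℝ)+1))) := by
      ext x; simp [hEdef, mem_Ico, and_assoc, mem_Ioi]
    rw [this]; exact measurableSet_Ioi.inter (hUmeas measurableSet_Ico)
  have hESm : ∀ k, MeasurableSet (ES k) := by
    intro k
    have : ES k = Ioi 0 ∩ U ⁻¹' (Ici ((2:ℝ≥0∞) ^ ((k:ℝ)))) := by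
      ext x; simp [hESdef, mem_Ioi, mem_Ici]
    rw [this]; exact measurableSet_Ioi.inter (hUmeas measurableSet_Ici)
  have hAm : ∀ k, MeasurableSet (A k) := by
    intro k
    have : A k = Ioi 0 ∩ U ⁻¹' (Ico ((2:ℝ≥0∞) ^ ((k:ℝ)-1)) (2 ^ ((k:ℝ)))) := by
      ext x; simp [hAdef, mem_Ico, and_assoc, mem_Ioi]
    rw [this]; exact measurableSet_Ioi.inter (hUmeas measurableSet_Ico)
  have hE0m : MeasurableSet E0 := by
    have : E0 = Ioi 0 ∩ U ⁻¹' {0} := by ext x; simp [hE0def, mem_Ioi]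
    rw [this]; exact measurableSet_Ioi.inter (hUmeas (measurableSet_singleton 0))
  -- exponent monotonicity for powers of two
  have h2mono : ∀ a b : ℝ, a ≤ b → (2:ℝ≥0∞) ^ a ≤ 2 ^ b :=
    fun a b hab => ENNReal.rpow_le_rpow_of_exponent_le (by norm_num) hab
  set f := fun x => g x ^ p * w x ^ p with hfdef
  -- cover
  have hcover : Ioi (0:ℝ) ⊆ E0 ∪ ⋃ k : ℤ, E k := by
    intro x hx
    rcases eq_or_ne (U x) 0 with h0 | h0
    · exact Or.inl ⟨hx, h0⟩
    · obtain ⟨k, hk⟩ := ENNReal.exists_mem_Ico_zpow h0 (hUfin x hx).ne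
        (by norm_num : (1:ℝ≥0∞) < 2) (by norm_num)
      refine Or.inr (mem_iUnion.mpr ⟨k, hx, ?_, ?_⟩)
      · rw [ENNReal.rpow_intCast]; exact hk.1
      · have : ((k:ℝ)+1) = ((k+1 : ℤ) : ℝ) := by push_cast; ring
        rw [this, ENNReal.rpow_intCast]; exact hk.2
  -- disjointness
  have hEdisjaux : ∀ k j : ℤ, k < j → Disjoint (E k) (E j) := by
    intro k j hlt
    rw [disjoint_left]
    rintro x ⟨_, _, hx2⟩ ⟨_, hx3, _⟩
    have hcast : ((k:ℝ)+1) ≤ (j:ℝ) := by exact_mod_cast hlt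
    exact absurd (lt_of_lt_of_le hx2 (le_trans (h2mono _ _ hcast) hx3)) (lt_irrefl _)
  have hEdisj : Pairwise (Function.onFun Disjoint E) := by
    intro k j hkj
    rcases lt_or_gt_of_ne hkj with h | h
    · exact hEdisjaux _ _ h
    · exact (hEdisjaux _ _ h).symm
  have hAdisjaux : ∀ k j : ℤ, k < j → Disjoint (A k) (A j) := by
    intro k j hlt
    rw [disjoint_left]
    rintro x ⟨_, _, hx2⟩ ⟨_, hx3, _⟩
    have hcast : ((k:ℝ)) ≤ (j:ℝ)-1 := by
      have h' : (k:ℝ) + 1 ≤ (j:ℝ) := by exact_mod_cast hlt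
      linarith
    exact absurd (lt_of_lt_of_le hx2 (le_trans (h2mono _ _ hcast) hx3)) (lt_irrefl _)
  have hAdisj : Pairwise (Function.onFun Disjoint A) := by
    intro k j hkj
    rcases lt_or_gt_of_ne hkj with h | h
    · exact hAdisjaux _ _ h
    · exact (hAdisjaux _ _ h).symm
  -- split the integral
  have hsplit : ∫⁻ x in Ioi (0:ℝ), f x ≤ (∫⁻ x in E0, f x) + ∑' k : ℤ, ∫⁻ x in E k, f x := by
    calc ∫⁻ x in Ioi (0:ℝ), f x ≤ ∫⁻ x in E0 ∪ ⋃ k : ℤ, E k, f x := lintegral_mono_set hcover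
    _ ≤ (∫⁻ x in E0, f x) + ∫⁻ x in ⋃ k : ℤ, E k, f x := by
        refine le_trans (lintegral_mono' (Measure.restrict_union_le _ _) le_rfl) ?_
        rw [lintegral_add_measure]
    _ = (∫⁻ x in E0, f x) + ∑' k : ℤ, ∫⁻ x in E k, f x := by
        rw [lintegral_iUnion hEm hEdisj]
  -- E0 contributes zero
  have hE0zero : ∫⁻ x in E0, f x = 0 := by
    have hwzm : MeasurableSet {x : ℝ | w x ≠ 0} := (hw (measurableSet_singleton 0)).compl
    have hwnull : volume ({x | w x ≠ 0} ∩ E0) = 0 := by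
      have hb : ∀ x ∈ E0, (volume.restrict {x | w x ≠ 0}) (Ioo (0:ℝ) x) ≤ 0 := by
        intro x hx
        rw [Measure.restrict_apply' hwzm, le_zero_iff]
        have hcb := hCb x hx.1
        have hUx : (∫⁻ y in Ioo (0:ℝ) x, u y ^ q) = 0 := by
          rw [← hνapp _ measurableSet_Ioo]; exact hx.2
        rw [hUx, ENNReal.zero_rpow_of_pos (by positivity), mul_zero, le_zero_iff] at hcb
        have hae : ∀ᵐ y ∂(volume.restrict (Ioo (0:ℝ) x)), w y = 0 := by
          by_cases hps : p = 1
          · rw [if_pos hps] at hcb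
            filter_upwards [ENNReal.ae_le_essSup w] with y hy
            exact le_antisymm (hcb ▸ hy) (zero_le)
          · rw [if_neg hps] at hcb
            have hplt : p < 1 := lt_of_le_of_ne hp1 hps
            have h1p : 0 < 1 - p := by linarith
            have hint0 : (∫⁻ y in Ioo (0:ℝ) x, w y ^ (p/(1-p))) = 0 := by
              rcases (ENNReal.rpow_eq_zero_iff.mp hcb) with ⟨h, _⟩ | ⟨_, hneg⟩
              · exact h
              · exfalso; have : (0:ℝ) < (1-p)/p := by positivity
                linarith
            have := (lintegral_eq_zero_iff (hw.pow_const (p/(1-p)))).mp hint0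
            filter_upwards [this] with y hy
            simp only [Pi.zero_apply] at hy
            rcases ENNReal.rpow_eq_zero_iff.mp hy with ⟨h, _⟩ | ⟨_, hneg⟩
            · exact h
            · exfalso; have : (0:ℝ) < p/(1-p) := by positivity
              linarith
        rw [ae_iff] at hae
        rw [Measure.restrict_apply' measurableSet_Ioo] at hae
        rw [inter_comm]
        exact hae
      have hds := downset_bound (volume.restrict {x | w x ≠ 0})
        (fun x => by
          rw [Measure.restrict_apply' hwzm, ← le_zero_iff]
          exact le_trans (measure_mono inter_subset_left) (le_of_eq Real.volume_singleton))
        E0 (fun x hx => hx.1)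
        (fun x hx y hy hyx => ⟨hy, le_antisymm (hx.2 ▸ hUmono hyx) (zero_le)⟩)
        0 hb
      rw [Measure.restrict_apply' hwzm, le_zero_iff, inter_comm] at hds
      exact hds
    have hfnull : volume ({x | f x ≠ 0} ∩ E0) = 0 := by
      apply measure_mono_null _ hwnull
      rintro x ⟨hfx, hxE⟩
      refine ⟨?_, hxE⟩
      intro hwx
      apply hfx
      show g x ^ p * w x ^ p = 0
      rw [hwx, ENNReal.zero_rpow_of_pos hp, mul_zero]
    have : ∀ᵐ x ∂(volume.restrict E0), f x = 0 := by
      rw [ae_restrict_iff' hE0m, ae_iff]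
      apply measure_mono_null _ hfnull
      intro x hx
      simp only [mem_setOf_eq, not_forall] at hx ⊢
      obtain ⟨h1, h2⟩ := hx
      exact ⟨h2, h1⟩
    calc ∫⁻ x in E0, f x = ∫⁻ _ in E0, 0 := lintegral_congr_ae this
    _ = 0 := lintegral_zero
  -- per-block bound
  have hblock : ∀ k : ℤ, ∫⁻ x in E k, f x ≤ (C * 2 ^ (((k:ℝ)+1)/q)) ^ p * (∫⁻ x in ES k, g x) ^ p := by
    intro k
    have h1 := block_bound p q hq hqp hp1 w g hw hg (E k) {x : ℝ | 0 < x ∧ U x < 2 ^ ((k:ℝ)+1)}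
      (hEm k) (fun x hx => ⟨hx.1, hx.2.2⟩) (fun x hx => hx.1)
      (fun x hx y hy hyx => ⟨hy, lt_of_le_of_lt (hUmono hyx) hx.2⟩)
      (C * 2 ^ (((k:ℝ)+1)/q))
      (fun x hx => by
        refine le_trans (hCb x hx.1) ?_
        apply mul_le_mul_right
        have hUx : (∫⁻ y in Ioo (0:ℝ) x, u y ^ q) = U x := (hνapp _ measurableSet_Ioo).symm
        rw [hUx]
        calc U x ^ (1/q) ≤ ((2:ℝ≥0∞) ^ ((k:ℝ)+1)) ^ (1/q) :=
              ENNReal.rpow_le_rpow hx.2.le (by positivity)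
        _ = 2 ^ (((k:ℝ)+1)/q) := by rw [← ENNReal.rpow_mul, mul_one_div])
    refine le_trans h1 ?_
    apply mul_le_mul_right
    exact ENNReal.rpow_le_rpow (lintegral_mono_set (fun x hx => ⟨hx.1, hx.2.1⟩)) hp.le
  set γ : ℤ → ℝ≥0∞ := fun k => ∫⁻ x in ES k, g x with hγdef
  set Λ : ℤ → ℝ≥0∞ := fun k => if (E k).Nonempty then 2 ^ ((k:ℝ)) * γ k ^ q else 0 with hΛdef
  set Iq := ∫⁻ t in Ioi (0:ℝ), (∫⁻ x in Ioi t, g x) ^ q * u t ^ q with hIqdef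
  have hΛle : ∀ k : ℤ, Λ k ≤ 2 * ∫⁻ x in A k, (∫⁻ y in Ioi x, g y) ^ q * u x ^ q := by
    intro k
    by_cases hne : (E k).Nonempty
    · show (if (E k).Nonempty then (2:ℝ≥0∞) ^ ((k:ℝ)) * γ k ^ q else 0) ≤ _
      rw [if_pos hne]
      obtain ⟨x₀, hx₀⟩ := hne
      have hT1 : ν {x : ℝ | 0 < x ∧ ν (Ioo 0 x) < 2 ^ ((k:ℝ))} = 2 ^ ((k:ℝ)) :=
        level_measure ν hνsing (fun t ht => hUfin t ht) _ (two_rpow_pos _) x₀ hx₀.1 hx₀.2.1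
      have hT2 : ν {x : ℝ | 0 < x ∧ ν (Ioo 0 x) < 2 ^ ((k:ℝ)-1)} = 2 ^ ((k:ℝ)-1) :=
        level_measure ν hνsing (fun t ht => hUfin t ht) _ (two_rpow_pos _) x₀ hx₀.1
          (le_trans (h2mono _ _ (by linarith)) hx₀.2.1)
      have hAeq : A k = {x : ℝ | 0 < x ∧ ν (Ioo 0 x) < 2 ^ ((k:ℝ))} \
          {x : ℝ | 0 < x ∧ ν (Ioo 0 x) < 2 ^ ((k:ℝ)-1)} := by
        ext x
        simp only [hAdef, mem_setOf_eq, mem_diff, not_and, not_lt]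
        constructor
        · rintro ⟨h1, h2, h3⟩; exact ⟨⟨h1, h3⟩, fun _ => h2⟩
        · rintro ⟨⟨h1, h3⟩, h2⟩; exact ⟨h1, h2 h1, h3⟩
      have hT2m : MeasurableSet {x : ℝ | 0 < x ∧ ν (Ioo 0 x) < 2 ^ ((k:ℝ)-1)} := by
        have heq : {x : ℝ | 0 < x ∧ ν (Ioo 0 x) < 2 ^ ((k:ℝ)-1)}
            = Ioi 0 ∩ U ⁻¹' (Iio ((2:ℝ≥0∞) ^ ((k:ℝ)-1))) := by
          ext x; simp [mem_Ioi]; exact fun _ => Iff.rfl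
        rw [heq]; exact measurableSet_Ioi.inter (hUmeas measurableSet_Iio)
      have hsub12 : {x : ℝ | 0 < x ∧ ν (Ioo 0 x) < 2 ^ ((k:ℝ)-1)}
          ⊆ {x : ℝ | 0 < x ∧ ν (Ioo 0 x) < 2 ^ ((k:ℝ))} :=
        fun x hx => ⟨hx.1, lt_of_lt_of_le hx.2 (h2mono _ _ (by linarith))⟩
      have hνA : ν (A k) = 2 ^ ((k:ℝ)-1) := by
        rw [hAeq, measure_diff hsub12 hT2m.nullMeasurableSet
          (by rw [hT2]; exact two_rpow_ne_top _), hT1, hT2]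
        exact two_rpow_sub_half _
      have hG : ∀ x ∈ A k, γ k ≤ ∫⁻ y in Ioi x, g y := by
        intro x hx
        apply lintegral_mono_set
        intro y hy
        by_contra hcon
        simp only [mem_Ioi, not_lt] at hcon
        exact absurd (lt_of_lt_of_le hx.2.2 hy.2) (not_lt.mpr (hUmono hcon))
      have h2k : (2:ℝ≥0∞) ^ ((k:ℝ)) = 2 ^ ((k:ℝ)-1) * 2 ^ (1:ℝ) := by
        rw [← ENNReal.rpow_add _ _ (by norm_num) (by norm_num)]
        congr 1; ring
      calc (2:ℝ≥0∞) ^ ((k:ℝ)) * γ k ^ q = 2 * (γ k ^ q * 2 ^ ((k:ℝ)-1)) := by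
            rw [h2k, ENNReal.rpow_one]; ring
      _ = 2 * (γ k ^ q * ν (A k)) := by rw [hνA]
      _ = 2 * ∫⁻ x in A k, γ k ^ q * u x ^ q := by
            rw [lintegral_const_mul _ hmeasuq, ← hνapp _ (hAm k)]
      _ ≤ 2 * ∫⁻ x in A k, (∫⁻ y in Ioi x, g y) ^ q * u x ^ q := by
            apply mul_le_mul_right
            apply setLIntegral_mono' (hAm k)
            intro x hx
            exact mul_le_mul_left (ENNReal.rpow_le_rpow (hG x hx) hq.le) _
    · show (if (E k).Nonempty then (2:ℝ≥0∞) ^ ((k:ℝ)) * γ k ^ q else 0) ≤ _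
      rw [if_neg hne]
      exact zero_le
  have hΛsum : ∑' k : ℤ, Λ k ≤ 2 * Iq := by
    calc ∑' k : ℤ, Λ k ≤ ∑' k : ℤ, 2 * ∫⁻ x in A k, (∫⁻ y in Ioi x, g y) ^ q * u x ^ q :=
          ENNReal.tsum_le_tsum hΛle
    _ = 2 * ∑' k : ℤ, ∫⁻ x in A k, (∫⁻ y in Ioi x, g y) ^ q * u x ^ q := ENNReal.tsum_mul_left
    _ = 2 * ∫⁻ x in ⋃ k : ℤ, A k, (∫⁻ y in Ioi x, g y) ^ q * u x ^ q := by
          rw [lintegral_iUnion hAm hAdisj]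
    _ ≤ 2 * Iq := by
          apply mul_le_mul_right
          exact lintegral_mono_set (iUnion_subset (fun k x hx => hx.1))
  have hpq1 : (1:ℝ) ≤ p/q := (one_le_div hq).mpr hqp
  have hterm : ∀ k : ℤ, ∫⁻ x in E k, f x ≤ (C ^ p * 2 ^ (p/q)) * Λ k ^ (p/q) := by
    intro k
    by_cases hne : (E k).Nonempty
    · refine le_trans (hblock k) ?_
      have hΛk : Λ k ^ (p/q) = 2 ^ ((k:ℝ)*(p/q)) * γ k ^ p := by
        have hΛval : Λ k = 2 ^ ((k:ℝ)) * γ k ^ q := by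
          show (if (E k).Nonempty then (2:ℝ≥0∞) ^ ((k:ℝ)) * γ k ^ q else 0) = _
          rw [if_pos hne]
        rw [hΛval, ENNReal.mul_rpow_of_nonneg _ _ (by positivity),
          ← ENNReal.rpow_mul, ← ENNReal.rpow_mul]
        congr 2
        field_simp
      rw [hΛk, ENNReal.mul_rpow_of_nonneg _ _ hp.le, ← ENNReal.rpow_mul]
      have hexp : ((k:ℝ)+1)/q*p = p/q + (k:ℝ)*(p/q) := by field_simp; ring
      rw [hexp, ENNReal.rpow_add _ _ (by norm_num) (by norm_num)]
      exact le_of_eq (by ring)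
    · have hemp : E k = ∅ := not_nonempty_iff_eq_empty.mp hne
      rw [hemp, Measure.restrict_empty, lintegral_zero_measure]
      exact zero_le
  calc ∫⁻ x in Ioi (0:ℝ), f x ≤ (∫⁻ x in E0, f x) + ∑' k : ℤ, ∫⁻ x in E k, f x := hsplit
  _ = ∑' k : ℤ, ∫⁻ x in E k, f x := by rw [hE0zero, zero_add]
  _ ≤ ∑' k : ℤ, (C ^ p * 2 ^ (p/q)) * Λ k ^ (p/q) := ENNReal.tsum_le_tsum hterm
  _ = (C ^ p * 2 ^ (p/q)) * ∑' k : ℤ, Λ k ^ (p/q) := ENNReal.tsum_mul_left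
  _ ≤ (C ^ p * 2 ^ (p/q)) * (∑' k : ℤ, Λ k) ^ (p/q) :=
        mul_le_mul_right (tsum_rpow_le _ _ hpq1) _
  _ ≤ (C ^ p * 2 ^ (p/q)) * (2 * Iq) ^ (p/q) :=
        mul_le_mul_right (ENNReal.rpow_le_rpow hΛsum (by positivity)) _
  _ = 4 ^ (p/q) * C ^ p * Iq ^ (p/q) := by
      rw [ENNReal.mul_rpow_of_nonneg _ _ (by positivity)]
      have h4 : (4:ℝ≥0∞) ^ (p/q) = 2 ^ (p/q) * 2 ^ (p/q) := by
        rw [← ENNReal.mul_rpow_of_nonneg _ _ (by positivity)]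
        norm_num
      rw [h4]; ring

lemma iSup_lt_self (S : ℝ≥0∞) (hS : S ≠ 0) : ⨆ l : {l : ℝ≥0∞ // l < S}, (l : ℝ≥0∞) = S := by
  apply le_antisymm (iSup_le fun l => l.2.le)
  by_contra hcon
  push_neg at hcon
  obtain ⟨m, h1, h2⟩ := exists_between hcon
  exact absurd (le_iSup (fun l : {l : ℝ≥0∞ // l < S} => (l : ℝ≥0∞)) ⟨m, h2⟩) (not_le.mpr h1)

lemma sup_min_nat (a : ℝ≥0∞) : ⨆ n : ℕ, min a n = a := by
  apply le_antisymm (iSup_le fun n => min_le_left _ _)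
  rcases eq_or_ne a ∞ with rfl | ha
  · have : ∀ n : ℕ, min ⊤ (n:ℝ≥0∞) = n := fun n => min_eq_right le_top
    calc (⊤:ℝ≥0∞) = ⨆ n : ℕ, (n:ℝ≥0∞) := (iSup_natCast).symm
    _ ≤ ⨆ n : ℕ, min ⊤ (n:ℝ≥0∞) := by simp [this]
  · obtain ⟨n, hn⟩ := ENNReal.exists_nat_gt ha
    calc a = min a n := (min_eq_left hn.le).symm
    _ ≤ ⨆ n : ℕ, min a n := le_iSup (fun n : ℕ => min a (n:ℝ≥0∞)) n

lemma ratio_le_best (p q : ℝ) (hp : 0 < p) (hq : 0 < q)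
    (u w : ℝ → ℝ≥0∞) (hu : Measurable u) (hw : Measurable w)
    (t : ℝ) (h : ℝ → ℝ≥0∞) (hh : Measurable h) :
    (∫⁻ x in Ioo (0:ℝ) t, h x ^ p * w x ^ p) ^ (1/p)
      / ((∫⁻ x in Ioo (0:ℝ) t, h x) * (∫⁻ x in Ioo (0:ℝ) t, u x ^ q) ^ (1/q))
    ≤ ⨆ g : {g : ℝ → ℝ≥0∞ // Measurable g},
        (∫⁻ x in Ioi (0:ℝ), g.1 x ^ p * w x ^ p) ^ (1/p)
          / (∫⁻ s in Ioi (0:ℝ), (∫⁻ x in Ioi s, g.1 x) ^ q * u s ^ q) ^ (1/q) := by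
  set gg : ℝ → ℝ≥0∞ := (Ioo (0:ℝ) t).indicator h with hggdef
  have hggm : Measurable gg := hh.indicator measurableSet_Ioo
  refine le_trans ?_ (le_iSup _ (⟨gg, hggm⟩ : {g : ℝ → ℝ≥0∞ // Measurable g}))
  apply ENNReal.div_le_div
  · apply ENNReal.rpow_le_rpow _ (by positivity)
    calc ∫⁻ x in Ioo (0:ℝ) t, h x ^ p * w x ^ p
        = ∫⁻ x in Ioo (0:ℝ) t, gg x ^ p * w x ^ p := by
          apply setLIntegral_congr_fun measurableSet_Ioo
          intro x hx
          simp only [hggdef, indicator_of_mem hx]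
    _ ≤ ∫⁻ x in Ioi (0:ℝ), gg x ^ p * w x ^ p := lintegral_mono_set Ioo_subset_Ioi_self
  · have hWq : (∫⁻ s in Ioi (0:ℝ), (∫⁻ x in Ioi s, gg x) ^ q * u s ^ q)
        ≤ (∫⁻ x in Ioo (0:ℝ) t, h x) ^ q * (∫⁻ x in Ioo (0:ℝ) t, u x ^ q) := by
      calc ∫⁻ s in Ioi (0:ℝ), (∫⁻ x in Ioi s, gg x) ^ q * u s ^ q
          ≤ ∫⁻ s in Ioi (0:ℝ),
              (Ioo (0:ℝ) t).indicator (fun s => (∫⁻ x in Ioo (0:ℝ) t, h x) ^ q * u s ^ q) s := by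
            apply setLIntegral_mono' measurableSet_Ioi
            intro s hs
            rcases lt_or_ge s t with hst | hst
            · have hmem : s ∈ Ioo (0:ℝ) t := ⟨hs, hst⟩
              rw [indicator_of_mem hmem]
              apply mul_le_mul_left
              apply ENNReal.rpow_le_rpow _ hq.le
              calc ∫⁻ x in Ioi s, gg x = ∫⁻ x in Ioo (0:ℝ) t ∩ Ioi s, h x := by
                    rw [hggdef, lintegral_indicator measurableSet_Ioo,
                      Measure.restrict_restrict measurableSet_Ioo]
              _ ≤ ∫⁻ x in Ioo (0:ℝ) t, h x := lintegral_mono_set inter_subset_left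
            · rw [indicator_of_notMem (fun hmem => absurd hmem.2 (not_lt.mpr hst))]
              have hempty : Ioo (0:ℝ) t ∩ Ioi s = ∅ := by
                ext x
                simp only [mem_inter_iff, mem_Ioo, mem_Ioi, mem_empty_iff_false, iff_false, not_and]
                rintro ⟨_, hxt⟩ hxs
                linarith
              rw [hggdef, lintegral_indicator measurableSet_Ioo,
                Measure.restrict_restrict measurableSet_Ioo, hempty, Measure.restrict_empty,
                lintegral_zero_measure, ENNReal.zero_rpow_of_pos hq, zero_mul]
      _ = ∫⁻ s in Ioo (0:ℝ) t, (∫⁻ x in Ioo (0:ℝ) t, h x) ^ q * u s ^ q := by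
            rw [lintegral_indicator measurableSet_Ioo,
              Measure.restrict_restrict measurableSet_Ioo,
              inter_eq_self_of_subset_left Ioo_subset_Ioi_self]
      _ = (∫⁻ x in Ioo (0:ℝ) t, h x) ^ q * (∫⁻ x in Ioo (0:ℝ) t, u x ^ q) :=
            lintegral_const_mul _ (hu.pow_const q)
    calc (∫⁻ s in Ioi (0:ℝ), (∫⁻ x in Ioi s, gg x) ^ q * u s ^ q) ^ (1/q)
        ≤ ((∫⁻ x in Ioo (0:ℝ) t, h x) ^ q * (∫⁻ x in Ioo (0:ℝ) t, u x ^ q)) ^ (1/q) :=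
          ENNReal.rpow_le_rpow hWq (by positivity)
    _ = (∫⁻ x in Ioo (0:ℝ) t, h x) * (∫⁻ x in Ioo (0:ℝ) t, u x ^ q) ^ (1/q) := by
          rw [ENNReal.mul_rpow_of_nonneg _ _ (by positivity), ← ENNReal.rpow_mul,
            mul_one_div, div_self hq.ne', ENNReal.rpow_one]

lemma copson_lower (p q : ℝ) (hq : 0 < q) (hqp : q ≤ p) (hp1 : p ≤ 1)
    (u w : ℝ → ℝ≥0∞) (hu : Measurable u) (hw : Measurable w)
    (hfin : ∀ t ∈ Ioi (0:ℝ), (∫⁻ x in Ioo (0:ℝ) t, u x ^ q) < ∞)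
    (t : ℝ) (ht : 0 < t) :
    (if p = 1 then essSup w (volume.restrict (Ioo (0:ℝ) t))
     else (∫⁻ x in Ioo (0:ℝ) t, w x ^ (p / (1 - p))) ^ ((1 - p) / p))
      * ((∫⁻ x in Ioo (0:ℝ) t, u x ^ q) ^ (1 / q))⁻¹
    ≤ ⨆ g : {g : ℝ → ℝ≥0∞ // Measurable g},
        (∫⁻ x in Ioi (0:ℝ), g.1 x ^ p * w x ^ p) ^ (1 / p)
          / (∫⁻ s in Ioi (0:ℝ), (∫⁻ x in Ioi s, g.1 x) ^ q * u s ^ q) ^ (1 / q) := by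
  have hp : 0 < p := hq.trans_le hqp
  set B := ⨆ g : {g : ℝ → ℝ≥0∞ // Measurable g},
        (∫⁻ x in Ioi (0:ℝ), g.1 x ^ p * w x ^ p) ^ (1 / p)
          / (∫⁻ s in Ioi (0:ℝ), (∫⁻ x in Ioi s, g.1 x) ^ q * u s ^ q) ^ (1 / q) with hBdef
  set Ut := ∫⁻ x in Ioo (0:ℝ) t, u x ^ q with hUtdef
  have hUtfin : Ut ≠ ∞ := (hfin t ht).ne
  have hvolIoo : volume (Ioo (0:ℝ) t) ≠ ∞ := by
    rw [Real.volume_Ioo]; exact ofReal_ne_top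
  have hYfin : Ut ^ (1/q) ≠ ∞ := (ENNReal.rpow_lt_top_of_nonneg (by positivity) hUtfin).ne
  by_cases hps : p = 1
  · subst hps
    rw [if_pos rfl]
    set S := essSup w (volume.restrict (Ioo (0:ℝ) t)) with hSdef
    rcases eq_or_ne S 0 with hS0 | hS0
    · rw [hS0, zero_mul]; exact zero_le
    have key : ∀ l : ℝ≥0∞, l < S → l * (Ut ^ (1/q))⁻¹ ≤ B := by
      intro l hlS
      rcases eq_or_ne l 0 with rfl | hl0
      · rw [zero_mul]; exact zero_le
      have hwlm : MeasurableSet {x : ℝ | l < w x} := hw measurableSet_Ioi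
      have hvolpos : volume ({x | l < w x} ∩ Ioo (0:ℝ) t) ≠ 0 := by
        intro hcon
        have hae : ∀ᵐ x ∂(volume.restrict (Ioo (0:ℝ) t)), w x ≤ l := by
          rw [ae_iff]
          have hsets : {a : ℝ | ¬ w a ≤ l} = {x : ℝ | l < w x} := by ext x; simp [not_le]
          rw [hsets, Measure.restrict_apply' measurableSet_Ioo, hcon]
        exact absurd (essSup_le_of_ae_le l hae) (not_le.mpr hlS)
      have hvolfin : volume ({x | l < w x} ∩ Ioo (0:ℝ) t) ≠ ∞ :=
        fun hcon => hvolIoo (top_le_iff.mp (hcon ▸ measure_mono inter_subset_right))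
      set h : ℝ → ℝ≥0∞ := ({x : ℝ | l < w x}).indicator (fun _ => (1:ℝ≥0∞)) with hhdef
      have hhm : Measurable h := measurable_one.indicator hwlm
      have hint_h : ∫⁻ x in Ioo (0:ℝ) t, h x = volume ({x | l < w x} ∩ Ioo (0:ℝ) t) := by
        rw [hhdef, lintegral_indicator hwlm, Measure.restrict_restrict hwlm,
          setLIntegral_one]
      have hnum : l * volume ({x | l < w x} ∩ Ioo (0:ℝ) t)
          ≤ ∫⁻ x in Ioo (0:ℝ) t, h x ^ (1:ℝ) * w x ^ (1:ℝ) := by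
        have heq2 : l * volume ({x | l < w x} ∩ Ioo (0:ℝ) t)
            = ∫⁻ x in Ioo (0:ℝ) t, ({x : ℝ | l < w x}).indicator (fun _ => l) x := by
          rw [lintegral_indicator hwlm, Measure.restrict_restrict hwlm, setLIntegral_const,
            mul_comm]
        rw [heq2]
        apply setLIntegral_mono' measurableSet_Ioo
        intro x _
        rcases lt_or_ge l (w x) with hlw | hlw
        · have hmem : x ∈ {x : ℝ | l < w x} := hlw
          rw [indicator_of_mem hmem, hhdef, indicator_of_mem hmem,
            ENNReal.rpow_one, ENNReal.rpow_one, one_mul]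
          exact hlw.le
        · have hnmem : x ∉ {x : ℝ | l < w x} := not_lt.mpr hlw
          rw [indicator_of_notMem hnmem]
          exact zero_le
      have hRB := ratio_le_best 1 q one_pos hq u w hu hw t h hhm
      rw [hint_h, ← hUtdef] at hRB
      rcases eq_or_ne Ut 0 with hUt0 | hUt0
      · refine le_trans le_top ?_
        have hden : volume ({x | l < w x} ∩ Ioo (0:ℝ) t) * Ut ^ ((1:ℝ)/q) = 0 := by
          rw [hUt0, ENNReal.zero_rpow_of_pos (by positivity), mul_zero]
        rw [hden, ENNReal.div_zero ?hne] at hRB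
        · exact hRB
        case hne =>
          intro hcon
          rcases ENNReal.rpow_eq_zero_iff.mp hcon with ⟨h', _⟩ | ⟨_, hneg⟩
          · have hz : l * volume ({x | l < w x} ∩ Ioo (0:ℝ) t) = 0 :=
              le_antisymm (h' ▸ hnum) (zero_le)
            rcases mul_eq_zero.mp hz with h'' | h''
            · exact hl0 h''
            · exact hvolpos h''
          · have hpos : (0:ℝ) < 1/1 := by norm_num
            linarith
      · refine le_trans ?_ hRB
        have hrw : ((1:ℝ)/1) = 1 := by norm_num
        rw [hrw, ENNReal.rpow_one]
        have heq : l * (Ut ^ ((1:ℝ)/q))⁻¹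
            = (l * volume ({x | l < w x} ∩ Ioo (0:ℝ) t)) /
              (volume ({x | l < w x} ∩ Ioo (0:ℝ) t) * Ut ^ ((1:ℝ)/q)) := by
          rw [mul_comm l (volume ({x | l < w x} ∩ Ioo (0:ℝ) t)),
            ENNReal.mul_div_mul_left _ _ hvolpos hvolfin]
          exact (div_eq_mul_inv l _).symm
        rw [heq]
        exact ENNReal.div_le_div hnum le_rfl
    calc S * (Ut ^ (1/q))⁻¹
        = (⨆ l : {l : ℝ≥0∞ // l < S}, (l : ℝ≥0∞)) * (Ut ^ (1/q))⁻¹ := by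
          rw [iSup_lt_self S hS0]
    _ = ⨆ l : {l : ℝ≥0∞ // l < S}, (l : ℝ≥0∞) * (Ut ^ (1/q))⁻¹ := ENNReal.iSup_mul _ _
    _ ≤ B := iSup_le fun l => key l l.2
  · rw [if_neg hps]
    have hplt : p < 1 := lt_of_le_of_ne hp1 hps
    have h1p : 0 < 1 - p := by linarith
    have hp'0 : 0 < p / (1-p) := by positivity
    set Vp := ∫⁻ x in Ioo (0:ℝ) t, w x ^ (p / (1-p)) with hVpdef
    rcases eq_or_ne Vp 0 with hVp0 | hVp0
    · rw [hVp0, ENNReal.zero_rpow_of_pos (by positivity), zero_mul]; exact zero_le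
    have hhnm : ∀ n : ℕ, Measurable (fun x => (min (w x) n) ^ (p/(1-p))) :=
      fun n => (hw.min measurable_const).pow_const _
    set Wn : ℕ → ℝ≥0∞ := fun n => ∫⁻ x in Ioo (0:ℝ) t, (min (w x) n) ^ (p/(1-p)) with hWndef
    have hWnfin : ∀ n : ℕ, Wn n ≠ ∞ := by
      intro n
      have hle : Wn n ≤ (n:ℝ≥0∞) ^ (p/(1-p)) * volume (Ioo (0:ℝ) t) := by
        rw [← setLIntegral_const]
        apply setLIntegral_mono' measurableSet_Ioo
        intro x _
        exact ENNReal.rpow_le_rpow (min_le_right _ _) hp'0.le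
      exact fun hcon => (ENNReal.mul_ne_top
        (ENNReal.rpow_ne_top_of_nonneg hp'0.le (ENNReal.natCast_ne_top n)) hvolIoo)
        (top_le_iff.mp (hcon ▸ hle))
    have hWnsup : (⨆ n, Wn n) = Vp := by
      have hmono : Monotone (fun n : ℕ => fun x => (min (w x) n) ^ (p/(1-p))) := by
        intro a b hab x
        exact ENNReal.rpow_le_rpow (min_le_min le_rfl (by exact_mod_cast hab)) hp'0.le
      rw [hWndef, ← lintegral_iSup (fun n => hhnm n) hmono]
      apply lintegral_congr
      intro x
      calc (⨆ n : ℕ, (min (w x) n) ^ (p/(1-p)))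
          = (⨆ n : ℕ, min (w x) n) ^ (p/(1-p)) := (rpow_iSup _ _ hp'0).symm
      _ = w x ^ (p/(1-p)) := by rw [sup_min_nat]
    have hnum : ∀ n : ℕ, Wn n ≤ ∫⁻ x in Ioo (0:ℝ) t, ((min (w x) n) ^ (p/(1-p))) ^ p * w x ^ p := by
      intro n
      apply setLIntegral_mono' measurableSet_Ioo
      intro x _
      have e1 : (min (w x) (n:ℝ≥0∞)) ^ (p/(1-p))
          = (min (w x) n) ^ ((p/(1-p)) * p) * (min (w x) n) ^ p := by
        rw [← ENNReal.rpow_add_of_nonneg _ _ (by positivity) hp.le]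
        congr 1
        field_simp
        ring
      calc (min (w x) (n:ℝ≥0∞)) ^ (p/(1-p))
          = (min (w x) n) ^ ((p/(1-p)) * p) * (min (w x) n) ^ p := e1
      _ ≤ ((min (w x) n) ^ (p/(1-p))) ^ p * w x ^ p := by
          apply mul_le_mul'
          · exact le_of_eq (ENNReal.rpow_mul _ _ _)
          · exact ENNReal.rpow_le_rpow (min_le_left _ _) hp.le
    have key : ∀ n : ℕ, Wn n ^ ((1-p)/p) * (Ut ^ (1/q))⁻¹ ≤ B := by
      intro n
      rcases eq_or_ne (Wn n) 0 with hWn0 | hWn0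
      · rw [hWn0, ENNReal.zero_rpow_of_pos (by positivity), zero_mul]; exact zero_le
      have hRB := ratio_le_best p q hp hq u w hu hw t
        (fun x => (min (w x) n) ^ (p/(1-p))) (hhnm n)
      have hNpos : (∫⁻ x in Ioo (0:ℝ) t, ((min (w x) n) ^ (p/(1-p))) ^ p * w x ^ p) ^ (1/p) ≠ 0 := by
        intro hcon
        rcases ENNReal.rpow_eq_zero_iff.mp hcon with ⟨h', _⟩ | ⟨_, hneg⟩
        · exact hWn0 (le_antisymm (h' ▸ hnum n) (zero_le))
        · have : (0:ℝ) < 1/p := by positivity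
          linarith
      rcases eq_or_ne Ut 0 with hUt0 | hUt0
      · refine le_trans le_top ?_
        have hden : (∫⁻ x in Ioo (0:ℝ) t, (min (w x) n) ^ (p/(1-p)))
            * (∫⁻ x in Ioo (0:ℝ) t, u x ^ q) ^ (1/q) = 0 := by
          rw [← hUtdef, hUt0, ENNReal.zero_rpow_of_pos (by positivity), mul_zero]
        rw [hden, ENNReal.div_zero hNpos] at hRB
        exact hRB
      · have hY0 : Ut ^ (1/q) ≠ 0 := (ENNReal.rpow_pos (pos_iff_ne_zero.mpr hUt0) hUtfin).ne'
        have heq : Wn n ^ ((1-p)/p) * (Ut ^ (1/q))⁻¹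
            = Wn n ^ (1/p) / (Wn n * Ut ^ (1/q)) := by
          have hsplitW : Wn n ^ ((1:ℝ)/p) = Wn n * Wn n ^ ((1-p)/p) := by
            have hexp : (1:ℝ)/p = 1 + (1-p)/p := by field_simp; ring
            rw [hexp, ENNReal.rpow_add _ _ hWn0 (hWnfin n), ENNReal.rpow_one]
          rw [hsplitW, ENNReal.mul_div_mul_left _ _ hWn0 (hWnfin n)]
          exact (div_eq_mul_inv _ _).symm
        rw [heq]
        refine le_trans ?_ hRB
        apply ENNReal.div_le_div
        · exact ENNReal.rpow_le_rpow (hnum n) (by positivity)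
        · exact le_rfl
    calc Vp ^ ((1-p)/p) * (Ut ^ (1/q))⁻¹
        = (⨆ n, Wn n ^ ((1-p)/p)) * (Ut ^ (1/q))⁻¹ := by
          rw [← hWnsup, rpow_iSup _ _ (by positivity)]
    _ = ⨆ n, Wn n ^ ((1-p)/p) * (Ut ^ (1/q))⁻¹ := ENNReal.iSup_mul _ _
    _ ≤ B := iSup_le key

/-- reverse Copson inequality, `0 < q ≤ p ≤ 1`. -/
theorem reverse_copson_inequality (p q : ℝ) (hq : 0 < q) (hqp : q ≤ p) (hp1 : p ≤ 1) :
    ∃ c₁ c₂ : ℝ≥0∞, 0 < c₁ ∧ c₂ < ∞ ∧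
      ∀ u w : ℝ → ℝ≥0∞, Measurable u → Measurable w →
        (∀ t ∈ Ioi (0:ℝ), (∫⁻ x in Ioo (0:ℝ) t, u x ^ q) < ∞) →
        (let LHS : (ℝ → ℝ≥0∞) → ℝ≥0∞ := fun g => (∫⁻ x in Ioi (0:ℝ), g x ^ p * w x ^ p) ^ (1 / p)
         let RHS : (ℝ → ℝ≥0∞) → ℝ≥0∞ := fun g =>
            (∫⁻ t in Ioi (0:ℝ), (∫⁻ x in Ioi t, g x) ^ q * u t ^ q) ^ (1 / q)
         let C : ℝ≥0∞ := ⨆ t ∈ Ioi (0:ℝ),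
            (if p = 1 then essSup w (volume.restrict (Ioo (0:ℝ) t))
             else (∫⁻ x in Ioo (0:ℝ) t, w x ^ (p / (1 - p))) ^ ((1 - p) / p))
              * ((∫⁻ x in Ioo (0:ℝ) t, u x ^ q) ^ (1 / q))⁻¹
         let best : ℝ≥0∞ := ⨆ g : {g : ℝ → ℝ≥0∞ // Measurable g}, LHS g.1 / RHS g.1
         ((∃ c : ℝ≥0∞, c < ∞ ∧ ∀ g : ℝ → ℝ≥0∞, Measurable g → LHS g ≤ c * RHS g) ↔ C < ∞)
           ∧ c₁ * C ≤ best ∧ best ≤ c₂ * C) := by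
  have hp : 0 < p := hq.trans_le hqp
  refine ⟨1, (4:ℝ≥0∞) ^ (1/q), one_pos,
    ENNReal.rpow_lt_top_of_nonneg (by positivity) (by norm_num), ?_⟩
  intro u w hu hw hfin
  intro LHS RHS C best
  -- C ≤ best
  have hCbest : C ≤ best := by
    show (⨆ t ∈ Ioi (0:ℝ), _) ≤ best
    apply iSup₂_le
    intro t ht
    exact copson_lower p q hq hqp hp1 u w hu hw hfin t ht
  -- multiplicative form of the condition, assuming C < ∞
  have hmul : C < ∞ → ∀ t : ℝ, 0 < t →
      (if p = 1 then essSup w (volume.restrict (Ioo (0:ℝ) t))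
       else (∫⁻ x in Ioo (0:ℝ) t, w x ^ (p / (1 - p))) ^ ((1 - p) / p))
        ≤ C * (∫⁻ x in Ioo (0:ℝ) t, u x ^ q) ^ (1/q) := by
    intro hCfin t ht
    set Wp := (if p = 1 then essSup w (volume.restrict (Ioo (0:ℝ) t))
       else (∫⁻ x in Ioo (0:ℝ) t, w x ^ (p / (1 - p))) ^ ((1 - p) / p)) with hWp
    set Y := (∫⁻ x in Ioo (0:ℝ) t, u x ^ q) ^ ((1:ℝ)/q) with hY
    have hle : Wp * Y⁻¹ ≤ C := by
      have := le_iSup₂ (f := fun (t : ℝ) (_ : t ∈ Ioi (0:ℝ)) =>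
        (if p = 1 then essSup w (volume.restrict (Ioo (0:ℝ) t))
         else (∫⁻ x in Ioo (0:ℝ) t, w x ^ (p / (1 - p))) ^ ((1 - p) / p))
          * ((∫⁻ x in Ioo (0:ℝ) t, u x ^ q) ^ (1 / q))⁻¹) t ht
      exact this
    have hYfin : Y ≠ ∞ := (ENNReal.rpow_lt_top_of_nonneg (by positivity) (hfin t ht).ne).ne
    rcases eq_or_ne Y 0 with hY0 | hY0
    · rw [hY0, mul_zero]
      by_contra hcon
      have hWp0 : Wp ≠ 0 := by
        intro h0; rw [h0] at hcon; exact hcon le_rfl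
      rw [hY0, ENNReal.inv_zero, ENNReal.mul_top hWp0] at hle
      exact absurd (top_le_iff.mp (le_trans le_top hle)).symm (by
        intro hC; rw [hC] at hCfin; exact absurd hCfin (lt_irrefl _))
    · have : Wp = Wp * Y⁻¹ * Y := by
        rw [mul_assoc, ENNReal.inv_mul_cancel hY0 hYfin, mul_one]
      rw [this]
      exact mul_le_mul_left hle Y
  -- the inequality with constant 4^{1/q} * C, assuming C < ∞
  have hineq : C < ∞ → ∀ g : ℝ → ℝ≥0∞, Measurable g →
      LHS g ≤ (4 ^ (1/q) * C) * RHS g := by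
    intro hCfin g hg
    have hup := copson_upper p q hq hqp hp1 u w hu hw hfin C (hmul hCfin) g hg
    have h1 : LHS g = (∫⁻ x in Ioi (0:ℝ), g x ^ p * w x ^ p) ^ (1/p) := rfl
    have h2 : RHS g = (∫⁻ t in Ioi (0:ℝ), (∫⁻ x in Ioi t, g x) ^ q * u t ^ q) ^ (1/q) := rfl
    rw [h1, h2]
    calc (∫⁻ x in Ioi (0:ℝ), g x ^ p * w x ^ p) ^ (1/p)
        ≤ ((4:ℝ≥0∞) ^ (p/q) * C ^ p *
            (∫⁻ t in Ioi (0:ℝ), (∫⁻ x in Ioi t, g x) ^ q * u t ^ q) ^ (p/q)) ^ (1/p) :=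
          ENNReal.rpow_le_rpow hup (by positivity)
    _ = (4 ^ (1/q) * C) * (∫⁻ t in Ioi (0:ℝ), (∫⁻ x in Ioi t, g x) ^ q * u t ^ q) ^ (1/q) := by
          rw [ENNReal.mul_rpow_of_nonneg _ _ (by positivity),
            ENNReal.mul_rpow_of_nonneg _ _ (by positivity),
            ← ENNReal.rpow_mul, ← ENNReal.rpow_mul, ← ENNReal.rpow_mul]
          have e1 : p/q * (1/p) = 1/q := by field_simp
          have e2 : p * (1/p) = 1 := by field_simp
          have e3 : p/q * (1/p) = 1/q := e1
          rw [e1, e2, ENNReal.rpow_one]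
  have hbestle : best ≤ 4 ^ (1/q) * C := by
    rcases eq_or_ne C ∞ with hC | hC
    · rw [hC, ENNReal.mul_top (ENNReal.rpow_pos (by norm_num) (by norm_num)).ne']
      exact le_top
    · show (⨆ g : {g : ℝ → ℝ≥0∞ // Measurable g}, LHS g.1 / RHS g.1) ≤ _
      apply iSup_le
      intro g
      exact ENNReal.div_le_of_le_mul (hineq (lt_top_iff_ne_top.mpr hC) g.1 g.2)
  refine ⟨⟨?_, ?_⟩, by rwa [one_mul], hbestle⟩
  · rintro ⟨c, hc, hineq'⟩
    refine lt_of_le_of_lt (le_trans hCbest ?_) hc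
    show (⨆ g : {g : ℝ → ℝ≥0∞ // Measurable g}, LHS g.1 / RHS g.1) ≤ c
    apply iSup_le
    intro g
    exact ENNReal.div_le_of_le_mul (hineq' g.1 g.2)
  · intro hC
    exact ⟨4 ^ (1/q) * C,
      ENNReal.mul_lt_top (ENNReal.rpow_lt_top_of_nonneg (by positivity) (by norm_num)) hC,
      hineq hC⟩
end
end
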